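/- arXiv:1309.5604 — 10 statements merged into one kernel-verified Lean document; each statement's English description precedes it below -/
import Mathlib

section
/- Let A be an n×n nonnegative matrix with all row sums positive. Then the spectral radius of A satisfies min_{1≤i≤n} m_i(A) ≤ ρ(A) ≤ max_{1≤i≤n} m_i(A), where m_i(A) is the i-th average 2-row sum of A. -/
open Matrix BigOperators Finset

noncomputable def rowSum {n : ℕ} (A : Matrix (Fin n) (Fin n) ℝ) (i : Fin n) : ℝ :=
  ∑ j, A i j

noncomputable def avg2 {n : ℕ} (A : Matrix (Fin n) (Fin n) ℝ) (i : Fin n) : ℝ :=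
  (∑ k, A i k * rowSum A k) / rowSum A i

noncomputable def specRad {n : ℕ} (A : Matrix (Fin n) (Fin n) ℝ) : ℝ :=
  sSup {x : ℝ | ∃ μ ∈ spectrum ℂ (A.map Complex.ofReal), x = ‖μ‖}

section Aux

attribute [local instance] Matrix.linftyOpNormedAddCommGroup Matrix.linftyOpNormedRing
  Matrix.linftyOpNormedAlgebra

variable {n : ℕ} [NeZero n]

local instance : CompleteSpace (Matrix (Fin n) (Fin n) ℂ) :=
  FiniteDimensional.complete ℂ _

local instance : Nontrivial (Matrix (Fin n) (Fin n) ℂ) := by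
  refine ⟨0, 1, fun h => ?_⟩
  have := congrFun (congrFun h ⟨0, Nat.pos_of_ne_zero (NeZero.ne n)⟩)
    ⟨0, Nat.pos_of_ne_zero (NeZero.ne n)⟩
  simp [Matrix.one_apply] at this

omit [NeZero n] in
/-- Row sums of powers are bounded below by powers of the minimal row sum. -/
lemma rowSum_pow_ge {B : Matrix (Fin n) (Fin n) ℝ} (hB : ∀ i j, 0 ≤ B i j) {s : ℝ}
    (hs : 0 < s) (hsle : ∀ i, s ≤ rowSum B i) (k : ℕ) (i : Fin n) :
    s ^ k ≤ rowSum (B ^ k) i := by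
  induction k generalizing i with
  | zero => simp [rowSum, Matrix.one_apply]
  | succ k ih =>
      have hrs : rowSum (B ^ (k + 1)) i = ∑ l, B i l * rowSum (B ^ k) l := by
        simp only [rowSum, pow_succ', Matrix.mul_apply]
        rw [Finset.sum_comm]
        simp [Finset.mul_sum]
      rw [hrs, pow_succ']
      calc s * s ^ k = rowSum B i * s ^ k - (rowSum B i - s) * s ^ k := by ring
        _ ≤ rowSum B i * s ^ k := by
            nlinarith [pow_pos hs k, hsle i]
        _ = ∑ l, B i l * s ^ k := by rw [rowSum, Finset.sum_mul]
        _ ≤ ∑ l, B i l * rowSum (B ^ k) l :=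
            Finset.sum_le_sum fun l _ => mul_le_mul_of_nonneg_left (ih l) (hB i l)

/-- min/max row sum bounds for the spectral radius of a nonnegative matrix. -/
lemma rowSum_bounds (B : Matrix (Fin n) (Fin n) ℝ) (hB : ∀ i j, 0 ≤ B i j)
    (hrB : ∀ i, 0 < rowSum B i) :
    (Finset.univ.inf' Finset.univ_nonempty (rowSum B)) ≤ specRad B ∧
      specRad B ≤ Finset.univ.sup' Finset.univ_nonempty (rowSum B) := by
  set M := B.map Complex.ofReal with hM
  set S := {x : ℝ | ∃ μ ∈ spectrum ℂ M, x = ‖μ‖} with hS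
  -- norms of entries of M
  have hent : ∀ i j, ‖M i j‖ = B i j := by
    intro i j
    simp [hM, Matrix.map_apply, Complex.norm_real, Real.norm_eq_abs, abs_of_nonneg (hB i j)]
  set maxrs := Finset.univ.sup' Finset.univ_nonempty (rowSum B) with hmaxrs
  set minrs := Finset.univ.inf' Finset.univ_nonempty (rowSum B) with hminrs
  have hmax0 : 0 ≤ maxrs := by
    obtain ⟨i⟩ : Nonempty (Fin n) := ⟨⟨0, Nat.pos_of_ne_zero (NeZero.ne n)⟩⟩
    exact le_trans (hrB i).le (Finset.le_sup' _ (Finset.mem_univ i))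
  -- bound on the norm of M
  have hnormM : ‖M‖ ≤ maxrs := by
    rw [Matrix.linfty_opNorm_def]
    have : (Finset.univ.sup fun i => ∑ j, ‖M i j‖₊) ≤ ⟨maxrs, hmax0⟩ := by
      refine Finset.sup_le fun i _ => ?_
      apply NNReal.coe_le_coe.1
      push_cast
      calc ∑ j, ‖M i j‖ = rowSum B i := by
            simp only [rowSum]; exact Finset.sum_congr rfl fun j _ => hent i j
        _ ≤ maxrs := Finset.le_sup' _ (Finset.mem_univ i)
    exact_mod_cast this
  -- every element of S is ≤ maxrs, and S is bounded above
  have hSle : ∀ x ∈ S, x ≤ maxrs := by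
    rintro x ⟨μ, hμ, rfl⟩
    calc (‖μ‖ : ℝ) = ‖μ‖ := rfl
      _ ≤ ‖M‖ := spectrum.norm_le_norm_of_mem hμ
      _ ≤ maxrs := hnormM
  have hbdd : BddAbove S := ⟨maxrs, hSle⟩
  constructor
  · -- lower bound
    have hσ : (spectrum ℂ M).Nonempty := spectrum.nonempty M
    obtain ⟨μ₀, hμ₀, hmax⟩ := (spectrum.isCompact (a := M)).exists_isMaxOn hσ
      (continuous_norm.continuousOn)
    have hmem : ‖μ₀‖ ∈ S := ⟨μ₀, hμ₀, rfl⟩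
    refine le_trans ?_ (le_csSup hbdd hmem)
    -- use Gelfand's formula
    have hmin0 : 0 < minrs := by
      obtain ⟨i, _, hi⟩ := Finset.exists_mem_eq_inf' (Finset.univ_nonempty) (rowSum B)
      rw [hminrs, hi]; exact hrB i
    set t : NNReal := ⟨minrs, hmin0.le⟩ with ht
    have hgel : (t : ENNReal) ≤ spectralRadius ℂ M := by
      refine ge_of_tendsto (spectrum.pow_nnnorm_pow_one_div_tendsto_nhds_spectralRadius M) ?_
      filter_upwards [Filter.eventually_ge_atTop 1] with k hk
      -- t ^ k ≤ ‖M ^ k‖₊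
      have hb : t ^ k ≤ ‖M ^ k‖₊ := by
        rw [← NNReal.coe_le_coe]
        push_cast
        have hMk : M ^ k = (B ^ k).map Complex.ofReal := by
          exact (map_pow (Complex.ofRealHom.mapMatrix) B k).symm
        obtain ⟨i⟩ : Nonempty (Fin n) := ⟨⟨0, Nat.pos_of_ne_zero (NeZero.ne n)⟩⟩
        have h1 : minrs ^ k ≤ rowSum (B ^ k) i :=
          rowSum_pow_ge hB hmin0 (fun j => Finset.inf'_le _ (Finset.mem_univ j)) k i
        have h2 : rowSum (B ^ k) i ≤ ∑ j, ‖(M ^ k) i j‖ := by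
          rw [hMk, rowSum]
          exact Finset.sum_le_sum fun j _ => by
            simpa [Matrix.map_apply, Complex.norm_real, Real.norm_eq_abs] using
              le_abs_self ((B ^ k) i j)
        have h3 : ∑ j, ‖(M ^ k) i j‖ ≤ ‖M ^ k‖ := by
          rw [Matrix.linfty_opNorm_def]
          have := Finset.le_sup (f := fun i => ∑ j, ‖(M ^ k) i j‖₊) (Finset.mem_univ i)
          have := NNReal.coe_le_coe.2 this
          push_cast at this
          exact this
        calc (t : ℝ) ^ k = minrs ^ k := rfl
          _ ≤ _ := le_trans h1 (le_trans h2 h3)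
      -- pass to rpow
      have hk0 : (0 : ℝ) ≤ 1 / k := by positivity
      have : ((t : ENNReal) ^ (k : ℕ)) ^ (1 / (k : ℝ)) ≤ (‖M ^ k‖₊ : ENNReal) ^ (1 / (k : ℝ)) := by
        apply ENNReal.rpow_le_rpow _ hk0
        exact_mod_cast hb
      refine le_trans (le_of_eq ?_) this
      rw [← ENNReal.rpow_natCast ((t : ENNReal)) k, ← ENNReal.rpow_mul]
      rw [mul_one_div, div_self (by exact_mod_cast Nat.one_le_iff_ne_zero.mp hk), ENNReal.rpow_one]
    -- spectralRadius ≤ ‖μ₀‖₊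
    have hsr : spectralRadius ℂ M ≤ (‖μ₀‖₊ : ENNReal) := by
      refine iSup₂_le fun μ hμ => ?_
      exact_mod_cast ENNReal.coe_le_coe.2 (by exact_mod_cast hmax hμ)
    have := le_trans hgel hsr
    have : t ≤ ‖μ₀‖₊ := by exact_mod_cast this
    have := NNReal.coe_le_coe.2 this
    exact this
  · -- upper bound
    exact Real.sSup_le hSle hmax0

end Aux

theorem stmt0 {n : ℕ} [NeZero n] (A : Matrix (Fin n) (Fin n) ℝ)
    (hA : ∀ i j, 0 ≤ A i j) (hr : ∀ i, 0 < rowSum A i) :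
    Finset.univ.inf' Finset.univ_nonempty (avg2 A) ≤ specRad A ∧
      specRad A ≤ Finset.univ.sup' Finset.univ_nonempty (avg2 A) := by
  classical
  set B : Matrix (Fin n) (Fin n) ℝ :=
    Matrix.of fun i j => A i j * rowSum A j / rowSum A i with hB
  have hBnn : ∀ i j, 0 ≤ B i j := fun i j =>
    div_nonneg (mul_nonneg (hA i j) (hr j).le) (hr i).le
  have hBrow : ∀ i, rowSum B i = avg2 A i := by
    intro i
    simp only [rowSum, avg2, hB, Matrix.of_apply, rowSum]
    rw [← Finset.sum_div]
  have hBpos : ∀ i, 0 < rowSum B i := by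
    intro i
    rw [hBrow]
    have : 0 < ∑ k, A i k * rowSum A k := by
      have hne : ∃ j, 0 < A i j := by
        by_contra h
        push_neg at h
        have : rowSum A i = 0 := by
          rw [rowSum]
          exact Finset.sum_eq_zero fun j _ => le_antisymm (h j) (hA i j)
        exact absurd this (hr i).ne'
      obtain ⟨j, hj⟩ := hne
      have : 0 < A i j * rowSum A j := mul_pos hj (hr j)
      exact Finset.sum_pos' (fun k _ => mul_nonneg (hA i k) (hr k).le) ⟨j, Finset.mem_univ j, this⟩
    exact div_pos this (hr i)
  -- conjugation: B.map ofReal = u⁻¹ * A.map ofReal * u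
  have hspec : spectrum ℂ (B.map Complex.ofReal) = spectrum ℂ (A.map Complex.ofReal) := by
    set c : Fin n → ℂ := fun i => (rowSum A i : ℂ) with hc
    have hc0 : ∀ i, c i ≠ 0 := fun i => by
      simp [hc, Complex.ofReal_eq_zero]; exact (hr i).ne'
    set u : (Matrix (Fin n) (Fin n) ℂ)ˣ :=
      { val := Matrix.diagonal c
        inv := Matrix.diagonal fun i => (c i)⁻¹
        val_inv := by
          rw [Matrix.diagonal_mul_diagonal]
          rw [show (fun i => c i * (c i)⁻¹) = fun _ => (1 : ℂ) from
            funext fun i => mul_inv_cancel₀ (hc0 i), Matrix.diagonal_one]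
        inv_val := by
          rw [Matrix.diagonal_mul_diagonal]
          rw [show (fun i => (c i)⁻¹ * c i) = fun _ => (1 : ℂ) from
            funext fun i => inv_mul_cancel₀ (hc0 i), Matrix.diagonal_one] } with hu
    have key : B.map Complex.ofReal =
        (↑u⁻¹ : Matrix (Fin n) (Fin n) ℂ) * (A.map Complex.ofReal) *
          (↑u : Matrix (Fin n) (Fin n) ℂ) := by
      have hcoeinv : (↑u⁻¹ : Matrix (Fin n) (Fin n) ℂ) =
          Matrix.diagonal fun i => (c i)⁻¹ := rfl
      have hcoe : (↑u : Matrix (Fin n) (Fin n) ℂ) = Matrix.diagonal c := rfl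
      rw [hcoeinv, hcoe]
      ext i j
      rw [Matrix.mul_diagonal, Matrix.diagonal_mul]
      simp only [Matrix.map_apply, hB, Matrix.of_apply, hc]
      push_cast
      field_simp
    rw [key]
    exact spectrum.units_conjugate'
  have hsr : specRad B = specRad A := by
    unfold specRad
    rw [hspec]
  have := rowSum_bounds B hBnn hBpos
  rw [hsr] at this
  have h1 : Finset.univ.inf' Finset.univ_nonempty (rowSum B) =
      Finset.univ.inf' Finset.univ_nonempty (avg2 A) :=
    Finset.inf'_congr _ rfl fun i _ => hBrow i
  have h2 : Finset.univ.sup' Finset.univ_nonempty (rowSum B) =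
      Finset.univ.sup' Finset.univ_nonempty (avg2 A) :=
    Finset.sup'_congr _ rfl fun i _ => hBrow i
  rw [h1, h2] at this
  exact this
end

section
/- Let A be an n×n irreducible nonnegative matrix with all row sums positive. If ρ(A) = min_{1≤i≤n} m_i(A) or ρ(A) = max_{1≤i≤n} m_i(A), then m_1(A) = m_2(A) = ... = m_n(A); conversely, if all average 2-row sums are equal, then ρ(A) equals their common value. -/
open Matrix BigOperators Finset

def MatIrreducible {n : ℕ} (A : Matrix (Fin n) (Fin n) ℝ) : Prop :=
  ∀ i j : Fin n, ∃ k : ℕ, 0 < k ∧ 0 < (A ^ k) i j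

open Filter Topology ENNReal NNReal

set_option linter.unusedSectionVars false
set_option maxHeartbeats 1600000

attribute [local instance] Matrix.linftyOpNormedRing Matrix.linftyOpNormedAlgebra

section PFhelpers
variable {n : ℕ} [NeZero n]

private lemma pow_entry_nonneg (A : Matrix (Fin n) (Fin n) ℝ) (hA : ∀ i j, 0 ≤ A i j) (p : ℕ) :
    ∀ i j, 0 ≤ (A ^ p) i j := by
  induction p with
  | zero => intro i j; rw [pow_zero]; by_cases h : i = j
            · subst h; simp [Matrix.one_apply_eq]
            · simp [Matrix.one_apply_ne h]
  | succ p ih =>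
      intro i j
      rw [pow_succ, Matrix.mul_apply]
      exact Finset.sum_nonneg fun l _ => mul_nonneg (ih i l) (hA l j)

private lemma mulVec_mono (A : Matrix (Fin n) (Fin n) ℝ) (hA : ∀ i j, 0 ≤ A i j)
    {x y : Fin n → ℝ} (h : ∀ j, x j ≤ y j) : ∀ i, (A.mulVec x) i ≤ (A.mulVec y) i := by
  intro i
  simp only [Matrix.mulVec, dotProduct]
  exact Finset.sum_le_sum fun j _ => mul_le_mul_of_nonneg_left (h j) (hA i j)

private lemma iter_lower (A : Matrix (Fin n) (Fin n) ℝ) (hA : ∀ i j, 0 ≤ A i j)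
    {x : Fin n → ℝ} {c : ℝ} (hc : 0 ≤ c) (h : ∀ i, c * x i ≤ (A.mulVec x) i) (p : ℕ) :
    ∀ i, c ^ p * x i ≤ ((A ^ p).mulVec x) i := by
  induction p with
  | zero => intro i; simp [Matrix.one_mulVec]
  | succ p ih =>
      intro i
      have h2 : ((A ^ (p+1)).mulVec x) i = ((A ^ p).mulVec (A.mulVec x)) i := by
        rw [pow_succ, ← Matrix.mulVec_mulVec]
      have h3 : ((A ^ p).mulVec (c • x)) i = c * ((A ^ p).mulVec x) i := by
        rw [Matrix.mulVec_smul]; simp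
      rw [h2]
      calc c ^ (p+1) * x i = c * (c ^ p * x i) := by ring
        _ ≤ c * ((A ^ p).mulVec x) i := mul_le_mul_of_nonneg_left (ih i) hc
        _ = ((A ^ p).mulVec (c • x)) i := h3.symm
        _ ≤ ((A ^ p).mulVec (A.mulVec x)) i :=
            mulVec_mono _ (pow_entry_nonneg A hA p) (fun j => h j) i

private lemma memspec (B : Matrix (Fin n) (Fin n) ℂ) (μ : ℂ) :
    μ ∈ spectrum ℂ B ↔ ∃ v, v ≠ 0 ∧ B.mulVec v = μ • v := by
  rw [spectrum.mem_iff, Matrix.isUnit_iff_isUnit_det, isUnit_iff_ne_zero, not_not,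
    ← Matrix.exists_mulVec_eq_zero_iff]
  have key : ∀ v, (algebraMap ℂ (Matrix (Fin n) (Fin n) ℂ) μ - B).mulVec v = μ • v - B.mulVec v := by
    intro v
    rw [Matrix.sub_mulVec, Algebra.algebraMap_eq_smul_one, Matrix.smul_mulVec,
      Matrix.one_mulVec]
  constructor
  · rintro ⟨v, hv, h⟩
    exact ⟨v, hv, by rw [key v] at h; exact (sub_eq_zero.mp h).symm⟩
  · rintro ⟨v, hv, h⟩
    exact ⟨v, hv, by rw [key v, h, sub_self]⟩

private lemma map_entry_pow (A : Matrix (Fin n) (Fin n) ℝ) (k : ℕ) :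
    (A.map Complex.ofReal) ^ k = (A ^ k).map Complex.ofReal := by
  have : A.map Complex.ofReal = Complex.ofRealHom.mapMatrix A := rfl
  rw [this, ← map_pow]; rfl

private lemma eig_bound (A : Matrix (Fin n) (Fin n) ℝ) (hA : ∀ i j, 0 ≤ A i j)
    {x : Fin n → ℝ} (hx : ∀ i, 0 < x i) {c : ℝ}
    (hc : ∀ i, ∑ j, A i j * x j ≤ c * x i) {μ : ℂ} {v : Fin n → ℂ} (hv : v ≠ 0)
    (hev : (A.map Complex.ofReal).mulVec v = μ • v) : ‖μ‖ ≤ c := by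
  set w : Fin n → ℝ := fun i => ‖v i‖ with hw
  have hwnn : ∀ i, 0 ≤ w i := fun i => norm_nonneg _
  have hkey : ∀ i, ‖μ‖ * w i ≤ ∑ k, A i k * w k := by
    intro i
    have h1 : (μ • v) i = ∑ k, (A i k : ℂ) * v k := by
      rw [← hev]; simp [Matrix.mulVec, dotProduct, Matrix.map_apply]
    have h2 : ‖μ‖ * w i = ‖∑ k, (A i k : ℂ) * v k‖ := by
      rw [← h1]; simp [hw, norm_mul]
    rw [h2]
    refine le_trans (norm_sum_le _ _) (le_of_eq ?_)
    refine Finset.sum_congr rfl fun k _ => ?_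
    rw [norm_mul, Complex.norm_real, Real.norm_eq_abs, abs_of_nonneg (hA i k)]
  obtain ⟨i0, -, hi0⟩ := Finset.exists_max_image Finset.univ (fun i => w i / x i)
    Finset.univ_nonempty
  set t := w i0 / x i0 with htdef
  have hwt : ∀ k, w k ≤ t * x k := by
    intro k
    have := hi0 k (Finset.mem_univ k)
    calc w k = (w k / x k) * x k := (div_mul_cancel₀ _ (hx k).ne').symm
      _ ≤ t * x k := mul_le_mul_of_nonneg_right this (hx k).le
  have htpos : 0 < t := by
    obtain ⟨j, hj⟩ := Function.ne_iff.mp hv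
    have hwj : 0 < w j := by simpa [hw] using norm_pos_iff.mpr hj
    exact lt_of_lt_of_le (div_pos hwj (hx j)) (hi0 j (Finset.mem_univ j))
  have hwi0 : 0 < w i0 := by
    have : w i0 = t * x i0 := by rw [htdef, div_mul_cancel₀ _ (hx i0).ne']
    rw [this]; exact mul_pos htpos (hx i0)
  have : ‖μ‖ * w i0 ≤ c * w i0 := by
    calc ‖μ‖ * w i0 ≤ ∑ k, A i0 k * w k := hkey i0
      _ ≤ ∑ k, A i0 k * (t * x k) := by
          exact Finset.sum_le_sum fun k _ => mul_le_mul_of_nonneg_left (hwt k) (hA i0 k)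
      _ = t * ∑ k, A i0 k * x k := by rw [Finset.mul_sum]; exact Finset.sum_congr rfl fun k _ => by ring
      _ ≤ t * (c * x i0) := mul_le_mul_of_nonneg_left (hc i0) htpos.le
      _ = c * (t * x i0) := by ring
      _ = c * w i0 := by rw [show t * x i0 = w i0 by rw [htdef, div_mul_cancel₀ _ (hx i0).ne']]
  exact le_of_mul_le_mul_right this hwi0

private lemma real_eig_mem (A : Matrix (Fin n) (Fin n) ℝ)
    {x : Fin n → ℝ} (hx : x ≠ 0) {c : ℝ} (h : A.mulVec x = c • x) :
    (c : ℂ) ∈ spectrum ℂ (A.map Complex.ofReal) := by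
  rw [memspec]
  refine ⟨fun i => (x i : ℂ), ?_, ?_⟩
  · intro hcon
    apply hx
    funext i
    have := congrFun hcon i
    simpa using this
  · funext i
    have h1 := congrFun h i
    simp only [Matrix.mulVec, dotProduct, Matrix.map_apply, Pi.smul_apply,
      smul_eq_mul] at h1 ⊢
    exact_mod_cast congrArg (Complex.ofReal) h1

private lemma gelfand_lower (A : Matrix (Fin n) (Fin n) ℝ) (hA : ∀ i j, 0 ≤ A i j)
    {x : Fin n → ℝ} (hx : ∀ i, 0 < x i) {d ρ0 : ℝ} (hρ0 : 0 ≤ ρ0) (hd : 0 ≤ d)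
    {N : ℕ} (hN : 0 < N) (hge : ∀ i, d * x i ≤ ((A ^ N).mulVec x) i)
    (hub : ∀ μ ∈ spectrum ℂ (A.map Complex.ofReal), ‖μ‖ ≤ ρ0) :
    d ≤ ρ0 ^ N := by
  by_contra hcon
  push_neg at hcon
  obtain ⟨t, ht2, ht1⟩ : ∃ t, t ^ N < d ∧ ρ0 < t := by
    have hc : ContinuousAt (fun s : ℝ => s ^ N) ρ0 := (continuous_pow N).continuousAt
    have hev : ∀ᶠ s in 𝓝 (ρ0 : ℝ), s ^ N < d := hc.eventually_lt_const hcon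
    have hev2 : ∀ᶠ s in 𝓝[>] (ρ0 : ℝ), s ^ N < d ∧ ρ0 < s :=
      (hev.filter_mono nhdsWithin_le_nhds).and eventually_mem_nhdsWithin
    exact hev2.exists
  have htpos : 0 < t := lt_of_le_of_lt hρ0 ht1
  set A' := A.map Complex.ofReal with hA'
  have hL1 : spectralRadius ℂ A' ≤ ENNReal.ofReal ρ0 := by
    rw [spectralRadius]
    refine iSup₂_le fun μ hμ => ?_
    rw [← ENNReal.ofReal_coe_nnreal]
    refine ENNReal.ofReal_le_ofReal ?_
    rw [coe_nnnorm]
    exact hub μ hμ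
  have hL : spectralRadius ℂ A' < ENNReal.ofReal t :=
    lt_of_le_of_lt hL1 ((ENNReal.ofReal_lt_ofReal_iff htpos).mpr ht1)
  have htend := spectrum.pow_nnnorm_pow_one_div_tendsto_nhds_spectralRadius A'
  have hevent : ∀ᶠ k : ℕ in atTop, (‖A' ^ k‖₊ : ℝ≥0∞) ^ (1/(k:ℝ)) < ENNReal.ofReal t :=
    htend.eventually_lt_const hL
  obtain ⟨K, hK⟩ := eventually_atTop.mp hevent
  set m := max K 1 with hm
  set k := N * m with hk
  have hmk : m ≤ k := Nat.le_mul_of_pos_left m hN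
  have hkK : K ≤ k := le_trans (le_max_left _ _) hmk
  have hkpos : 0 < k := Nat.mul_pos hN (lt_of_lt_of_le one_pos (le_max_right K 1))
  have h1 := hK k hkK
  have h2 : (‖A' ^ k‖₊ : ℝ≥0∞) < ENNReal.ofReal t ^ (k:ℝ) := by
    have h := ENNReal.rpow_lt_rpow h1 (by positivity : (0:ℝ) < (k:ℝ))
    rwa [← ENNReal.rpow_mul, one_div, inv_mul_cancel₀ (by exact_mod_cast hkpos.ne'),
      ENNReal.rpow_one] at h
  have h3 : ‖A' ^ k‖ < t ^ k := by
    rw [ENNReal.ofReal_rpow_of_pos htpos, Real.rpow_natCast] at h2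
    have := (ENNReal.lt_ofReal_iff_toReal_lt (by simp)).mp h2
    simpa using this
  obtain ⟨istar, -, histar⟩ := Finset.exists_max_image Finset.univ x Finset.univ_nonempty
  have hrow : d ^ m * x istar ≤ ((A ^ k).mulVec x) istar := by
    have := iter_lower (A ^ N) (pow_entry_nonneg A hA N) hd hge m istar
    rwa [← pow_mul] at this
  have hxpos := hx istar
  have hrow2 : d ^ m ≤ ∑ j, (A ^ k) istar j := by
    have hb : ((A ^ k).mulVec x) istar ≤ (∑ j, (A ^ k) istar j) * x istar := by
      simp only [Matrix.mulVec, dotProduct]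
      rw [Finset.sum_mul]
      exact Finset.sum_le_sum fun j _ => mul_le_mul_of_nonneg_left
        (histar j (Finset.mem_univ j)) (pow_entry_nonneg A hA k istar j)
    have := le_trans hrow hb
    exact le_of_mul_le_mul_right this hxpos
  have h4 : (∑ j, (A ^ k) istar j) ≤ ‖A' ^ k‖ := by
    rw [hA', map_entry_pow, Matrix.linfty_opNorm_def]
    have hle : (∑ j, ‖((A ^ k).map Complex.ofReal) istar j‖₊)
        ≤ (Finset.univ.sup fun i => ∑ j, ‖((A ^ k).map Complex.ofReal) i j‖₊) :=
      Finset.le_sup (f := fun i => ∑ j, ‖((A ^ k).map Complex.ofReal) i j‖₊) (Finset.mem_univ istar)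
    have : (∑ j, (A ^ k) istar j) = ((∑ j, ‖((A ^ k).map Complex.ofReal) istar j‖₊ : ℝ≥0) : ℝ) := by
      push_cast [coe_nnnorm]
      refine Finset.sum_congr rfl fun j _ => ?_
      simp [Matrix.map_apply, Complex.norm_real, Real.norm_eq_abs,
        abs_of_nonneg (pow_entry_nonneg A hA k istar j)]
    rw [this]
    exact_mod_cast hle
  have hfin : d ^ m < d ^ m := by
    calc d ^ m ≤ ∑ j, (A ^ k) istar j := hrow2
      _ ≤ ‖A' ^ k‖ := h4
      _ < t ^ k := h3
      _ = (t ^ N) ^ m := by rw [hk, pow_mul]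
      _ ≤ d ^ m := pow_le_pow_left₀ (by positivity) ht2.le m
  exact lt_irrefl _ hfin

end PFhelpers

theorem stmt1 {n : ℕ} [NeZero n] (A : Matrix (Fin n) (Fin n) ℝ)
    (hA : ∀ i j, 0 ≤ A i j) (hirr : MatIrreducible A) (hr : ∀ i, 0 < rowSum A i) :
    ((specRad A = Finset.univ.inf' Finset.univ_nonempty (avg2 A) ∨
        specRad A = Finset.univ.sup' Finset.univ_nonempty (avg2 A)) →
      ∀ i j, avg2 A i = avg2 A j) ∧
    ((∀ i j, avg2 A i = avg2 A j) → ∀ i, specRad A = avg2 A i) := by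
  set SS : Set ℝ := {x : ℝ | ∃ μ ∈ spectrum ℂ (A.map Complex.ofReal), x = ‖μ‖} with hSS
  have hspec : specRad A = sSup SS := rfl
  have hnum : ∀ k, avg2 A k * rowSum A k = ∑ j, A k j * rowSum A j :=
    fun k => div_mul_cancel₀ _ (hr k).ne'
  have hmv : ∀ (B : Matrix (Fin n) (Fin n) ℝ) (x : Fin n → ℝ) (i : Fin n),
      (B.mulVec x) i = ∑ j, B i j * x j := by
    intro B x i; simp [Matrix.mulVec, dotProduct]
  have hex : ∀ i, ∃ k, 0 < A i k := by
    intro i; by_contra hcon; push_neg at hcon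
    have h0 : rowSum A i ≤ 0 := Finset.sum_nonpos fun k _ => hcon k
    exact absurd (hr i) (not_lt.mpr h0)
  have havgpos : ∀ i, 0 < avg2 A i := by
    intro i
    have hnum' : 0 < ∑ k, A i k * rowSum A k := by
      obtain ⟨k, hk⟩ := hex i
      exact Finset.sum_pos' (fun k _ => mul_nonneg (hA i k) (hr k).le)
        ⟨k, Finset.mem_univ k, mul_pos hk (hr k)⟩
    exact div_pos hnum' (hr i)
  set m0 := Finset.univ.inf' Finset.univ_nonempty (avg2 A) with hm0def
  set M := Finset.univ.sup' Finset.univ_nonempty (avg2 A) with hMdef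
  have hm0le : ∀ i, m0 ≤ avg2 A i := fun i => Finset.inf'_le _ (Finset.mem_univ i)
  have hleM : ∀ i, avg2 A i ≤ M := fun i => Finset.le_sup' _ (Finset.mem_univ i)
  have hub : ∀ μ ∈ spectrum ℂ (A.map Complex.ofReal), ‖μ‖ ≤ M := by
    intro μ hμ
    obtain ⟨v, hv, hev⟩ := (memspec _ μ).mp hμ
    refine eig_bound A hA hr (c := M) ?_ hv hev
    intro i
    rw [← hnum i]
    exact mul_le_mul_of_nonneg_right (hleM i) (hr i).le
  have hbdd : BddAbove SS := by
    refine ⟨M, ?_⟩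
    rintro s ⟨μ, hμ, rfl⟩
    exact hub μ hμ
  constructor
  · rintro (hρ | hρ)
    · -- min case
      by_contra hne
      push_neg at hne
      obtain ⟨i, j, hij⟩ := hne
      have hex0 : ∃ i0, m0 < avg2 A i0 := by
        by_contra hcon; push_neg at hcon
        have hall : ∀ kk, avg2 A kk = m0 := fun kk => le_antisymm (hcon kk) (hm0le kk)
        exact hij (by rw [hall i, hall j])
      obtain ⟨i0, hi0⟩ := hex0
      have hm0pos : 0 < m0 := by
        rw [hm0def, Finset.lt_inf'_iff]
        exact fun k _ => havgpos k
      have hArlow : ∀ k, m0 * rowSum A k ≤ (A.mulVec (rowSum A)) k := by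
        intro k
        rw [hmv A, ← hnum k]
        exact mul_le_mul_of_nonneg_right (hm0le k) (hr k).le
      have hstrict0 : m0 * rowSum A i0 < (A.mulVec (rowSum A)) i0 := by
        rw [hmv A, ← hnum i0]
        exact mul_lt_mul_of_pos_right hi0 (hr i0)
      choose p hp0 hppos using fun i => hirr i i0
      set P := Finset.univ.sup' Finset.univ_nonempty p with hPdef
      set N := P + 1 with hNdef
      have hNle : ∀ i', p i' + 1 ≤ N := by
        intro i'
        have : p i' ≤ P := Finset.le_sup' _ (Finset.mem_univ i')
        omega
      have claim : ∀ i', m0 ^ N * rowSum A i' < ((A ^ N).mulVec (rowSum A)) i' := by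
        intro i'
        set q := p i' with hqdef
        have hq1 : ((A ^ (q+1)).mulVec (rowSum A)) i'
            = ((A ^ q).mulVec (A.mulVec (rowSum A))) i' := by
          rw [pow_succ, ← Matrix.mulVec_mulVec]
        have hstrict : m0 ^ (q+1) * rowSum A i' < ((A ^ (q+1)).mulVec (rowSum A)) i' := by
          rw [hq1]
          have h1 : ∑ l, (A ^ q) i' l * (m0 * rowSum A l)
              < ∑ l, (A ^ q) i' l * (A.mulVec (rowSum A)) l := by
            refine Finset.sum_lt_sum
              (fun l _ => mul_le_mul_of_nonneg_left (hArlow l) (pow_entry_nonneg A hA q i' l))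
              ⟨i0, Finset.mem_univ i0, mul_lt_mul_of_pos_left hstrict0 (hppos i')⟩
          have h2 : m0 ^ (q+1) * rowSum A i' ≤ ∑ l, (A ^ q) i' l * (m0 * rowSum A l) := by
            have hit := iter_lower A hA hm0pos.le hArlow q i'
            calc m0 ^ (q+1) * rowSum A i' = m0 * (m0 ^ q * rowSum A i') := by ring
              _ ≤ m0 * ((A ^ q).mulVec (rowSum A)) i' :=
                  mul_le_mul_of_nonneg_left hit hm0pos.le
              _ = ∑ l, (A ^ q) i' l * (m0 * rowSum A l) := by
                  rw [hmv (A ^ q), Finset.mul_sum]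
                  exact Finset.sum_congr rfl fun l _ => by ring
          have h3 : ((A ^ q).mulVec (A.mulVec (rowSum A))) i'
              = ∑ l, (A ^ q) i' l * (A.mulVec (rowSum A)) l := hmv _ _ _
          rw [h3]
          exact lt_of_le_of_lt h2 h1
        -- extend to N
        have hsplit : A ^ N = A ^ (q+1) * A ^ (N - (q+1)) := by
          rw [← pow_add]
          congr 1
          have := hNle i'
          omega
        have h4 : ∀ l, m0 ^ (N - (q+1)) * rowSum A l
            ≤ ((A ^ (N - (q+1))).mulVec (rowSum A)) l :=
          iter_lower A hA hm0pos.le hArlow _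
        have h5 : ((A ^ N).mulVec (rowSum A)) i'
            = ((A ^ (q+1)).mulVec ((A ^ (N - (q+1))).mulVec (rowSum A))) i' := by
          rw [hsplit, ← Matrix.mulVec_mulVec]
        rw [h5]
        have h6 : ((A ^ (q+1)).mulVec (fun l => m0 ^ (N - (q+1)) * rowSum A l)) i'
            ≤ ((A ^ (q+1)).mulVec ((A ^ (N - (q+1))).mulVec (rowSum A))) i' :=
          mulVec_mono _ (pow_entry_nonneg A hA (q+1)) h4 i'
        have h7 : ((A ^ (q+1)).mulVec (fun l => m0 ^ (N - (q+1)) * rowSum A l)) i'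
            = m0 ^ (N - (q+1)) * ((A ^ (q+1)).mulVec (rowSum A)) i' := by
          rw [hmv (A ^ (q+1)), hmv (A ^ (q+1)), Finset.mul_sum]
          exact Finset.sum_congr rfl fun l _ => by ring
        have h8 : m0 ^ N * rowSum A i'
            = m0 ^ (N - (q+1)) * (m0 ^ (q+1) * rowSum A i') := by
          rw [← mul_assoc, ← pow_add]
          congr 2
          have := hNle i'
          omega
        rw [h8]
        calc m0 ^ (N - (q+1)) * (m0 ^ (q+1) * rowSum A i')
            < m0 ^ (N - (q+1)) * ((A ^ (q+1)).mulVec (rowSum A)) i' :=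
              mul_lt_mul_of_pos_left hstrict (pow_pos hm0pos _)
          _ = ((A ^ (q+1)).mulVec (fun l => m0 ^ (N - (q+1)) * rowSum A l)) i' := h7.symm
          _ ≤ _ := h6
      -- derive contradiction via Gelfand bound
      set d := Finset.univ.inf' Finset.univ_nonempty
        (fun i' => ((A ^ N).mulVec (rowSum A)) i' / rowSum A i') with hddef
      have hd1 : m0 ^ N < d := by
        rw [hddef, Finset.lt_inf'_iff]
        intro i' _
        rw [lt_div_iff₀ (hr i')]
        calc m0 ^ N * rowSum A i' < ((A ^ N).mulVec (rowSum A)) i' := claim i'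
          _ = _ := by ring_nf
      have hd2 : ∀ i', d * rowSum A i' ≤ ((A ^ N).mulVec (rowSum A)) i' := by
        intro i'
        have : d ≤ ((A ^ N).mulVec (rowSum A)) i' / rowSum A i' :=
          Finset.inf'_le _ (Finset.mem_univ i')
        calc d * rowSum A i' ≤ (((A ^ N).mulVec (rowSum A)) i' / rowSum A i') * rowSum A i' :=
              mul_le_mul_of_nonneg_right this (hr i').le
          _ = ((A ^ N).mulVec (rowSum A)) i' := div_mul_cancel₀ _ (hr i').ne'
      have hd0 : 0 ≤ d := le_trans (pow_pos hm0pos N).le hd1.le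
      have hub0 : ∀ μ ∈ spectrum ℂ (A.map Complex.ofReal), ‖μ‖ ≤ m0 := by
        intro μ hμ
        have hmemS : ‖μ‖ ∈ SS := ⟨μ, hμ, rfl⟩
        have := le_csSup hbdd hmemS
        rwa [← hspec, hρ] at this
      have := gelfand_lower A hA hr hm0pos.le hd0 (by omega : 0 < N) hd2 hub0
      exact absurd hd1 (not_lt.mpr this)
    · -- max case
      have hSSfin : SS.Finite := by
        have himg : SS = (‖·‖) '' (spectrum ℂ (A.map Complex.ofReal)) := by
          ext s; simp [hSS, Set.mem_image, eq_comm]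
        rw [himg]
        exact (Matrix.finite_spectrum _).image _
      have hSSne : SS.Nonempty := by
        obtain ⟨μ, hμ⟩ := spectrum.nonempty (A.map Complex.ofReal)
        exact ⟨‖μ‖, μ, hμ, rfl⟩
      have hmemSR : specRad A ∈ SS := by
        rw [hspec]; exact hSSne.csSup_mem hSSfin
      obtain ⟨μ, hμ, hμabs⟩ := hmemSR
      rw [hρ] at hμabs
      obtain ⟨v, hv, hev⟩ := (memspec _ μ).mp hμ
      set w : Fin n → ℝ := fun i => ‖v i‖ with hwdef
      have hw : ∀ i, M * w i ≤ ∑ k, A i k * w k := by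
        intro i
        have h1 : (μ • v) i = ∑ k, (A i k : ℂ) * v k := by
          rw [← hev]; simp [Matrix.mulVec, dotProduct, Matrix.map_apply]
        have h2 : M * w i = ‖∑ k, (A i k : ℂ) * v k‖ := by
          rw [← h1, hμabs]; simp [hwdef, norm_mul]
        rw [h2]
        refine le_trans (norm_sum_le _ _) (le_of_eq ?_)
        exact Finset.sum_congr rfl fun k _ => by
          rw [norm_mul, Complex.norm_real, Real.norm_eq_abs, abs_of_nonneg (hA i k)]
      obtain ⟨i1, -, hi1max⟩ := Finset.exists_max_image Finset.univ
        (fun i => w i / rowSum A i) Finset.univ_nonempty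
      set t := w i1 / rowSum A i1 with htdef
      have hwt : ∀ k, w k ≤ t * rowSum A k := by
        intro k
        have := hi1max k (Finset.mem_univ k)
        calc w k = (w k / rowSum A k) * rowSum A k := (div_mul_cancel₀ _ (hr k).ne').symm
          _ ≤ t * rowSum A k := mul_le_mul_of_nonneg_right this (hr k).le
      have htpos : 0 < t := by
        obtain ⟨j, hj⟩ := Function.ne_iff.mp hv
        have hwj : 0 < w j := by simpa [hwdef] using norm_pos_iff.mpr hj
        exact lt_of_lt_of_le (div_pos hwj (hr j)) (hi1max j (Finset.mem_univ j))
      have hi1 : w i1 = t * rowSum A i1 := by rw [htdef, div_mul_cancel₀ _ (hr i1).ne']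
      have hstep : ∀ k, w k = t * rowSum A k →
          avg2 A k = M ∧ ∀ j, 0 < A k j → w j = t * rowSum A j := by
        intro k hk
        have e1 : ∀ j, A k j * w j ≤ A k j * (t * rowSum A j) :=
          fun j => mul_le_mul_of_nonneg_left (hwt j) (hA k j)
        have e2 : ∑ j, A k j * (t * rowSum A j) = t * (avg2 A k * rowSum A k) := by
          rw [hnum k, Finset.mul_sum]
          exact Finset.sum_congr rfl fun j _ => by ring
        have c1 : M * w k ≤ ∑ j, A k j * w j := hw k
        have c2 : ∑ j, A k j * w j ≤ t * (avg2 A k * rowSum A k) := by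
          rw [← e2]; exact Finset.sum_le_sum fun j _ => e1 j
        have c3 : t * (avg2 A k * rowSum A k) ≤ t * (M * rowSum A k) :=
          mul_le_mul_of_nonneg_left
            (mul_le_mul_of_nonneg_right (hleM k) (hr k).le) htpos.le
        have c4 : M * w k = t * (M * rowSum A k) := by rw [hk]; ring
        have hXa : t * (avg2 A k * rowSum A k) = t * (M * rowSum A k) :=
          le_antisymm c3 (by rw [← c4]; exact c1.trans c2)
        have havgk : avg2 A k = M := by
          have h := mul_left_cancel₀ htpos.ne' hXa
          exact mul_right_cancel₀ (hr k).ne' h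
        refine ⟨havgk, ?_⟩
        have hSig : ∑ j, A k j * w j = ∑ j, A k j * (t * rowSum A j) := by
          refine le_antisymm (Finset.sum_le_sum fun j _ => e1 j) ?_
          rw [e2, hXa, ← c4]; exact c1
        have hpt := (Finset.sum_eq_sum_iff_of_le (fun j _ => e1 j)).mp hSig
        intro j hAkj
        exact mul_left_cancel₀ hAkj.ne' (hpt j (Finset.mem_univ j))
      have hclo : ∀ p k j, w k = t * rowSum A k → 0 < (A ^ p) k j →
          w j = t * rowSum A j := by
        intro p
        induction p with
        | zero =>
            intro k j hk hpos
            rw [pow_zero] at hpos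
            by_cases h : k = j
            · exact h ▸ hk
            · rw [Matrix.one_apply_ne h] at hpos; exact absurd hpos (lt_irrefl 0)
        | succ p ih =>
            intro k j hk hpos
            rw [pow_succ', Matrix.mul_apply] at hpos
            have h0 : (∑ l : Fin n, (0:ℝ)) < ∑ l, A k l * (A ^ p) l j := by simpa using hpos
            obtain ⟨l, -, hl⟩ := Finset.exists_lt_of_sum_lt h0
            have hAkl : 0 < A k l := by
              rcases (hA k l).lt_or_eq with h | h
              · exact h
              · rw [← h, zero_mul] at hl; exact absurd hl (lt_irrefl 0)
            have hAp : 0 < (A ^ p) l j := by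
              rcases (pow_entry_nonneg A hA p l j).lt_or_eq with h | h
              · exact h
              · rw [← h, mul_zero] at hl; exact absurd hl (lt_irrefl 0)
            exact ih l j ((hstep k hk).2 l hAkl) hAp
      intro i j
      have hall : ∀ jj, avg2 A jj = M := by
        intro jj
        obtain ⟨p, hp0, hppos⟩ := hirr i1 jj
        exact (hstep jj (hclo p i1 jj hi1 hppos)).1
      rw [hall i, hall j]
  · -- part 2
    intro heq i
    have hAr : A.mulVec (rowSum A) = (avg2 A i) • (rowSum A) := by
      funext k
      rw [hmv A, Pi.smul_apply, smul_eq_mul, ← hnum k, heq k i]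
    have hrne : rowSum A ≠ 0 := by
      intro h0
      have := congrFun h0 i
      exact absurd this (hr i).ne'
    have hcmem : ((avg2 A i : ℝ) : ℂ) ∈ spectrum ℂ (A.map Complex.ofReal) :=
      real_eig_mem A hrne hAr
    have hmem : avg2 A i ∈ SS :=
      ⟨_, hcmem, by rw [Complex.norm_real, Real.norm_eq_abs, abs_of_pos (havgpos i)]⟩
    rw [hspec]
    refine le_antisymm ?_ (le_csSup hbdd hmem)
    refine csSup_le ⟨_, hmem⟩ ?_
    rintro s ⟨μ, hμ, rfl⟩
    obtain ⟨v, hv, hev⟩ := (memspec _ μ).mp hμ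
    refine eig_bound A hA hr (c := avg2 A i) ?_ hv hev
    intro l
    rw [← hnum l, heq l i]
end

section
/- Let A = (a_{ij}) be an n×n nonnegative matrix with positive row sums, whose average 2-row sums m_1 ≥ ... ≥ m_n are sorted in decreasing order. Let M be the largest diagonal entry, N the largest off-diagonal entry (assume N > 0), and b = max_{i,j} r_j(A)/r_i(A). Then for each 1 ≤ l ≤ n, ρ(A) ≤ φ_l := (m_l + M − Nb + √((m_l − M + Nb)² + 4Nb Σ_{i=1}^{l−1}(m_i − m_l)))/2. -/
open Matrix BigOperators Finset

set_option maxHeartbeats 1000000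

theorem stmt3 {n : ℕ} (A : Matrix (Fin n) (Fin n) ℝ)
    (hA : ∀ i j, 0 ≤ A i j) (hr : ∀ i, 0 < rowSum A i)
    (m : Fin n → ℝ) (σ : Equiv.Perm (Fin n)) (hm : ∀ i, m i = avg2 A (σ i))
    (hmono : Antitone m) (M N b : ℝ)
    (hM : ∀ i, A i i ≤ M) (hM' : ∃ i, A i i = M)
    (hN : ∀ i j, i ≠ j → A i j ≤ N) (hN' : ∃ i j, i ≠ j ∧ A i j = N) (hNpos : 0 < N)
    (hb : ∀ i j, rowSum A j / rowSum A i ≤ b)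
    (hb' : ∃ i j, rowSum A j / rowSum A i = b)
    (l : Fin n) :
    specRad A ≤ (m l + M - N * b +
      Real.sqrt ((m l - M + N * b) ^ 2 +
        4 * N * b * ∑ i ∈ Finset.univ.filter (fun i => i < l), (m i - m l))) / 2 := by
  classical
  set r : Fin n → ℝ := rowSum A with hrdef
  -- basic positivity facts
  have hb1 : (1:ℝ) ≤ b := by
    have := hb l l
    rwa [div_self (hr l).ne'] at this
  have hNb : 0 < N * b := mul_pos hNpos (lt_of_lt_of_le one_pos hb1)
  have hMnn : 0 ≤ M := by obtain ⟨i, hi⟩ := hM'; rw [← hi]; exact hA i i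
  have hrb : ∀ i j, r j ≤ b * r i := by
    intro i j
    have h := hb i j
    rw [div_le_iff₀ (hr i)] at h
    linarith [h]
  -- sorted average 2-row sums
  have hmval : ∀ k, avg2 A k = m (σ.symm k) := by
    intro k
    rw [hm (σ.symm k), Equiv.apply_symm_apply]
  have hmnn : ∀ i, 0 ≤ m i := by
    intro i
    rw [hm i]
    unfold avg2
    exact div_nonneg (Finset.sum_nonneg fun k _ => mul_nonneg (hA _ _) (hr k).le) (hr _).le
  have hsum_row : ∀ t, ∑ j, A t j * r j = m (σ.symm t) * r t := by
    intro t
    rw [← hmval t]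
    unfold avg2
    rw [div_mul_cancel₀]
    exact (hr t).ne'
  -- notation for the bound
  set S : ℝ := ∑ i ∈ Finset.univ.filter (fun i => i < l), (m i - m l) with hSdef
  have hS : 0 ≤ S :=
    Finset.sum_nonneg fun i hi => by
      have h : i < l := (Finset.mem_filter.mp hi).2
      linarith [hmono h.le]
  set D : ℝ := m l - M + N * b with hDdef
  set sq : ℝ := Real.sqrt (D ^ 2 + 4 * N * b * S) with hsqdef
  have harg : 0 ≤ D ^ 2 + 4 * N * b * S := by nlinarith [sq_nonneg D, hS, hNb]
  have hsq2 : sq ^ 2 = D ^ 2 + 4 * N * b * S := Real.sq_sqrt harg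
  have hsqD : |D| ≤ sq := by
    rw [← Real.sqrt_sq_eq_abs]
    apply Real.sqrt_le_sqrt
    nlinarith [hS, hNb]
  set φ : ℝ := (m l + M - N * b + sq) / 2 with hφdef
  set g : ℝ := φ - M + N * b with hgdef
  have hgval : g = (D + sq) / 2 := by rw [hgdef, hφdef, hDdef]; ring
  have hg : 0 ≤ g := by
    rw [hgval]
    have h := (abs_le.mp hsqD).1
    linarith
  have hφm : m l ≤ φ := by
    have h : D ≤ sq := (le_abs_self D).trans hsqD
    rw [hDdef] at h
    rw [hφdef]
    linarith
  have hφnn : 0 ≤ φ := le_trans (hmnn l) hφm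
  have hkey : g * (φ - m l) = N * b * S := by
    have h1 : φ - m l = (sq - D) / 2 := by rw [hφdef, hDdef]; ring
    rw [hgval, h1]
    nlinarith [hsq2]
  -- the weights
  set τ : Fin n → ℝ := fun i => if i < l then m i - m l else 0 with hτdef
  have hτnn : ∀ i, 0 ≤ τ i := by
    intro i
    rw [hτdef]
    dsimp only
    split
    · next h => linarith [hmono h.le]
    · exact le_refl 0
  have hτle : ∀ i, m i - m l ≤ τ i := by
    intro i
    rw [hτdef]
    dsimp only
    split
    · exact le_refl _
    · next h => linarith [hmono (not_lt.mp h)]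
  have hτsum : ∑ i, τ i = S := by
    rw [hSdef, hτdef]
    rw [Finset.sum_ite, Finset.sum_const_zero, add_zero]
  set W : Fin n → ℝ := fun k => 1 + τ (σ.symm k) / g with hWdef
  have hW1 : ∀ k, 1 ≤ W k := by
    intro k
    rw [hWdef]
    dsimp only
    have h : 0 ≤ τ (σ.symm k) / g := div_nonneg (hτnn _) hg
    linarith
  have hWpos : ∀ k, 0 < W k := fun k => lt_of_lt_of_le one_pos (hW1 k)
  -- the key row-sum estimate
  have hrow : ∀ t, ∑ j, A t j * r j * W j ≤ φ * (r t * W t) := by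
    intro t
    have hWt : W t = 1 + τ (σ.symm t) / g := by rw [hWdef]
    have hsplit : ∑ j, A t j * r j * W j
        = (∑ j, A t j * r j) + (∑ j, A t j * r j * τ (σ.symm j)) / g := by
      rw [Finset.sum_div, ← Finset.sum_add_distrib]
      apply Finset.sum_congr rfl
      intro j _
      rw [hWdef]
      dsimp only
      by_cases hg0 : g = 0
      · rw [hg0]; simp
      · field_simp
    by_cases hg0 : g = 0
    · -- degenerate case: S = 0, all top m's equal m l
      have hS0 : N * b * S = 0 := by rw [← hkey, hg0, zero_mul]
      have hS0' : S = 0 := by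
        rcases mul_eq_zero.mp hS0 with h | h
        · exact absurd h hNb.ne'
        · exact h
      have hnn : ∀ k ∈ Finset.univ.filter (fun i => i < l), (0:ℝ) ≤ m k - m l := by
        intro k hk
        have hkl : k < l := (Finset.mem_filter.mp hk).2
        linarith [hmono hkl.le]
      have hzero := (Finset.sum_eq_zero_iff_of_nonneg hnn).mp (hSdef ▸ hS0')
      have hml : ∀ i, m i ≤ m l := by
        intro i
        by_cases hil : i < l
        · have h := hzero i (Finset.mem_filter.mpr ⟨Finset.mem_univ i, hil⟩)
          linarith
        · exact hmono (not_lt.mp hil)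
      have hτ0 : ∀ i, τ i = 0 := by
        intro i
        rw [hτdef]
        dsimp only
        split
        · next h =>
            have h1 := hml i
            have h2 := hmono h.le
            linarith
        · rfl
      have hWone : ∀ k, W k = 1 := by
        intro k
        rw [hWdef]
        dsimp only
        rw [hτ0, zero_div, add_zero]
      rw [hsplit, hg0, div_zero, add_zero, hsum_row, hWone t, mul_one]
      exact mul_le_mul_of_nonneg_right (le_trans (hml _) hφm) (hr t).le
    · have hgpos : 0 < g := lt_of_le_of_ne hg (Ne.symm hg0)
      -- bound the τ-weighted sum
      have hT : ∑ j, A t j * r j * τ (σ.symm j)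
          ≤ g * (φ - m l) * r t + (M - N * b) * r t * τ (σ.symm t) := by
        have hre : ∑ j, A t j * r j * τ (σ.symm j) = ∑ i, A t (σ i) * r (σ i) * τ i := by
          rw [← Equiv.sum_comp σ (fun j => A t j * r j * τ (σ.symm j))]
          apply Finset.sum_congr rfl
          intro i _
          rw [Equiv.symm_apply_apply]
        rw [hre]
        have hbd : ∀ i, A t (σ i) * r (σ i) * τ i
            ≤ N * b * r t * τ i + (if i = σ.symm t then (M - N * b) * r t * τ i else 0) := by
          intro i
          by_cases hip : i = σ.symm t
          · subst hip
            rw [if_pos rfl, Equiv.apply_symm_apply]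
            have h1 : A t t * r t ≤ M * r t := mul_le_mul_of_nonneg_right (hM t) (hr t).le
            nlinarith [hτnn (σ.symm t), h1]
          · rw [if_neg hip]
            have hne : σ i ≠ t := by
              intro h
              apply hip
              rw [← h, Equiv.symm_apply_apply]
            have h1 : A t (σ i) ≤ N := hN t (σ i) (fun h => hne h.symm)
            have h2 : r (σ i) ≤ b * r t := hrb t (σ i)
            have h3 : A t (σ i) * r (σ i) ≤ N * (b * r t) :=
              mul_le_mul h1 h2 (hr _).le hNpos.le
            nlinarith [hτnn i, h3]
        calc ∑ i, A t (σ i) * r (σ i) * τ i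
            ≤ ∑ i, (N * b * r t * τ i + (if i = σ.symm t then (M - N * b) * r t * τ i else 0)) :=
              Finset.sum_le_sum fun i _ => hbd i
          _ = N * b * r t * S + (M - N * b) * r t * τ (σ.symm t) := by
              rw [Finset.sum_add_distrib, Finset.sum_ite_eq' Finset.univ (σ.symm t)
                (fun i => (M - N * b) * r t * τ i), if_pos (Finset.mem_univ _),
                ← Finset.mul_sum, hτsum]
          _ = g * (φ - m l) * r t + (M - N * b) * r t * τ (σ.symm t) := by
              linear_combination (- r t / 4) * hsq2
      rw [hsplit, hsum_row, hWt]
      have hrt := hr t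
      have hτp := hτnn (σ.symm t)
      have hkey2 : m (σ.symm t) - m l ≤ τ (σ.symm t) := hτle (σ.symm t)
      have hstep : (∑ j, A t j * r j * τ (σ.symm j)) / g
          ≤ (g * (φ - m l) * r t + (M - N * b) * r t * τ (σ.symm t)) / g := by
        gcongr
      have hfinal : m (σ.symm t) * r t
            + (g * (φ - m l) * r t + (M - N * b) * r t * τ (σ.symm t)) / g
          ≤ φ * (r t * (1 + τ (σ.symm t) / g)) := by
        have hgne : g ≠ 0 := hgpos.ne'
        have hX : m (σ.symm t) * r t
              + (g * (φ - m l) * r t + (M - N * b) * r t * τ (σ.symm t)) / g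
            = (m (σ.symm t) * r t * g + g * (φ - m l) * r t
              + (M - N * b) * r t * τ (σ.symm t)) / g := by
          field_simp
          ring
        have hY : φ * (r t * (1 + τ (σ.symm t) / g))
            = (φ * r t * g + φ * r t * τ (σ.symm t)) / g := by
          field_simp
        rw [hX, hY]
        have hφg : φ = g + M - N * b := by rw [hgdef]; ring
        have f1 : g * r t * (m (σ.symm t) - m l - τ (σ.symm t)) ≤ 0 :=
          mul_nonpos_of_nonneg_of_nonpos (mul_nonneg hgpos.le hrt.le) (by linarith [hkey2])
        rw [hφg, div_le_div_iff_of_pos_right hgpos]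
        nlinarith [f1]
      calc m (σ.symm t) * r t + (∑ j, A t j * r j * τ (σ.symm j)) / g
          ≤ m (σ.symm t) * r t
              + (g * (φ - m l) * r t + (M - N * b) * r t * τ (σ.symm t)) / g :=
            add_le_add_right hstep _
        _ ≤ φ * (r t * (1 + τ (σ.symm t) / g)) := hfinal
  -- now bound every element of the spectrum set
  unfold specRad
  apply Real.sSup_le
  · rintro x ⟨μ, hμ, rfl⟩
    -- extract an eigenvector
    rw [spectrum.mem_iff, Matrix.isUnit_iff_isUnit_det, isUnit_iff_ne_zero, not_ne_iff,
      ← Matrix.exists_mulVec_eq_zero_iff] at hμ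
    obtain ⟨v, hv, hv2⟩ := hμ
    have halg : (algebraMap ℂ (Matrix (Fin n) (Fin n) ℂ)) μ *ᵥ v = μ • v := by
      rw [Algebra.algebraMap_eq_smul_one, Matrix.smul_mulVec, Matrix.one_mulVec]
    rw [Matrix.sub_mulVec, halg, sub_eq_zero] at hv2
    -- hv2 : μ • v = (A.map ofReal) *ᵥ v
    set x : Fin n → ℝ := fun k => ‖v k‖ with hxdef
    have hsub : ∀ t, ‖μ‖ * x t ≤ ∑ j, A t j * x j := by
      intro t
      have h1 : μ * v t = ∑ j, (A.map Complex.ofReal) t j * v j := by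
        have h := congrFun hv2 t
        simpa [Matrix.mulVec, dotProduct, Pi.smul_apply, smul_eq_mul] using h
      calc ‖μ‖ * x t = ‖μ * v t‖ := by rw [norm_mul]
        _ = ‖∑ j, (A.map Complex.ofReal) t j * v j‖ := by rw [h1]
        _ ≤ ∑ j, ‖(A.map Complex.ofReal) t j * v j‖ := norm_sum_le _ _
        _ = ∑ j, A t j * x j := by
            apply Finset.sum_congr rfl
            intro j _
            rw [norm_mul, Matrix.map_apply, Complex.norm_real, Real.norm_of_nonneg (hA t j)]
    -- pick the maximizing index
    set u : Fin n → ℝ := fun k => x k / (r k * W k) with hudef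
    obtain ⟨t, -, ht⟩ := Finset.exists_max_image Finset.univ u ⟨l, Finset.mem_univ l⟩
    have hxu : ∀ k, x k = r k * W k * u k := by
      intro k
      rw [hudef]
      dsimp only
      rw [mul_div_cancel₀]
      exact (mul_pos (hr k) (hWpos k)).ne'
    have hut : 0 < u t := by
      obtain ⟨k, hk⟩ := Function.ne_iff.mp hv
      have hk' : v k ≠ 0 := by simpa using hk
      have hxk : 0 < x k := by
        rw [hxdef]
        simpa using (norm_pos_iff.mpr hk')
      have huk : 0 < u k := by
        rw [hudef]
        exact div_pos hxk (mul_pos (hr k) (hWpos k))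
      exact lt_of_lt_of_le huk (ht k (Finset.mem_univ k))
    have hxt : 0 < x t := by
      rw [hxu t]
      exact mul_pos (mul_pos (hr t) (hWpos t)) hut
    have hchain : ‖μ‖ * x t ≤ φ * x t := by
      calc ‖μ‖ * x t ≤ ∑ j, A t j * x j := hsub t
        _ ≤ ∑ j, A t j * r j * W j * u t := by
            apply Finset.sum_le_sum
            intro j _
            rw [hxu j]
            have h0 : 0 ≤ A t j * (r j * W j) :=
              mul_nonneg (hA t j) (mul_pos (hr j) (hWpos j)).le
            have h1 : A t j * (r j * W j) * u j ≤ A t j * (r j * W j) * u t :=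
              mul_le_mul_of_nonneg_left (ht j (Finset.mem_univ j)) h0
            nlinarith [h1]
        _ = (∑ j, A t j * r j * W j) * u t := by rw [← Finset.sum_mul]
        _ ≤ φ * (r t * W t) * u t := mul_le_mul_of_nonneg_right (hrow t) hut.le
        _ = φ * x t := by rw [hxu t]; ring
    exact le_of_mul_le_mul_right hchain hxt
  · exact hφnn
end

section
/- Let A = (a_{ij}) be an n×n nonnegative matrix with positive row sums, whose average 2-row sums m_1 ≥ ... ≥ m_n are sorted in decreasing order. Let S be the smallest diagonal entry, T the smallest off-diagonal entry, and c = min_{i,j} r_j(A)/r_i(A). Then ρ(A) ≥ ψ_n := (m_n + S − Tc + √((m_n − S + Tc)² + 4Tc Σ_{i=1}^{n−1}(m_i − m_n)))/2. -/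
open Matrix BigOperators Finset Filter
open scoped NNReal ENNReal Topology

attribute [local instance] Matrix.linftyOpNormedRing Matrix.linftyOpNormedAlgebra

lemma entry_le_norm {n : ℕ} (B : Matrix (Fin n) (Fin n) ℝ) (i j : Fin n) :
    |B i j| ≤ ‖B.map Complex.ofReal‖ := by
  rw [Matrix.linfty_opNorm_def]
  have h1 : (‖(B.map Complex.ofReal) i j‖₊ : ℝ)
      ≤ ((∑ j', ‖(B.map Complex.ofReal) i j'‖₊ : ℝ≥0) : ℝ) := by
    exact_mod_cast Finset.single_le_sum (f := fun j' => ‖(B.map Complex.ofReal) i j'‖₊)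
      (fun _ _ => zero_le) (Finset.mem_univ j)
  have h2 : ((∑ j', ‖(B.map Complex.ofReal) i j'‖₊ : ℝ≥0) : ℝ)
      ≤ (((Finset.univ : Finset (Fin n)).sup fun i => ∑ j', ‖(B.map Complex.ofReal) i j'‖₊ : ℝ≥0) : ℝ) := by
    exact_mod_cast Finset.le_sup (f := fun i => ∑ j', ‖(B.map Complex.ofReal) i j'‖₊) (Finset.mem_univ i)
  have h3 : |B i j| = (‖(B.map Complex.ofReal) i j‖₊ : ℝ) := by
    simp [Matrix.map_apply, Complex.norm_real, coe_nnnorm, Real.norm_eq_abs]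
  rw [h3]; exact h1.trans h2

lemma key {n : ℕ} (hn : 0 < n) (A : Matrix (Fin n) (Fin n) ℝ)
    (hA : ∀ i j, 0 ≤ A i j) (x : Fin n → ℝ) (hx : ∀ i, 0 < x i)
    (lam : ℝ) (h : ∀ i, lam * x i ≤ ∑ j, A i j * x j) :
    lam ≤ specRad A := by
  haveI : Nonempty (Fin n) := ⟨⟨0, hn⟩⟩
  haveI hcs : CompleteSpace (Matrix (Fin n) (Fin n) ℂ) :=
    by infer_instance
  set Mc := A.map Complex.ofReal with hMc
  obtain ⟨z, hz, hznorm⟩ := spectrum.exists_nnnorm_eq_spectralRadius Mc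
  have hbdd : BddAbove {x : ℝ | ∃ μ ∈ spectrum ℂ Mc, x = ‖μ‖} := by
    refine ⟨‖Mc‖, ?_⟩
    rintro y ⟨μ, hμ, rfl⟩
    exact spectrum.norm_le_norm_of_mem hμ
  have hmem : ‖z‖ ∈ {x : ℝ | ∃ μ ∈ spectrum ℂ Mc, x = ‖μ‖} := ⟨z, hz, rfl⟩
  have h1 : ‖z‖ ≤ specRad A := le_csSup hbdd hmem
  rcases le_or_gt lam 0 with h0 | h0
  · exact h0.trans ((norm_nonneg z).trans h1)
  refine le_trans ?_ h1
  by_contra h2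
  push_neg at h2
  -- h2 : Complex.abs z < lam
  have hzn : ‖z‖ < lam := h2
  have hsr : spectralRadius ℂ Mc < ENNReal.ofReal lam := by
    rw [← hznorm]
    rw [ENNReal.ofReal]
    refine ENNReal.coe_lt_coe.mpr ?_
    rw [← NNReal.coe_lt_coe, Real.coe_toNNReal _ h0.le]
    simpa using hzn
  obtain ⟨r, hr1, hr2⟩ := exists_between hsr
  have hrtop : r ≠ ⊤ := (hr2.trans ENNReal.ofReal_lt_top).ne
  set r' := r.toReal with hr'def
  have hr'lt : r' < lam := ENNReal.toReal_lt_of_lt_ofReal hr2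
  have hr'0 : 0 ≤ r' := ENNReal.toReal_nonneg
  have gel := spectrum.pow_nnnorm_pow_one_div_tendsto_nhds_spectralRadius Mc
  have hev : ∀ᶠ k : ℕ in atTop, (‖Mc ^ k‖₊ : ℝ≥0∞) ^ (1/(k:ℝ)) < r :=
    gel.eventually_lt_const hr1
  have hev2 : ∀ᶠ k : ℕ in atTop, ‖Mc ^ k‖ ≤ r' ^ k := by
    filter_upwards [hev, eventually_ge_atTop 1] with k hk hk1
    have hk0 : (0:ℝ) < (k:ℝ) := by exact_mod_cast hk1
    have h3 : ((‖Mc ^ k‖₊ : ℝ≥0∞) ^ (1/(k:ℝ))) ^ (k:ℝ) < r ^ (k:ℝ) :=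
      ENNReal.rpow_lt_rpow hk hk0
    rw [← ENNReal.rpow_mul, one_div, inv_mul_cancel₀ hk0.ne', ENNReal.rpow_one,
      ENNReal.rpow_natCast] at h3
    have h4 : (‖Mc ^ k‖₊ : ℝ≥0∞).toReal ≤ (r ^ k).toReal :=
      ENNReal.toReal_mono (ENNReal.pow_ne_top hrtop) h3.le
    simpa using h4
  have hpow : ∀ k : ℕ, ∀ i, lam ^ k * x i ≤ ∑ j, (A ^ k) i j * x j := by
    intro k
    induction k with
    | zero => intro i; simp [Matrix.one_apply]
    | succ k ih =>
      intro i
      have step1 : lam ^ (k+1) * x i ≤ lam ^ k * ∑ j, A i j * x j := by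
        have := mul_le_mul_of_nonneg_left (h i) (pow_nonneg h0.le k)
        calc lam ^ (k+1) * x i = lam ^ k * (lam * x i) := by ring
        _ ≤ _ := this
      have step2 : lam ^ k * ∑ j, A i j * x j = ∑ j, A i j * (lam ^ k * x j) := by
        rw [Finset.mul_sum]; congr 1; ext j; ring
      have step3 : ∑ j, A i j * (lam ^ k * x j) ≤ ∑ j, A i j * (∑ l, (A ^ k) j l * x l) :=
        Finset.sum_le_sum fun j _ => mul_le_mul_of_nonneg_left (ih j) (hA i j)
      have step4 : ∑ j, A i j * (∑ l, (A ^ k) j l * x l) = ∑ j, (A ^ (k+1)) i j * x j := by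
        rw [pow_succ']
        simp only [Matrix.mul_apply, Finset.sum_mul, Finset.mul_sum]
        rw [Finset.sum_comm]
        congr 1; ext j; congr 1; ext l; ring
      linarith [step1, step3, step4.symm ▸ step3]
  have hmp : ∀ k : ℕ, Mc ^ k = (A ^ k).map Complex.ofReal := by
    intro k
    have h5 : Mc = Complex.ofRealHom.mapMatrix A := rfl
    rw [h5, ← map_pow, RingHom.mapMatrix_apply]
    rfl
  set i0 : Fin n := ⟨0, hn⟩
  set X := ∑ j, x j with hX'
  have hX : 0 < X := Finset.sum_pos (fun j _ => hx j) Finset.univ_nonempty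
  have hub : ∀ k : ℕ, ∑ j, (A ^ k) i0 j * x j ≤ ‖Mc ^ k‖ * X := by
    intro k
    rw [hX', Finset.mul_sum]
    refine Finset.sum_le_sum fun j _ => mul_le_mul_of_nonneg_right ?_ (hx j).le
    calc (A ^ k) i0 j ≤ |(A ^ k) i0 j| := le_abs_self _
    _ ≤ ‖(A ^ k).map Complex.ofReal‖ := entry_le_norm _ _ _
    _ = ‖Mc ^ k‖ := by rw [hmp k]
  have habs : |r'/lam| < 1 := by
    rw [abs_of_nonneg (div_nonneg hr'0 h0.le)]
    exact (div_lt_one h0).mpr hr'lt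
  have htend : Tendsto (fun k : ℕ => (r'/lam) ^ k * X) atTop (𝓝 0) := by
    simpa using (tendsto_pow_atTop_nhds_zero_of_abs_lt_one habs).mul_const X
  have hev3 : ∀ᶠ k : ℕ in atTop, (r'/lam) ^ k * X < x i0 := htend.eventually_lt_const (hx i0)
  obtain ⟨k, hk2, hk3⟩ := (hev2.and hev3).exists
  have hchain : lam ^ k * x i0 ≤ r' ^ k * X :=
    le_trans (hpow k i0) (le_trans (hub k) (mul_le_mul_of_nonneg_right hk2 hX.le))
  have hfin : x i0 ≤ (r'/lam) ^ k * X := by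
    rw [div_pow]
    rw [div_mul_eq_mul_div, le_div_iff₀ (pow_pos h0 k)]
    linarith [hchain]
  linarith [hfin, hk3]

theorem stmt4 {n : ℕ} (hn : 0 < n) (A : Matrix (Fin n) (Fin n) ℝ)
    (hA : ∀ i j, 0 ≤ A i j) (hr : ∀ i, 0 < rowSum A i)
    (m : Fin n → ℝ) (σ : Equiv.Perm (Fin n)) (hm : ∀ i, m i = avg2 A (σ i))
    (hmono : Antitone m) (S T c : ℝ)
    (hS : ∀ i, S ≤ A i i) (hS' : ∃ i, A i i = S)
    (hT : ∀ i j, i ≠ j → T ≤ A i j) (hT' : ∃ i j, i ≠ j ∧ A i j = T)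
    (hc : ∀ i j, c ≤ rowSum A j / rowSum A i)
    (hc' : ∃ i j, rowSum A j / rowSum A i = c) :
    (m (⟨n - 1, Nat.sub_lt hn Nat.one_pos⟩ : Fin n) + S - T * c +
      Real.sqrt ((m (⟨n - 1, Nat.sub_lt hn Nat.one_pos⟩ : Fin n) - S + T * c) ^ 2 +
        4 * T * c * ∑ i ∈ Finset.univ.filter
            (fun i => i < (⟨n - 1, Nat.sub_lt hn Nat.one_pos⟩ : Fin n)),
          (m i - m (⟨n - 1, Nat.sub_lt hn Nat.one_pos⟩ : Fin n)))) / 2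
      ≤ specRad A := by
  set last : Fin n := ⟨n - 1, Nat.sub_lt hn Nat.one_pos⟩ with hlastdef
  set Mn : ℝ := m last with hMndef
  -- basic positivity facts
  have hT0 : 0 ≤ T := by
    obtain ⟨i, j, hij, hTeq⟩ := hT'
    exact hTeq ▸ hA i j
  have hc0 : 0 < c := by
    obtain ⟨i, j, hceq⟩ := hc'
    exact hceq ▸ div_pos (hr j) (hr i)
  set t : ℝ := T * c with htdef
  have ht0 : 0 ≤ t := mul_nonneg hT0 hc0.le
  -- every index is ≤ last
  have hle_last : ∀ i : Fin n, i ≤ last := by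
    intro i
    exact Fin.mk_le_of_le_val (Nat.le_pred_of_lt i.isLt)
  have hM_ge : ∀ j, Mn ≤ avg2 A j := by
    intro j
    have h1 := hmono (hle_last (σ.symm j))
    rwa [hm (σ.symm j), Equiv.apply_symm_apply] at h1
  -- row sum identity
  have hsum_eq : ∀ j, ∑ k, A j k * rowSum A k = avg2 A j * rowSum A j := by
    intro j
    rw [avg2, div_mul_cancel₀ _ (hr j).ne']
  have hdiag_le : ∀ j, A j j ≤ avg2 A j := by
    intro j
    have h1 : A j j * rowSum A j ≤ ∑ k, A j k * rowSum A k :=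
      Finset.single_le_sum (f := fun k => A j k * rowSum A k)
        (fun k _ => mul_nonneg (hA j k) (hr k).le) (Finset.mem_univ j)
    rw [hsum_eq j] at h1
    exact le_of_mul_le_mul_right h1 (hr j)
  have hSMn : S ≤ Mn := by
    have h1 := hS (σ last)
    have h2 := hdiag_le (σ last)
    rw [hMndef, hm last]
    linarith
  -- the sum rewrite
  set Sig : ℝ := ∑ j, (avg2 A j - Mn) with hSigdef
  have hSig0 : 0 ≤ Sig :=
    Finset.sum_nonneg fun j _ => sub_nonneg.mpr (hM_ge j)
  have hfilter : ∑ i ∈ Finset.univ.filter (fun i => i < last), (m i - Mn) = Sig := by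
    have h1 : ∑ i ∈ Finset.univ.filter (fun i => i < last), (m i - Mn)
        = ∑ i, (m i - Mn) := by
      refine Finset.sum_subset (Finset.filter_subset _ _) ?_
      intro x _ hx
      have hxl : ¬ x < last := by simpa using hx
      have : x = last := le_antisymm (hle_last x) (not_lt.mp hxl)
      rw [this, hMndef, sub_self]
    rw [h1]
    have h2 : ∀ i, m i - Mn = (fun j => avg2 A j - Mn) (σ i) := by
      intro i; rw [hm i]
    rw [Finset.sum_congr rfl (fun i _ => h2 i)]
    exact Equiv.sum_comp σ (fun j => avg2 A j - Mn)
  rw [hfilter]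
  -- abbreviations
  set q : ℝ := Real.sqrt ((Mn - S + t) ^ 2 + 4 * t * Sig) with hqdef
  have hgoal_eq : Real.sqrt ((Mn - S + T * c) ^ 2 + 4 * T * c * Sig) = q := by
    rw [hqdef]; congr 1; ring
  rw [hgoal_eq]
  set ψ : ℝ := (Mn + S - t + q) / 2 with hψdef
  have harg0 : 0 ≤ (Mn - S + t) ^ 2 + 4 * t * Sig := by positivity
  have hq2 : q ^ 2 = (Mn - S + t) ^ 2 + 4 * t * Sig := Real.sq_sqrt harg0
  have hqabs : |Mn - S + t| ≤ q := by
    rw [← Real.sqrt_sq_eq_abs, hqdef]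
    exact Real.sqrt_le_sqrt (by nlinarith)
  set d : ℝ := (Mn - S + t + q) / 2 with hddef
  have hd0 : 0 ≤ d := by
    have := neg_abs_le (Mn - S + t)
    rw [hddef]; have := hqabs; cases abs_cases (Mn - S + t) with
    | inl h => linarith [h.1]
    | inr h => linarith [h.1]
  have hd' : ψ - S + t = d := by rw [hψdef, hddef]; ring
  have hid : (ψ - Mn) * d = t * Sig := by
    have h1 : (ψ - Mn) * d = (q ^ 2 - (Mn - S + t) ^ 2) / 4 := by
      rw [hψdef, hddef]; ring
    rw [h1, hq2]; ring
  show ψ ≤ specRad A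
  rcases eq_or_lt_of_le hd0 with hdz | hdpos
  · -- degenerate case: d = 0, ψ = S - t ≤ Mn
    have hq_eq : q = -(Mn - S + t) := by rw [hddef] at hdz; linarith
    have hψ_eq : ψ = S - t := by rw [hψdef, hq_eq]; ring
    have hψMn : ψ ≤ Mn := by rw [hψ_eq]; linarith
    have hkey : Mn ≤ specRad A := by
      refine key hn A hA (rowSum A) hr Mn ?_
      intro j
      rw [hsum_eq j]
      exact mul_le_mul_of_nonneg_right (hM_ge j) (hr j).le
    linarith
  · -- main case: d > 0
    set x : Fin n → ℝ := fun j => rowSum A j * (1 + (avg2 A j - Mn) / d) with hxdef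
    have hx : ∀ j, 0 < x j := by
      intro j
      have h1 : 0 ≤ (avg2 A j - Mn) / d := div_nonneg (sub_nonneg.mpr (hM_ge j)) hd0
      exact mul_pos (hr j) (by linarith)
    refine key hn A hA x hx ψ ?_
    intro j
    set Mj : ℝ := avg2 A j with hMjdef
    have hMj0 : Mn ≤ Mj := hM_ge j
    -- lower bound for the weighted sum
    set W : ℝ := ∑ k, A j k * rowSum A k * (avg2 A k - Mn) with hWdef
    have hlow : rowSum A j * (S * (Mj - Mn) + t * (Sig - (Mj - Mn))) ≤ W := by
      have hterm : ∀ k ∈ Finset.univ.erase j,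
          t * rowSum A j * (avg2 A k - Mn) ≤ A j k * rowSum A k * (avg2 A k - Mn) := by
        intro k hk
        have hkj : k ≠ j := Finset.ne_of_mem_erase hk
        have h1 : T ≤ A j k := hT j k (Ne.symm hkj)
        have h2 : c * rowSum A j ≤ rowSum A k := by
          have := hc j k
          rwa [le_div_iff₀ (hr j)] at this
        have h3 : t * rowSum A j ≤ A j k * rowSum A k := by
          calc t * rowSum A j = T * (c * rowSum A j) := by rw [htdef]; ring
          _ ≤ A j k * rowSum A k :=
            mul_le_mul h1 h2 (mul_nonneg hc0.le (hr j).le) (hA j k)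
        exact mul_le_mul_of_nonneg_right h3 (sub_nonneg.mpr (hM_ge k))
      have hdiag : S * rowSum A j * (Mj - Mn) ≤ A j j * rowSum A j * (Mj - Mn) :=
        mul_le_mul_of_nonneg_right
          (mul_le_mul_of_nonneg_right (hS j) (hr j).le) (sub_nonneg.mpr hMj0)
      have hsplit : W = A j j * rowSum A j * (Mj - Mn)
          + ∑ k ∈ Finset.univ.erase j, A j k * rowSum A k * (avg2 A k - Mn) := by
        rw [hWdef]
        exact (Finset.add_sum_erase _ _ (Finset.mem_univ j)).symm
      have herase : ∑ k ∈ Finset.univ.erase j, (avg2 A k - Mn) = Sig - (Mj - Mn) := by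
        rw [hSigdef, Finset.sum_erase_eq_sub (Finset.mem_univ j)]
      have h4 : t * rowSum A j * (Sig - (Mj - Mn))
          ≤ ∑ k ∈ Finset.univ.erase j, A j k * rowSum A k * (avg2 A k - Mn) := by
        calc t * rowSum A j * (Sig - (Mj - Mn))
            = ∑ k ∈ Finset.univ.erase j, t * rowSum A j * (avg2 A k - Mn) := by
              rw [← Finset.mul_sum, herase]
        _ ≤ _ := Finset.sum_le_sum hterm
      rw [hsplit]
      calc rowSum A j * (S * (Mj - Mn) + t * (Sig - (Mj - Mn)))
          = S * rowSum A j * (Mj - Mn) + t * rowSum A j * (Sig - (Mj - Mn)) := by ring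
      _ ≤ _ := add_le_add hdiag h4
    -- expand the sum
    have hexpand : ∑ k, A j k * x k = Mj * rowSum A j + W / d := by
      have h1 : ∀ k, A j k * x k
          = A j k * rowSum A k + (A j k * rowSum A k * (avg2 A k - Mn)) / d := by
        intro k
        rw [hxdef]
        field_simp
      rw [Finset.sum_congr rfl (fun k _ => h1 k), Finset.sum_add_distrib,
        ← Finset.sum_div, hsum_eq j, ← hWdef, ← hMjdef]
    rw [hexpand]
    -- the key algebraic identity
    have heq2 : Mj * rowSum A j * d + rowSum A j * (S * (Mj - Mn) + t * (Sig - (Mj - Mn)))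
        = ψ * rowSum A j * d + ψ * rowSum A j * (Mj - Mn) := by
      linear_combination (-(rowSum A j)) * hid + (-(rowSum A j) * (Mj - Mn)) * hd'
    have hψx : ψ * x j = (ψ * rowSum A j * d + ψ * rowSum A j * (Mj - Mn)) / d := by
      rw [hxdef]
      field_simp
      ring
    rw [hψx]
    rw [div_le_iff₀ hdpos]
    have hW : rowSum A j * (S * (Mj - Mn) + t * (Sig - (Mj - Mn))) ≤ W := hlow
    calc ψ * rowSum A j * d + ψ * rowSum A j * (Mj - Mn)
        = Mj * rowSum A j * d + rowSum A j * (S * (Mj - Mn) + t * (Sig - (Mj - Mn))) :=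
          heq2.symm
    _ ≤ Mj * rowSum A j * d + W := by linarith
    _ = (Mj * rowSum A j + W / d) * d := by field_simp
end

section
/- With notation as in the upper-bound theorem (m_1 ≥ ... ≥ m_n, M the largest diagonal entry, N > 0 the largest off-diagonal entry, b the maximum ratio of row sums, and φ_l = (m_l + M − Nb + √((m_l − M + Nb)² + 4Nb Σ_{i=1}^{l−1}(m_i − m_l)))/2): if Σ_{i=1}^l m_i ≥ l(Nbl + M − Nb) then φ_l ≥ φ_{l+1}, and if Σ_{i=1}^l m_i < l(Nbl + M − Nb) then φ_l ≤ φ_{l+1}. -/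
open BigOperators Finset

lemma le_phi' (a M N b s x : ℝ) (hs : 0 ≤ N * b * s)
    (h : (x - a) * (x - (M - N * b)) ≤ N * b * s) :
    x ≤ (a + M - N * b + Real.sqrt ((a - M + N * b) ^ 2 + 4 * N * b * s)) / 2 := by
  rcases le_or_gt (2 * x) (a + M - N * b) with h2 | h2
  · have := Real.sqrt_nonneg ((a - M + N * b) ^ 2 + 4 * N * b * s)
    linarith
  · have h3 : (2 * x - (a + M - N * b)) ^ 2 ≤ (a - M + N * b) ^ 2 + 4 * N * b * s := by
      nlinarith
    have h4 : 2 * x - (a + M - N * b) ≤ Real.sqrt ((a - M + N * b) ^ 2 + 4 * N * b * s) := by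
      calc 2 * x - (a + M - N * b)
          = Real.sqrt ((2 * x - (a + M - N * b)) ^ 2) := (Real.sqrt_sq (by linarith)).symm
        _ ≤ _ := Real.sqrt_le_sqrt h3
    linarith

lemma phi_le' (a M N b s x : ℝ) (h : N * b * s ≤ (x - a) * (x - (M - N * b)))
    (h2 : a + M - N * b ≤ 2 * x) :
    (a + M - N * b + Real.sqrt ((a - M + N * b) ^ 2 + 4 * N * b * s)) / 2 ≤ x := by
  have h3 : (a - M + N * b) ^ 2 + 4 * N * b * s ≤ (2 * x - (a + M - N * b)) ^ 2 := by
    nlinarith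
  have h4 := Real.sqrt_le_sqrt h3
  rw [Real.sqrt_sq (by linarith)] at h4
  linarith

lemma phi_root' (a M N b s : ℝ) (hs : 0 ≤ N * b * s) :
    ((a + M - N * b + Real.sqrt ((a - M + N * b) ^ 2 + 4 * N * b * s)) / 2 - a) *
      ((a + M - N * b + Real.sqrt ((a - M + N * b) ^ 2 + 4 * N * b * s)) / 2 - (M - N * b))
      = N * b * s := by
  have hD : 0 ≤ (a - M + N * b) ^ 2 + 4 * N * b * s := by nlinarith [sq_nonneg (a - M + N * b)]
  have hq := Real.sq_sqrt hD
  linear_combination hq / 4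

theorem stmt5 (n l : ℕ) (hl1 : 1 ≤ l) (hln : l + 1 ≤ n) (m : ℕ → ℝ)
    (hmono : ∀ i j, 1 ≤ i → i ≤ j → j ≤ n → m j ≤ m i)
    (M N b : ℝ) (hN : 0 < N) (hb : 0 < b) :
    ((l : ℝ) * (N * b * l + M - N * b) ≤ ∑ i ∈ Finset.Icc 1 l, m i →
      (m (l + 1) + M - N * b +
        Real.sqrt ((m (l + 1) - M + N * b) ^ 2 +
          4 * N * b * ∑ i ∈ Finset.Icc 1 l, (m i - m (l + 1)))) / 2 ≤
      (m l + M - N * b +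
        Real.sqrt ((m l - M + N * b) ^ 2 +
          4 * N * b * ∑ i ∈ Finset.Icc 1 (l - 1), (m i - m l))) / 2) ∧
    (∑ i ∈ Finset.Icc 1 l, m i < (l : ℝ) * (N * b * l + M - N * b) →
      (m l + M - N * b +
        Real.sqrt ((m l - M + N * b) ^ 2 +
          4 * N * b * ∑ i ∈ Finset.Icc 1 (l - 1), (m i - m l))) / 2 ≤
      (m (l + 1) + M - N * b +
        Real.sqrt ((m (l + 1) - M + N * b) ^ 2 +
          4 * N * b * ∑ i ∈ Finset.Icc 1 l, (m i - m (l + 1)))) / 2) := by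
  obtain ⟨k, rfl⟩ : ∃ k, l = k + 1 := ⟨l - 1, by omega⟩
  simp only [Nat.add_sub_cancel]
  have hNb : 0 < N * b := mul_pos hN hb
  -- basic monotonicity facts
  have hml : m (k + 1 + 1) ≤ m (k + 1) := hmono (k + 1) (k + 1 + 1) (by omega) (by omega) (by omega)
  have hmi1 : ∀ i ∈ Finset.Icc 1 (k + 1), m (k + 1) ≤ m i := by
    intro i hi
    rw [Finset.mem_Icc] at hi
    exact hmono i (k + 1) hi.1 hi.2 (by omega)
  -- sum facts
  have hcard : (Finset.Icc 1 (k + 1)).card = k + 1 := by rw [Nat.card_Icc]; omega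
  have hcard' : (Finset.Icc 1 k).card = k := by rw [Nat.card_Icc]; omega
  have hsplit : ∑ i ∈ Finset.Icc 1 (k + 1), m i = (∑ i ∈ Finset.Icc 1 k, m i) + m (k + 1) :=
    Finset.sum_Icc_succ_top (by omega) m
  have hS1 : ∑ i ∈ Finset.Icc 1 k, (m i - m (k + 1))
      = (∑ i ∈ Finset.Icc 1 (k + 1), m i) - ((k : ℝ) + 1) * m (k + 1) := by
    rw [Finset.sum_sub_distrib, Finset.sum_const, hcard', hsplit, nsmul_eq_mul]
    push_cast
    ring
  have hS2 : ∑ i ∈ Finset.Icc 1 (k + 1), (m i - m (k + 1 + 1))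
      = (∑ i ∈ Finset.Icc 1 (k + 1), m i) - ((k : ℝ) + 1) * m (k + 1 + 1) := by
    rw [Finset.sum_sub_distrib, Finset.sum_const, hcard, nsmul_eq_mul]
    push_cast
    ring
  have hT1 : ((k : ℝ) + 1) * m (k + 1) ≤ ∑ i ∈ Finset.Icc 1 (k + 1), m i := by
    have h := Finset.sum_le_sum hmi1
    rw [Finset.sum_const, hcard, nsmul_eq_mul] at h
    push_cast at h
    linarith
  have hS1nn : 0 ≤ N * b * ∑ i ∈ Finset.Icc 1 k, (m i - m (k + 1)) := by
    rw [hS1]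
    have : 0 ≤ (∑ i ∈ Finset.Icc 1 (k + 1), m i) - ((k : ℝ) + 1) * m (k + 1) := by linarith
    positivity
  have hS2nn : 0 ≤ N * b * ∑ i ∈ Finset.Icc 1 (k + 1), (m i - m (k + 1 + 1)) := by
    rw [hS2]
    have hk1 : (0 : ℝ) < (k : ℝ) + 1 := by positivity
    have : 0 ≤ (∑ i ∈ Finset.Icc 1 (k + 1), m i) - ((k : ℝ) + 1) * m (k + 1 + 1) := by nlinarith
    positivity
  constructor
  · -- case Σ m_i ≥ l K : φ_{l+1} ≤ φ_l
    intro h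
    push_cast at h
    -- K ≤ φ_{l+1}
    have hKφ2 : N * b * ((k : ℝ) + 1) + (M - N * b) ≤
        (m (k + 1 + 1) + M - N * b + Real.sqrt ((m (k + 1 + 1) - M + N * b) ^ 2 +
          4 * N * b * ∑ i ∈ Finset.Icc 1 (k + 1), (m i - m (k + 1 + 1)))) / 2 := by
      apply le_phi' _ _ _ _ _ _ hS2nn
      rw [hS2]
      nlinarith
    have root2 := phi_root' (m (k + 1 + 1)) M N b
        (∑ i ∈ Finset.Icc 1 (k + 1), (m i - m (k + 1 + 1))) hS2nn
    set φ2 := (m (k + 1 + 1) + M - N * b + Real.sqrt ((m (k + 1 + 1) - M + N * b) ^ 2 +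
        4 * N * b * ∑ i ∈ Finset.Icc 1 (k + 1), (m i - m (k + 1 + 1)))) / 2 with hφ2
    apply le_phi' _ _ _ _ _ _ hS1nn
    rw [hS1]
    rw [hS2] at root2
    nlinarith [mul_nonneg (sub_nonneg.2 hml) (sub_nonneg.2 hKφ2)]
  · -- case Σ m_i < l K : φ_l ≤ φ_{l+1}
    intro h
    push_cast at h
    have hk1 : (0 : ℝ) < (k : ℝ) + 1 := by positivity
    -- φ_l ≤ K
    have hφ1K : (m (k + 1) + M - N * b + Real.sqrt ((m (k + 1) - M + N * b) ^ 2 +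
          4 * N * b * ∑ i ∈ Finset.Icc 1 k, (m i - m (k + 1)))) / 2
        ≤ N * b * ((k : ℝ) + 1) + (M - N * b) := by
      apply phi_le'
      · rw [hS1]
        nlinarith
      · -- m (k+1) + M - N b ≤ 2 K
        have hm1K : m (k + 1) ≤ N * b * ((k : ℝ) + 1) + (M - N * b) := by nlinarith
        nlinarith
    have root1 := phi_root' (m (k + 1)) M N b
        (∑ i ∈ Finset.Icc 1 k, (m i - m (k + 1))) hS1nn
    set φ1 := (m (k + 1) + M - N * b + Real.sqrt ((m (k + 1) - M + N * b) ^ 2 +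
        4 * N * b * ∑ i ∈ Finset.Icc 1 k, (m i - m (k + 1)))) / 2 with hφ1
    apply le_phi' _ _ _ _ _ _ hS2nn
    rw [hS2]
    rw [hS1] at root1
    nlinarith [mul_nonneg (sub_nonneg.2 hml) (sub_nonneg.2 hφ1K)]
end

section
/- Let A = (a_{ij}) be an n×n nonnegative matrix with positive row sums, M its largest diagonal entry, N its largest off-diagonal entry, and b = max_{i,j} r_j(A)/r_i(A). Then Σ_{i=1}^n m_i(A) ≤ n(Nbn + M − Nb), with equality if and only if A = M·I_n + (N − M)·J_n (i.e., every diagonal entry equals M and every off-diagonal entry equals N and all row-sum ratios equal b). -/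
open Matrix BigOperators Finset

theorem stmt6 {n : ℕ} (A : Matrix (Fin n) (Fin n) ℝ)
    (hA : ∀ i j, 0 ≤ A i j) (hr : ∀ i, 0 < rowSum A i) (M N b : ℝ)
    (hM : ∀ i, A i i ≤ M) (hM' : ∃ i, A i i = M)
    (hN : ∀ i j, i ≠ j → A i j ≤ N) (hN' : ∃ i j, i ≠ j ∧ A i j = N)
    (hb : ∀ i j, rowSum A j / rowSum A i ≤ b)
    (hb' : ∃ i j, rowSum A j / rowSum A i = b) :
    (∑ i, avg2 A i) ≤ n * (N * b * n + M - N * b) ∧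
    ((∑ i, avg2 A i) = n * (N * b * n + M - N * b) ↔
      (∀ i, A i i = M) ∧ (∀ i j, i ≠ j → A i j = N) ∧
        (∀ i j, rowSum A j / rowSum A i = b)) := by
  obtain ⟨i0, j0, hij0, hNval⟩ := hN'
  have hnt : Nontrivial (Fin n) := ⟨i0, j0, hij0⟩
  have hn : 1 < n := by simpa using Fintype.one_lt_card (α := Fin n)
  have hb1 : (1 : ℝ) ≤ b := by
    have h := hb i0 i0
    rwa [div_self (hr i0).ne'] at h
  have hb0 : (0 : ℝ) < b := lt_of_lt_of_le one_pos hb1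
  have hN0 : 0 ≤ N := hNval ▸ hA i0 j0
  obtain ⟨iM, hMval⟩ := hM'
  have hM0 : 0 ≤ M := hMval ▸ hA iM iM
  set C : ℝ := M + ((n : ℝ) - 1) * (N * b) with hC
  have hcast : ((n - 1 : ℕ) : ℝ) = (n : ℝ) - 1 := by
    rw [Nat.cast_sub hn.le]; norm_num
  have hle1 : ∀ i k, k ≠ i → A i k * rowSum A k ≤ N * b * rowSum A i := by
    intro i k hk
    have h1 : A i k ≤ N := hN i k (Ne.symm hk)
    have h2 : rowSum A k ≤ b * rowSum A i := by
      have := hb i k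
      rwa [div_le_iff₀ (hr i)] at this
    calc A i k * rowSum A k ≤ N * (b * rowSum A i) :=
          mul_le_mul h1 h2 (hr k).le hN0
      _ = N * b * rowSum A i := by ring
  have hsum_le : ∀ i, ∑ k, A i k * rowSum A k ≤ C * rowSum A i := by
    intro i
    have hsplit : ∑ k, A i k * rowSum A k
        = A i i * rowSum A i + ∑ k ∈ univ.erase i, A i k * rowSum A k :=
      (Finset.add_sum_erase _ _ (mem_univ i)).symm
    have h1 : A i i * rowSum A i ≤ M * rowSum A i :=
      mul_le_mul_of_nonneg_right (hM i) (hr i).le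
    have h2 : ∑ k ∈ univ.erase i, A i k * rowSum A k
        ≤ ∑ _k ∈ univ.erase i, N * b * rowSum A i :=
      Finset.sum_le_sum fun k hk => hle1 i k (Finset.ne_of_mem_erase hk)
    have h3 : ∑ _k ∈ univ.erase i, N * b * rowSum A i
        = ((n : ℝ) - 1) * (N * b * rowSum A i) := by
      rw [Finset.sum_const, Finset.card_erase_of_mem (mem_univ i)]
      simp [nsmul_eq_mul, hcast]
    rw [hsplit]
    calc A i i * rowSum A i + ∑ k ∈ univ.erase i, A i k * rowSum A k
        ≤ M * rowSum A i + ((n : ℝ) - 1) * (N * b * rowSum A i) := by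
          rw [← h3]; exact add_le_add h1 h2
      _ = C * rowSum A i := by rw [hC]; ring
  have havg_le : ∀ i, avg2 A i ≤ C := by
    intro i
    rw [avg2, div_le_iff₀ (hr i)]
    exact hsum_le i
  have hRHS : (n : ℝ) * (N * b * n + M - N * b) = (n : ℝ) * C := by
    rw [hC]; ring
  have hCsum : ∑ _i : Fin n, C = (n : ℝ) * C := by
    simp [Finset.sum_const]
  constructor
  · calc ∑ i, avg2 A i ≤ ∑ _i : Fin n, C := Finset.sum_le_sum fun i _ => havg_le i
      _ = (n : ℝ) * (N * b * n + M - N * b) := by rw [hCsum, hRHS]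
  constructor
  · intro heq
    have hsum : ∑ i, avg2 A i = ∑ _i : Fin n, C := by rw [heq, hRHS, hCsum]
    have hall := (Finset.sum_eq_sum_iff_of_le (fun i _ => havg_le i)).mp hsum
    have hrow : ∀ i k, A i k * rowSum A k
        = (if k = i then M * rowSum A i else N * b * rowSum A i) := by
      intro i
      have h2 := hall i (mem_univ i)
      have h1 : ∑ k, A i k * rowSum A k = C * rowSum A i := by
        rw [avg2, div_eq_iff (hr i).ne'] at h2
        exact h2
      have hgsum : ∑ k, (if k = i then M * rowSum A i else N * b * rowSum A i)
          = C * rowSum A i := by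
        rw [← Finset.add_sum_erase _ _ (mem_univ i), if_pos rfl]
        have : ∑ k ∈ univ.erase i,
            (if k = i then M * rowSum A i else N * b * rowSum A i)
            = ∑ _k ∈ univ.erase i, N * b * rowSum A i :=
          Finset.sum_congr rfl fun k hk => if_neg (Finset.ne_of_mem_erase hk)
        rw [this, Finset.sum_const, Finset.card_erase_of_mem (mem_univ i)]
        simp only [card_univ, Fintype.card_fin, nsmul_eq_mul, hcast]
        rw [hC]; ring
      have hle : ∀ k ∈ univ, A i k * rowSum A k
          ≤ (if k = i then M * rowSum A i else N * b * rowSum A i) := by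
        intro k _
        split_ifs with hki
        · subst hki
          exact mul_le_mul_of_nonneg_right (hM k) (hr k).le
        · exact hle1 i k hki
      have := (Finset.sum_eq_sum_iff_of_le hle).mp (h1.trans hgsum.symm)
      intro k; exact this k (mem_univ k)
    have hdiag : ∀ i, A i i = M := by
      intro i
      have := hrow i i
      rw [if_pos rfl] at this
      exact mul_right_cancel₀ (hr i).ne' this
    have hoff : ∀ i k, k ≠ i → A i k * rowSum A k = N * b * rowSum A i := by
      intro i k hk
      have := hrow i k
      rwa [if_neg hk] at this
    rcases eq_or_lt_of_le hN0 with hNz | hNpos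
    · -- N = 0 case
      have hoffz : ∀ i j, i ≠ j → A i j = 0 := by
        intro i j hij
        have h := hoff i j (Ne.symm hij)
        rw [← hNz] at h
        simp only [zero_mul] at h
        exact (mul_eq_zero.mp h).resolve_right (hr j).ne'
      have hri : ∀ i, rowSum A i = M := by
        intro i
        rw [rowSum, ← Finset.add_sum_erase _ _ (mem_univ i), hdiag i]
        have : ∑ k ∈ univ.erase i, A i k = 0 :=
          Finset.sum_eq_zero fun k hk => hoffz i k (Ne.symm (Finset.ne_of_mem_erase hk))
        rw [this, add_zero]
      have hMpos : (0 : ℝ) < M := by rw [← hri i0]; exact hr i0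
      have hbone : b = 1 := by
        obtain ⟨i1, j1, hbv⟩ := hb'
        rw [hri, hri, div_self hMpos.ne'] at hbv
        exact hbv.symm
      refine ⟨hdiag, fun i j hij => by rw [hoffz i j hij, ← hNz], fun i j => ?_⟩
      rw [hri, hri, div_self hMpos.ne', hbone]
    · -- N > 0 case
      have hrk : ∀ i k, k ≠ i → rowSum A k = b * rowSum A i := by
        intro i k hk
        have heqk := hoff i k hk
        have h1 : A i k * rowSum A k ≤ N * rowSum A k :=
          mul_le_mul_of_nonneg_right (hN i k (Ne.symm hk)) (hr k).le
        have h2 : rowSum A k ≤ b * rowSum A i := by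
          have := hb i k
          rwa [div_le_iff₀ (hr i)] at this
        have h3 : N * rowSum A k ≤ N * (b * rowSum A i) :=
          mul_le_mul_of_nonneg_left h2 hN0
        have h4 : N * (b * rowSum A i) ≤ N * rowSum A k := by
          calc N * (b * rowSum A i) = N * b * rowSum A i := by ring
            _ = A i k * rowSum A k := heqk.symm
            _ ≤ N * rowSum A k := h1
        have h5 : N * rowSum A k = N * (b * rowSum A i) := le_antisymm h3 h4
        exact mul_left_cancel₀ hNpos.ne' h5
      have ha := hrk i0 j0 (Ne.symm hij0)
      have hb2 := hrk j0 i0 hij0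
      have hbb : b * b = 1 := by
        have h3 : rowSum A j0 * (b * b - 1) = 0 := by
          rw [hb2] at ha; nlinarith [ha]
        rcases mul_eq_zero.mp h3 with h | h
        · exact absurd h (hr j0).ne'
        · linarith
      have hbone : b = 1 := by nlinarith [hb1]
      have hAoff : ∀ i j, i ≠ j → A i j = N := by
        intro i j hij
        have h1 := hoff i j (Ne.symm hij)
        rw [hrk i j (Ne.symm hij)] at h1
        have hpos : (0 : ℝ) < b * rowSum A i := mul_pos hb0 (hr i)
        have : A i j * (b * rowSum A i) = N * (b * rowSum A i) := by
          rw [h1]; ring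
        exact mul_right_cancel₀ hpos.ne' this
      refine ⟨hdiag, hAoff, fun i j => ?_⟩
      by_cases hij : i = j
      · subst hij; rw [div_self (hr i).ne', hbone]
      · rw [div_eq_iff (hr i).ne']
        exact hrk i j (Ne.symm hij)
  · rintro ⟨h1, h2, h3⟩
    have hbone : b = 1 := by
      have := h3 i0 i0
      rw [div_self (hr i0).ne'] at this
      exact this.symm
    have hreq : ∀ i j, rowSum A j = rowSum A i := by
      intro i j
      have := h3 i j
      rw [hbone, div_eq_one_iff_eq (hr i).ne'] at this
      exact this
    have hri : ∀ i, rowSum A i = M + ((n : ℝ) - 1) * N := by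
      intro i
      rw [rowSum, ← Finset.add_sum_erase _ _ (mem_univ i), h1 i]
      have : ∑ k ∈ univ.erase i, A i k = ∑ _k ∈ univ.erase i, N :=
        Finset.sum_congr rfl fun k hk =>
          h2 i k (Ne.symm (Finset.ne_of_mem_erase hk))
      rw [this, Finset.sum_const, Finset.card_erase_of_mem (mem_univ i)]
      simp only [card_univ, Fintype.card_fin, nsmul_eq_mul, hcast]
    have havg : ∀ i, avg2 A i = M + ((n : ℝ) - 1) * N := by
      intro i
      have hnum : ∑ k, A i k * rowSum A k = rowSum A i * rowSum A i := by
        calc ∑ k, A i k * rowSum A k = ∑ k, A i k * rowSum A i :=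
              Finset.sum_congr rfl fun k _ => by rw [hreq i k]
          _ = (∑ k, A i k) * rowSum A i := by rw [Finset.sum_mul]
          _ = rowSum A i * rowSum A i := by rw [← rowSum]
      rw [avg2, hnum, mul_div_assoc, div_self (hr i).ne', mul_one, hri]
    rw [Finset.sum_congr rfl fun i _ => havg i, Finset.sum_const]
    simp only [card_univ, Fintype.card_fin, nsmul_eq_mul]
    rw [hbone]; ring
end

section
/- Let G be a graph on n ≥ 2 vertices without isolated vertices, with average 2-degrees m_1 ≥ ... ≥ m_n, maximum degree d_max, and minimum degree d_min. Then for each 1 ≤ l ≤ n, the spectral radius of the adjacency matrix satisfies ρ(A(G)) ≤ (m_l − d_max/d_min + √((m_l + d_max/d_min)² + 4(d_max/d_min) Σ_{i=1}^{l−1}(m_i − m_l)))/2. -/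
open Matrix BigOperators Finset

lemma specRad_le_of_mulVec {n : ℕ} (A : Matrix (Fin n) (Fin n) ℝ)
    (hA : ∀ i j, 0 ≤ A i j) (v : Fin n → ℝ) (hv : ∀ i, 0 < v i)
    (ρ₀ : ℝ) (hρ : 0 ≤ ρ₀) (h : ∀ i, A.mulVec v i ≤ ρ₀ * v i) :
    specRad A ≤ ρ₀ := by
  apply Real.sSup_le _ hρ
  rintro x ⟨μ, hμ, rfl⟩
  rw [spectrum.mem_iff] at hμ
  rw [Matrix.isUnit_iff_isUnit_det, isUnit_iff_ne_zero, not_not] at hμ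
  obtain ⟨y, hy0, hy⟩ := Matrix.exists_mulVec_eq_zero_iff.mpr hμ
  have halg : ((algebraMap ℂ (Matrix (Fin n) (Fin n) ℂ)) μ) *ᵥ y = μ • y := by
    rw [Algebra.algebraMap_eq_smul_one, Matrix.smul_mulVec, Matrix.one_mulVec]
  have heig : ∀ i, (A.map Complex.ofReal).mulVec y i = μ * y i := by
    intro i
    have h2 := congrFun hy i
    rw [Matrix.sub_mulVec, halg] at h2
    have h3 : (μ • y) i - (A.map Complex.ofReal *ᵥ y) i = 0 := h2
    simp only [Pi.smul_apply, smul_eq_mul, sub_eq_zero] at h3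
    exact h3.symm
  obtain ⟨k, hk⟩ : ∃ k, y k ≠ 0 := Function.ne_iff.mp hy0
  obtain ⟨i₀, -, hmax⟩ := Finset.exists_max_image Finset.univ
    (fun i => ‖y i‖ / v i) ⟨k, Finset.mem_univ _⟩
  set c := ‖y i₀‖ / v i₀ with hc
  have hcpos : 0 < c := by
    have : 0 < ‖y k‖ / v k :=
      div_pos (by simpa using hk) (hv k)
    exact lt_of_lt_of_le this (hmax k (Finset.mem_univ k))
  have hyile : ∀ j, ‖y j‖ ≤ c * v j := by
    intro j
    have := hmax j (Finset.mem_univ j)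
    rw [div_le_iff₀ (hv j)] at this
    linarith [this]
  have hcv : c * v i₀ = ‖y i₀‖ := div_mul_cancel₀ _ (ne_of_gt (hv i₀))
  have hyipos : 0 < ‖y i₀‖ := by rw [← hcv]; exact mul_pos hcpos (hv i₀)
  have key : ‖μ‖ * ‖y i₀‖ ≤ ρ₀ * ‖y i₀‖ := by
    have h1 : ‖μ * y i₀‖ ≤ ∑ j, A i₀ j * ‖y j‖ := by
      rw [← heig i₀]
      refine le_trans (norm_sum_le (s := Finset.univ) (f := fun j => (A.map Complex.ofReal) i₀ j * y j)) ?_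
      refine Finset.sum_le_sum fun j _ => ?_
      simp [Matrix.map_apply, norm_mul, abs_of_nonneg (hA i₀ j)]
    have h2 : ∑ j, A i₀ j * ‖y j‖ ≤ c * (A.mulVec v i₀) := by
      rw [show A.mulVec v i₀ = ∑ j, A i₀ j * v j from rfl, Finset.mul_sum]
      refine Finset.sum_le_sum fun j _ => ?_
      calc A i₀ j * ‖y j‖ ≤ A i₀ j * (c * v j) :=
            mul_le_mul_of_nonneg_left (hyile j) (hA i₀ j)
        _ = c * (A i₀ j * v j) := by ring
    have h3 : c * (A.mulVec v i₀) ≤ c * (ρ₀ * v i₀) :=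
      mul_le_mul_of_nonneg_left (h i₀) (le_of_lt hcpos)
    calc ‖μ‖ * ‖y i₀‖ = ‖μ * y i₀‖ := (norm_mul _ _).symm
      _ ≤ ∑ j, A i₀ j * ‖y j‖ := h1
      _ ≤ c * (A.mulVec v i₀) := h2
      _ ≤ c * (ρ₀ * v i₀) := h3
      _ = ρ₀ * (c * v i₀) := by ring
      _ = ρ₀ * ‖y i₀‖ := by rw [hcv]
  exact le_of_mul_le_mul_right key hyipos

set_option maxHeartbeats 1000000 in
theorem stmt8 {n : ℕ} (hn : 2 ≤ n) (G : SimpleGraph (Fin n)) [DecidableRel G.Adj]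
    (hiso : ∀ v, 0 < G.degree v)
    (m : Fin n → ℝ) (σ : Equiv.Perm (Fin n))
    (hm : ∀ i, m i =
      (∑ j ∈ G.neighborFinset (σ i), (G.degree j : ℝ)) / (G.degree (σ i) : ℝ))
    (hmono : Antitone m) (dmax dmin : ℕ)
    (hdmax : ∀ v, G.degree v ≤ dmax) (hdmax' : ∃ v, G.degree v = dmax)
    (hdmin : ∀ v, dmin ≤ G.degree v) (hdmin' : ∃ v, G.degree v = dmin)
    (l : Fin n) :
    specRad (G.adjMatrix ℝ) ≤ (m l - (dmax : ℝ) / (dmin : ℝ) +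
      Real.sqrt ((m l + (dmax : ℝ) / (dmin : ℝ)) ^ 2 +
        4 * ((dmax : ℝ) / (dmin : ℝ)) *
          ∑ i ∈ Finset.univ.filter (fun i => i < l), (m i - m l))) / 2 := by
  classical
  set B : ℝ := (dmax : ℝ) / (dmin : ℝ) with hBdef
  set S : ℝ := ∑ i ∈ Finset.univ.filter (fun i => i < l), (m i - m l) with hSdef
  set ρ₀ : ℝ := (m l - B + Real.sqrt ((m l + B) ^ 2 + 4 * B * S)) / 2 with hρdef
  show specRad (G.adjMatrix ℝ) ≤ ρ₀
  -- basic positivity facts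
  have hdminpos : 0 < (dmin : ℝ) := by
    obtain ⟨w, hw⟩ := hdmin'
    have := hiso w; rw [hw] at this; exact_mod_cast this
  have hdmaxpos : 0 < (dmax : ℝ) := by
    obtain ⟨w, hw⟩ := hdmax'
    have := hiso w; rw [hw] at this; exact_mod_cast this
  have hBpos : 0 < B := div_pos hdmaxpos hdminpos
  have hS0 : 0 ≤ S := by
    apply Finset.sum_nonneg
    intro i hi
    rw [Finset.mem_filter] at hi
    have := hmono (le_of_lt hi.2)
    linarith
  have hml0 : 0 ≤ m l := by
    rw [hm l]
    apply div_nonneg _ (Nat.cast_nonneg _)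
    exact Finset.sum_nonneg fun j _ => Nat.cast_nonneg _
  have hD0 : (0:ℝ) ≤ (m l + B) ^ 2 + 4 * B * S := by positivity
  have hρml : m l ≤ ρ₀ := by
    have h1 : (m l + B) ≤ Real.sqrt ((m l + B) ^ 2 + 4 * B * S) := by
      have : Real.sqrt ((m l + B)^2) ≤ Real.sqrt ((m l + B) ^ 2 + 4 * B * S) := by
        apply Real.sqrt_le_sqrt; nlinarith
      rwa [Real.sqrt_sq (by positivity)] at this
    rw [hρdef]; linarith
  have hρ0 : 0 ≤ ρ₀ := le_trans hml0 hρml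
  have hX : (0:ℝ) < ρ₀ + B := by linarith
  have hkey : ρ₀ * (ρ₀ + B) = m l * (ρ₀ + B) + B * S := by
    have hsq : (2 * ρ₀ - (m l - B)) ^ 2 = (m l + B) ^ 2 + 4 * B * S := by
      have h2 : 2 * ρ₀ - (m l - B) = Real.sqrt ((m l + B) ^ 2 + 4 * B * S) := by
        rw [hρdef]; ring
      rw [h2, Real.sq_sqrt hD0]
    nlinarith [hsq]
  -- vertex quantities
  set d : Fin n → ℝ := fun i => (G.degree i : ℝ) with hddef
  have hd1 : ∀ i, (1:ℝ) ≤ d i := fun i => by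
    simp only [hddef]; exact_mod_cast hiso i
  have hdpos : ∀ i, (0:ℝ) < d i := fun i => lt_of_lt_of_le one_pos (hd1 i)
  have hdle : ∀ i, d i ≤ (dmax:ℝ) := fun i => by
    simp only [hddef]; exact_mod_cast hdmax i
  have hdge : ∀ i, (dmin:ℝ) ≤ d i := fun i => by
    simp only [hddef]; exact_mod_cast hdmin i
  set g : Fin n → ℝ := fun i => if σ.symm i < l then m (σ.symm i) - m l else 0 with hgdef
  have hg0 : ∀ i, 0 ≤ g i := by
    intro i
    simp only [hgdef]
    split
    · next h => have := hmono (le_of_lt h); linarith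
    · exact le_refl 0
  have hgS : ∀ i, g i ≤ S := by
    intro i
    simp only [hgdef]
    split
    · next h =>
      rw [hSdef]
      apply Finset.single_le_sum (f := fun k => m k - m l)
      · intro k hk
        rw [Finset.mem_filter] at hk
        have := hmono (le_of_lt hk.2); linarith
      · simp [h]
    · exact hS0
  have hMg : ∀ i, (∑ j ∈ G.neighborFinset i, d j) / d i ≤ m l + g i := by
    intro i
    have hmi : m (σ.symm i) = (∑ j ∈ G.neighborFinset i, d j) / d i := by
      have he : σ (σ.symm i) = i := σ.apply_symm_apply i
      rw [hm (σ.symm i), he]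
      try simp [hddef]
    simp only [hgdef]
    split
    · next h => rw [← hmi]; ring_nf; linarith
    · next h =>
      push_neg at h
      have := hmono h
      rw [← hmi]; linarith
  have hBd : ∀ i, (dmax:ℝ) ≤ B * d i := by
    intro i
    have h1 : B * (dmin:ℝ) = dmax := div_mul_cancel₀ _ (ne_of_gt hdminpos)
    calc (dmax:ℝ) = B * dmin := h1.symm
      _ ≤ B * d i := mul_le_mul_of_nonneg_left (hdge i) (le_of_lt hBpos)
  -- the test vector
  set v : Fin n → ℝ := fun i => (1 + g i / (ρ₀ + B)) * d i with hvdef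
  have hv : ∀ i, 0 < v i := by
    intro i
    apply mul_pos _ (hdpos i)
    have : 0 ≤ g i / (ρ₀ + B) := div_nonneg (hg0 i) (le_of_lt hX)
    linarith
  apply specRad_le_of_mulVec _ (fun i j => by simp [SimpleGraph.adjMatrix_apply]; split <;> norm_num) v hv ρ₀ hρ0
  intro i
  rw [SimpleGraph.adjMatrix_mulVec_apply]
  -- split the sum
  have hsplit : ∑ j ∈ G.neighborFinset i, v j =
      (∑ j ∈ G.neighborFinset i, d j) + (∑ j ∈ G.neighborFinset i, g j * d j) / (ρ₀ + B) := by
    rw [Finset.sum_div, ← Finset.sum_add_distrib]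
    apply Finset.sum_congr rfl
    intro j _
    simp only [hvdef]
    field_simp
  rw [hsplit]
  -- bound the correction sum
  have hcorr : ∑ j ∈ G.neighborFinset i, g j * d j ≤ (dmax:ℝ) * (S - g i) := by
    have hsub : G.neighborFinset i ⊆ Finset.univ.erase i := by
      intro j hj
      rw [SimpleGraph.mem_neighborFinset] at hj
      exact Finset.mem_erase.mpr ⟨hj.ne', Finset.mem_univ j⟩
    have h1 : ∑ j ∈ G.neighborFinset i, g j * d j ≤ ∑ j ∈ Finset.univ.erase i, g j * d j :=
      Finset.sum_le_sum_of_subset_of_nonneg hsub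
        (fun j _ _ => mul_nonneg (hg0 j) (le_of_lt (hdpos j)))
    have h2 : ∑ j ∈ Finset.univ.erase i, g j * d j ≤ ∑ j ∈ Finset.univ.erase i, g j * dmax :=
      Finset.sum_le_sum fun j _ => mul_le_mul_of_nonneg_left (hdle j) (hg0 j)
    have h3 : ∑ j ∈ Finset.univ.erase i, g j * (dmax:ℝ) = (∑ j ∈ Finset.univ.erase i, g j) * dmax := by
      rw [Finset.sum_mul]
    have hsumg : ∑ j, g j = S := by
      have e1 : ∑ j, g j = ∑ k, g (σ k) := (Equiv.sum_comp σ g).symm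
      have e2 : ∀ k, g (σ k) = if k < l then m k - m l else 0 := by
        intro k; simp [hgdef]
      rw [e1]
      simp_rw [e2]
      rw [hSdef, Finset.sum_filter]
    have h4 : ∑ j ∈ Finset.univ.erase i, g j = S - g i := by
      have := Finset.sum_erase_add Finset.univ g (Finset.mem_univ i)
      rw [hsumg] at this
      linarith
    calc ∑ j ∈ G.neighborFinset i, g j * d j
        ≤ ∑ j ∈ Finset.univ.erase i, g j * (dmax:ℝ) := le_trans h1 h2
      _ = (S - g i) * dmax := by rw [h3, h4]
      _ = (dmax:ℝ) * (S - g i) := by ring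
  -- main estimate
  have hMd : ∑ j ∈ G.neighborFinset i, d j ≤ (m l + g i) * d i := by
    have := hMg i
    rw [div_le_iff₀ (hdpos i)] at this
    linarith
  have hmain : (m l + g i) * d i + (dmax:ℝ) * (S - g i) / (ρ₀ + B) ≤ ρ₀ * v i := by
    have goal' : (m l + g i) * d i * (ρ₀ + B) + (dmax:ℝ) * (S - g i) ≤
        ρ₀ * ((ρ₀ + B) + g i) * d i := by
      have e1 : ρ₀ * (ρ₀ + B) * d i = m l * (ρ₀ + B) * d i + B * S * d i := by
        linear_combination d i * hkey
      have e2 : (dmax:ℝ) * (S - g i) ≤ (B * d i) * (S - g i) :=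
        mul_le_mul_of_nonneg_right (hBd i) (by linarith [hgS i])
      linarith [e1, e2]
    have h5 : ρ₀ * v i = ρ₀ * ((ρ₀ + B) + g i) * d i / (ρ₀ + B) := by
      simp only [hvdef]
      field_simp
      try ring
    have h6 : (m l + g i) * d i + (dmax:ℝ) * (S - g i) / (ρ₀ + B) =
        ((m l + g i) * d i * (ρ₀ + B) + (dmax:ℝ) * (S - g i)) / (ρ₀ + B) := by
      field_simp
      try ring
    rw [h5, h6]
    exact div_le_div_of_nonneg_right goal' hX.le
  have hdivle : (∑ j ∈ G.neighborFinset i, g j * d j) / (ρ₀ + B) ≤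
      (dmax:ℝ) * (S - g i) / (ρ₀ + B) := by
    exact div_le_div_of_nonneg_right hcorr hX.le
  linarith [hMd, hdivle, hmain]
end

section
/- Let G be a graph on n ≥ 2 vertices without isolated vertices, with signless Laplacian average 2-degrees m_1 ≥ ... ≥ m_n. Then for each 1 ≤ l ≤ n, ρ(Q(G)) ≤ (m_l + d_max − d_max/d_min + √((m_l − d_max + d_max/d_min)² + 4(d_max/d_min) Σ_{i=1}^{l−1}(m_i − m_l)))/2. -/
open Matrix BigOperators Finset

set_option maxHeartbeats 2000000 in
theorem stmt10 {n : ℕ} (hn : 2 ≤ n) (G : SimpleGraph (Fin n)) [DecidableRel G.Adj]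
    (hiso : ∀ v, 0 < G.degree v)
    (m : Fin n → ℝ) (σ : Equiv.Perm (Fin n))
    (hm : ∀ i, m i = (G.degree (σ i) : ℝ) +
      (∑ j ∈ G.neighborFinset (σ i), (G.degree j : ℝ)) / (G.degree (σ i) : ℝ))
    (hmono : Antitone m) (dmax dmin : ℕ)
    (hdmax : ∀ v, G.degree v ≤ dmax) (hdmax' : ∃ v, G.degree v = dmax)
    (hdmin : ∀ v, dmin ≤ G.degree v) (hdmin' : ∃ v, G.degree v = dmin)
    (l : Fin n) :
    specRad (Matrix.diagonal (fun i => (G.degree i : ℝ)) + G.adjMatrix ℝ) ≤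
      (m l + (dmax : ℝ) - (dmax : ℝ) / (dmin : ℝ) +
        Real.sqrt ((m l - (dmax : ℝ) + (dmax : ℝ) / (dmin : ℝ)) ^ 2 +
          4 * ((dmax : ℝ) / (dmin : ℝ)) *
            ∑ i ∈ Finset.univ.filter (fun i => i < l), (m i - m l))) / 2 := by
  classical
  set d : Fin n → ℝ := fun v => (G.degree v : ℝ) with hddef
  set t : ℝ := (dmax : ℝ) / (dmin : ℝ) with htdef
  set S : ℝ := ∑ i ∈ Finset.univ.filter (fun i => i < l), (m i - m l) with hSdef
  set q : ℝ := Real.sqrt ((m l - (dmax : ℝ) + t) ^ 2 + 4 * t * S) with hqdef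
  set R : ℝ := (m l + (dmax : ℝ) - t + q) / 2 with hRdef
  -- basic degree facts
  have hdpos : ∀ v, (0 : ℝ) < d v := by
    intro v
    simp only [hddef]
    exact_mod_cast hiso v
  have hdleΔ : ∀ v, d v ≤ (dmax : ℝ) := by
    intro v; simp only [hddef]; exact_mod_cast hdmax v
  have hδled : ∀ v, (dmin : ℝ) ≤ d v := by
    intro v; simp only [hddef]; exact_mod_cast hdmin v
  have hδpos : (0 : ℝ) < (dmin : ℝ) := by
    obtain ⟨v, hv⟩ := hdmin'
    have h1 : (dmin : ℝ) ≤ d v := hδled v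
    have h2 : (0:ℝ) < d v := hdpos v
    have h3 : d v = (dmin : ℝ) := by simp only [hddef]; exact_mod_cast hv
    linarith
  have hΔpos : (0 : ℝ) < (dmax : ℝ) := by
    obtain ⟨v, hv⟩ := hdmax'
    have h2 : (0:ℝ) < d v := hdpos v
    have h3 : d v = (dmax : ℝ) := by simp only [hddef]; exact_mod_cast hv
    linarith
  have ht0 : 0 < t := div_pos hΔpos hδpos
  have htd : ∀ v, (dmax : ℝ) ≤ t * d v := by
    intro v
    rw [htdef, div_mul_eq_mul_div, le_div_iff₀ hδpos]
    nlinarith [hδled v, hΔpos]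
  -- the local row sums
  set r : Fin n → ℝ := fun v => d v + (∑ k ∈ G.neighborFinset v, d k) / d v with hrdef
  have hrm : ∀ i, r (σ i) = m i := by
    intro i; rw [hm i]
  have hrnonneg : ∀ v, 0 ≤ r v := by
    intro v
    have h1 : 0 ≤ (∑ k ∈ G.neighborFinset v, d k) := by
      apply Finset.sum_nonneg; intro k _; exact (hdpos k).le
    have := hdpos v
    have := div_nonneg h1 (hdpos v).le
    simp only [hrdef]
    linarith
  -- excess function
  set eb : Fin n → ℝ := fun v => max (r v - m l) 0 with hebdef
  have heb0 : ∀ v, 0 ≤ eb v := fun v => le_max_right _ _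
  have hSW : ∑ v, eb v = S := by
    have h1 : ∀ i : Fin n, eb (σ i) = max (m i - m l) 0 := by
      intro i; simp only [hebdef]; rw [hrm i]
    have h2 : ∑ v, eb v = ∑ i, max (m i - m l) 0 := by
      rw [← Equiv.sum_comp σ eb]
      exact Finset.sum_congr rfl fun i _ => h1 i
    rw [h2, hSdef, ← Finset.sum_filter_add_sum_filter_not Finset.univ (fun i => i < l)
      (fun i => max (m i - m l) 0)]
    have e1 : ∑ i ∈ Finset.univ.filter (fun i => i < l), max (m i - m l) 0
        = ∑ i ∈ Finset.univ.filter (fun i => i < l), (m i - m l) := by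
      refine Finset.sum_congr rfl fun i hi => ?_
      have hi' : i < l := (Finset.mem_filter.1 hi).2
      exact max_eq_left (sub_nonneg.2 (hmono hi'.le))
    have e2 : ∑ i ∈ Finset.univ.filter (fun i => ¬ i < l), max (m i - m l) 0 = 0 := by
      refine Finset.sum_eq_zero fun i hi => ?_
      have hi' : l ≤ i := not_lt.1 (Finset.mem_filter.1 hi).2
      exact max_eq_right (sub_nonpos.2 (hmono hi'))
    rw [e1, e2, add_zero]
  have hS0 : 0 ≤ S := by
    rw [← hSW]; exact Finset.sum_nonneg fun v _ => heb0 v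
  have hSge : ∀ v, eb v ≤ S := by
    intro v; rw [← hSW]
    exact Finset.single_le_sum (fun i _ => heb0 i) (Finset.mem_univ v)
  -- facts about q and R
  have h4tS : 0 ≤ 4 * t * S := by positivity
  have hq0 : 0 ≤ q := Real.sqrt_nonneg _
  have hqsq : q ^ 2 = (m l - (dmax : ℝ) + t) ^ 2 + 4 * t * S := by
    rw [hqdef]; exact Real.sq_sqrt (by positivity)
  have habs : |m l - (dmax : ℝ) + t| ≤ q := by
    rw [hqdef, ← Real.sqrt_sq_eq_abs]
    exact Real.sqrt_le_sqrt (by linarith)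
  have habs1 := (abs_le.1 habs).1
  have habs2 := (abs_le.1 habs).2
  have hRa : m l ≤ R := by rw [hRdef]; linarith
  have hRb : (dmax : ℝ) - t ≤ R := by rw [hRdef]; linarith
  have hprod : (R - m l) * (R - ((dmax : ℝ) - t)) = t * S := by
    rw [hRdef]; nlinarith [hqsq]
  -- the scaling parameter
  set γ : ℝ := if S = 0 then 0 else (R - m l) / (t * S) with hγdef
  have hγ0 : 0 ≤ γ := by
    rw [hγdef]; split_ifs with h
    · exact le_rfl
    · exact div_nonneg (by linarith) (mul_nonneg ht0.le hS0)
  have hγtS : γ * (t * S) ≤ R - m l := by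
    rw [hγdef]; split_ifs with h
    · nlinarith [hRa, ht0, hS0]
    · have htS : t * S ≠ 0 := by
        have : 0 < S := lt_of_le_of_ne hS0 (Ne.symm h)
        positivity
      rw [div_mul_cancel₀ _ htS]
  have hγR : ∀ v, eb v ≠ 0 → 1 ≤ γ * (R - d v + t) := by
    intro v hne
    have hebpos : 0 < eb v := lt_of_le_of_ne (heb0 v) (Ne.symm hne)
    have hSpos : 0 < S := lt_of_lt_of_le hebpos (hSge v)
    have htS : 0 < t * S := mul_pos ht0 hSpos
    have h1 : γ * (R - ((dmax : ℝ) - t)) = 1 := by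
      rw [hγdef, if_neg hSpos.ne']
      rw [div_mul_eq_mul_div, div_eq_one_iff_eq htS.ne']
      exact hprod
    nlinarith [hγ0, hdleΔ v]
  -- the scaled weights
  set u : Fin n → ℝ := fun v => 1 + γ * eb v with hudef
  set w : Fin n → ℝ := fun v => d v * u v with hwdef
  have hu1 : ∀ v, (1:ℝ) ≤ u v := by
    intro v; simp only [hudef]; nlinarith [hγ0, heb0 v]
  have hwpos : ∀ v, 0 < w v := by
    intro v; simp only [hwdef]
    exact mul_pos (hdpos v) (lt_of_lt_of_le one_pos (hu1 v))
  -- the key row-sum inequality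
  have star : ∀ v, d v * w v + ∑ k ∈ G.neighborFinset v, w k ≤ R * w v := by
    intro v
    have hsum1 : ∑ k ∈ G.neighborFinset v, d k = d v * (r v - d v) := by
      have : r v - d v = (∑ k ∈ G.neighborFinset v, d k) / d v := by
        simp only [hrdef]; ring
      rw [this, mul_div_cancel₀ _ (hdpos v).ne']
    have hneb : ∑ k ∈ G.neighborFinset v, eb k ≤ S - eb v := by
      have hsub : G.neighborFinset v ⊆ Finset.univ.erase v := by
        intro k hk
        refine Finset.mem_erase.2 ⟨?_, Finset.mem_univ k⟩
        exact ((SimpleGraph.mem_neighborFinset G v k).1 hk).ne'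
      calc ∑ k ∈ G.neighborFinset v, eb k
          ≤ ∑ k ∈ Finset.univ.erase v, eb k :=
            Finset.sum_le_sum_of_subset_of_nonneg hsub (fun i _ _ => heb0 i)
        _ = (∑ k, eb k) - eb v := Finset.sum_erase_eq_sub (Finset.mem_univ v)
        _ = S - eb v := by rw [hSW]
    have hterm : ∑ k ∈ G.neighborFinset v, d k * eb k ≤ (t * d v) * (S - eb v) := by
      calc ∑ k ∈ G.neighborFinset v, d k * eb k
          ≤ ∑ k ∈ G.neighborFinset v, (t * d v) * eb k := by
            refine Finset.sum_le_sum fun k _ => ?_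
            exact mul_le_mul_of_nonneg_right (le_trans (hdleΔ k) (htd v)) (heb0 k)
        _ = (t * d v) * ∑ k ∈ G.neighborFinset v, eb k := by rw [Finset.mul_sum]
        _ ≤ (t * d v) * (S - eb v) := by
            refine mul_le_mul_of_nonneg_left hneb ?_
            exact mul_nonneg ht0.le (hdpos v).le
    have hwk : ∑ k ∈ G.neighborFinset v, w k
        = (∑ k ∈ G.neighborFinset v, d k) + γ * ∑ k ∈ G.neighborFinset v, d k * eb k := by
      rw [Finset.mul_sum, ← Finset.sum_add_distrib]
      refine Finset.sum_congr rfl fun k _ => ?_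
      simp only [hwdef, hudef]; ring
    have hrva : r v ≤ m l + eb v := by
      have : r v - m l ≤ eb v := le_max_left _ _
      linarith
    have hEB : eb v * (1 + γ * (d v - t)) ≤ eb v * (γ * R) := by
      rcases eq_or_lt_of_le (heb0 v) with h | h
      · rw [← h]; simp
      · have h1 := hγR v (ne_of_gt h)
        have h2 : 1 + γ * (d v - t) ≤ γ * R := by nlinarith [h1]
        exact mul_le_mul_of_nonneg_left h2 h.le
    -- assemble
    have c1 : γ * (∑ k ∈ G.neighborFinset v, d k * eb k) ≤ γ * ((t * d v) * (S - eb v)) :=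
      mul_le_mul_of_nonneg_left hterm hγ0
    have c2 : d v * (γ * (t * S)) ≤ d v * (R - m l) :=
      mul_le_mul_of_nonneg_left hγtS (hdpos v).le
    have c3 : d v * (r v) ≤ d v * (m l + eb v) :=
      mul_le_mul_of_nonneg_left hrva (hdpos v).le
    have c4 : d v * (eb v * (1 + γ * (d v - t))) ≤ d v * (eb v * (γ * R)) :=
      mul_le_mul_of_nonneg_left hEB (hdpos v).le
    have hwv : w v = d v * (1 + γ * eb v) := by simp only [hwdef, hudef]
    rw [hwk, hsum1, hwv]
    nlinarith [c1, c2, c3, c4]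
  -- eigenvalue bound
  have key : ∀ μ ∈ spectrum ℂ
      ((Matrix.diagonal d + G.adjMatrix ℝ).map Complex.ofReal), ‖μ‖ ≤ R := by
    intro μ hμ
    rw [spectrum.mem_iff] at hμ
    have hdet : ((algebraMap ℂ (Matrix (Fin n) (Fin n) ℂ)) μ
        - (Matrix.diagonal d + G.adjMatrix ℝ).map Complex.ofReal).det = 0 := by
      by_contra h
      exact hμ (((Matrix.isUnit_iff_isUnit_det _)).2 (Ne.isUnit h))
    obtain ⟨x, hx0, hxe⟩ := Matrix.exists_mulVec_eq_zero_iff.2 hdet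
    have hQc : ((Matrix.diagonal d + G.adjMatrix ℝ).map Complex.ofReal)
        = Matrix.diagonal (fun v => (d v : ℂ)) + G.adjMatrix ℂ := by
      ext i j
      simp only [Matrix.map_apply, Matrix.add_apply, Matrix.diagonal_apply,
        SimpleGraph.adjMatrix_apply, apply_ite]
      by_cases hij : i = j <;> by_cases hadj : G.Adj i j <;>
        simp [hij, hadj]
    have hmv : ∀ p, (d p : ℂ) * x p + ∑ k ∈ G.neighborFinset p, x k = μ * x p := by
      intro p
      have h1 : ((Matrix.diagonal d + G.adjMatrix ℝ).map Complex.ofReal).mulVec x = μ • x := by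
        have h2 : ((algebraMap ℂ (Matrix (Fin n) (Fin n) ℂ)) μ
            - (Matrix.diagonal d + G.adjMatrix ℝ).map Complex.ofReal).mulVec x
            = μ • x - ((Matrix.diagonal d + G.adjMatrix ℝ).map Complex.ofReal).mulVec x := by
          rw [Matrix.sub_mulVec, Algebra.algebraMap_eq_smul_one,
            Matrix.smul_mulVec, Matrix.one_mulVec]
        rw [h2] at hxe
        linear_combination (norm := module) -hxe
      have h3 := congrFun h1 p
      rw [hQc, Matrix.add_mulVec] at h3
      simp only [Pi.add_apply, Pi.smul_apply, smul_eq_mul] at h3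
      rw [Matrix.mulVec_diagonal, SimpleGraph.adjMatrix_mulVec_apply] at h3
      exact h3
    have hrow : ∀ p, ‖μ‖ * ‖x p‖
        ≤ d p * ‖x p‖ + ∑ k ∈ G.neighborFinset p, ‖x k‖ := by
      intro p
      have h1 : ‖μ‖ * ‖x p‖ = ‖μ * x p‖ := (norm_mul _ _).symm
      rw [h1, ← hmv p]
      calc ‖(d p : ℂ) * x p + ∑ k ∈ G.neighborFinset p, x k‖
          ≤ ‖(d p : ℂ) * x p‖
            + ‖∑ k ∈ G.neighborFinset p, x k‖ := norm_add_le _ _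
        _ ≤ d p * ‖x p‖ + ∑ k ∈ G.neighborFinset p, ‖x k‖ := by
            have h2 : ‖(d p : ℂ) * x p‖ = d p * ‖x p‖ := by
              rw [norm_mul, Complex.norm_real, Real.norm_eq_abs, abs_of_nonneg (hdpos p).le]
            rw [h2]
            exact add_le_add_right (norm_sum_le (E := ℂ) _ _) _
    haveI : Nonempty (Fin n) := ⟨⟨0, by omega⟩⟩
    obtain ⟨p, -, hp⟩ := Finset.exists_max_image Finset.univ
      (fun k => ‖x k‖ / w k) Finset.univ_nonempty
    set c : ℝ := ‖x p‖ / w p with hcdef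
    have hc : ∀ k, ‖x k‖ ≤ c * w k := by
      intro k
      have h1 : ‖x k‖ / w k ≤ c := hp k (Finset.mem_univ k)
      rw [div_le_iff₀ (hwpos k)] at h1
      linarith
    have hcpos : 0 < c := by
      obtain ⟨v, hv⟩ := Function.ne_iff.1 hx0
      have h1 : 0 < ‖x v‖ := by
        simpa using (norm_pos_iff).2 hv
      have h2 : ‖x v‖ / w v ≤ c := hp v (Finset.mem_univ v)
      have := div_pos h1 (hwpos v)
      linarith
    have hxp : ‖x p‖ = c * w p := by
      rw [hcdef, div_mul_cancel₀ _ (hwpos p).ne']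
    have h1 : ‖μ‖ * (c * w p) ≤ d p * (c * w p) + c * ∑ k ∈ G.neighborFinset p, w k := by
      have h2 := hrow p
      rw [hxp] at h2
      have h3 : ∑ k ∈ G.neighborFinset p, ‖x k‖
          ≤ c * ∑ k ∈ G.neighborFinset p, w k := by
        rw [Finset.mul_sum]
        exact Finset.sum_le_sum fun k _ => hc k
      linarith
    have h4 : c * (d p * w p + ∑ k ∈ G.neighborFinset p, w k) ≤ c * (R * w p) :=
      mul_le_mul_of_nonneg_left (star p) hcpos.le
    have h5 : ‖μ‖ * (c * w p) ≤ R * (c * w p) := by nlinarith [h1, h4]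
    exact le_of_mul_le_mul_right (by linarith [h5]) (mul_pos hcpos (hwpos p))
  -- conclude
  have hR0 : 0 ≤ R := by
    have h1 : 0 ≤ m l := by rw [← hrm l]; exact hrnonneg (σ l)
    linarith [hRa]
  show sSup _ ≤ R
  refine Real.sSup_le ?_ hR0
  rintro z ⟨μ, hμ, rfl⟩
  exact key μ hμ
end

section
/- Let G be a connected graph on n ≥ 2 vertices, D(G) its distance matrix, and m_1 ≥ ... ≥ m_n the average 2-transmissions of G. For each 1 ≤ l ≤ n, ρ(D(G)) ≤ (m_l − 𝔇·D_max/D_min + √((m_l + 𝔇·D_max/D_min)² + 4𝔇·(D_max/D_min) Σ_{i=1}^{l−1}(m_i − m_l)))/2, with equality if and only if m_1 = ... = m_n. -/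
open Matrix BigOperators Finset

lemma cw_abs {n : ℕ} (hn : 0 < n) (A : Matrix (Fin n) (Fin n) ℝ)
    (hA : ∀ i j, 0 ≤ A i j) (z : Fin n → ℝ) (hz : ∀ i, 0 < z i) (c : ℝ)
    (h : ∀ i, (∑ j, A i j * z j) ≤ c * z i) :
    ∀ μ ∈ spectrum ℂ (A.map Complex.ofReal), ‖μ‖ ≤ c := by
  intro μ hμ
  rw [spectrum.mem_iff] at hμ
  rw [Matrix.isUnit_iff_isUnit_det, isUnit_iff_ne_zero, not_not] at hμ
  obtain ⟨v, hv0, hv⟩ := (Matrix.exists_mulVec_eq_zero_iff).2 hμ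
  have hev : ∀ i, μ * v i = ∑ j, (A i j : ℂ) * v j := by
    intro i
    have h0 := congrFun hv i
    simp only [Matrix.sub_mulVec, Pi.sub_apply, Pi.zero_apply, sub_eq_zero] at h0
    have h1 : (algebraMap ℂ (Matrix (Fin n) (Fin n) ℂ) μ).mulVec v i = μ * v i := by
      simp [Matrix.algebraMap_eq_diagonal, Matrix.mulVec_diagonal]
    have h2 : ((A.map Complex.ofReal).mulVec v) i = ∑ j, (A i j : ℂ) * v j := by
      simp [Matrix.mulVec, dotProduct, Matrix.map_apply]
    rw [h1, h2] at h0
    exact h0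
  obtain ⟨i0, -, hi0⟩ := Finset.exists_max_image Finset.univ
    (fun i => ‖v i‖ / z i) ⟨⟨0, hn⟩, Finset.mem_univ _⟩
  set t := ‖v i0‖ / z i0 with ht
  have htle : ∀ j, ‖v j‖ ≤ t * z j := by
    intro j
    have h3 := hi0 j (Finset.mem_univ j)
    rw [div_le_div_iff₀ (hz j) (hz i0)] at h3
    rw [ht, div_mul_eq_mul_div, le_div_iff₀ (hz i0)]
    linarith
  have htpos : 0 < t := by
    rcases Function.ne_iff.1 hv0 with ⟨k, hk⟩
    have hk0 : v k ≠ 0 := hk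
    have h4 : 0 < ‖v k‖ := by
      exact norm_pos_iff.2 hk0
    have h5 : 0 < ‖v k‖ / z k := div_pos h4 (hz k)
    exact lt_of_lt_of_le h5 (hi0 k (Finset.mem_univ k))
  have hvi0 : ‖v i0‖ = t * z i0 := by
    rw [ht, div_mul_cancel₀]
    exact (hz i0).ne'
  have key : ‖μ‖ * (t * z i0) ≤ c * (t * z i0) := by
    calc ‖μ‖ * (t * z i0) = ‖μ * v i0‖ := by
          rw [norm_mul, hvi0]
      _ = ‖∑ j, (A i0 j : ℂ) * v j‖ := by rw [hev i0]
      _ ≤ ∑ j, ‖(A i0 j : ℂ) * v j‖ := (norm_sum_le _ _) 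
      _ ≤ ∑ j, A i0 j * (t * z j) := by
          apply Finset.sum_le_sum
          intro j _
          rw [norm_mul, Complex.norm_real, Real.norm_eq_abs, abs_of_nonneg (hA i0 j)]
          exact mul_le_mul_of_nonneg_left (htle j) (hA i0 j)
      _ = ∑ j, t * (A i0 j * z j) := Finset.sum_congr rfl fun j _ => by ring
      _ = t * ∑ j, A i0 j * z j := by rw [Finset.mul_sum]
      _ ≤ t * (c * z i0) := mul_le_mul_of_nonneg_left (h i0) htpos.le
      _ = c * (t * z i0) := by ring
  exact le_of_mul_le_mul_right key (mul_pos htpos (hz i0))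

lemma specRad_le_of {n : ℕ} (hn : 0 < n) (A : Matrix (Fin n) (Fin n) ℝ)
    (hA : ∀ i j, 0 ≤ A i j) (z : Fin n → ℝ) (hz : ∀ i, 0 < z i) (c : ℝ)
    (h : ∀ i, (∑ j, A i j * z j) ≤ c * z i) : specRad A ≤ c := by
  have hc0 : 0 ≤ c := by
    have h1 := h ⟨0, hn⟩
    have h2 : (0:ℝ) ≤ ∑ j, A ⟨0, hn⟩ j * z j :=
      Finset.sum_nonneg fun j _ => mul_nonneg (hA _ j) (hz j).le
    nlinarith [hz ⟨0, hn⟩]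
  apply Real.sSup_le _ hc0
  rintro x ⟨μ, hμ, rfl⟩
  exact cw_abs hn A hA z hz c h μ hμ

lemma strict_improve {n : ℕ} (hn : 0 < n) (A : Matrix (Fin n) (Fin n) ℝ)
    (hA : ∀ i j, 0 ≤ A i j) (hoff : ∀ i j, i ≠ j → 0 < A i j)
    (w : Fin n → ℝ) (hw : ∀ i, 0 < w i) (c : ℝ) (hc : 0 < c)
    (hle : ∀ i, (∑ j, A i j * w j) ≤ c * w i)
    (v₀ : Fin n) (hstrict : (∑ j, A v₀ j * w j) < c * w v₀) :
    specRad A < c := by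
  set u : Fin n → ℝ := fun i => c * w i - ∑ j, A i j * w j with hu_def
  have hu0 : ∀ i, 0 ≤ u i := fun i => by simp only [hu_def]; linarith [hle i]
  have huv : 0 < u v₀ := by simp only [hu_def]; linarith
  set z : Fin n → ℝ := fun i => c * w i + ∑ j, A i j * w j with hz_def
  have hsum_nonneg : ∀ i, (0:ℝ) ≤ ∑ j, A i j * w j := fun i =>
    Finset.sum_nonneg fun j _ => mul_nonneg (hA i j) (hw j).le
  have hz : ∀ i, 0 < z i := fun i => by
    have := hsum_nonneg i; have := hw i; simp only [hz_def]; nlinarith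
  set e : Fin n → ℝ := fun i => c * u i + ∑ j, A i j * u j with he_def
  have hAu_nonneg : ∀ i, (0:ℝ) ≤ ∑ j, A i j * u j := fun i =>
    Finset.sum_nonneg fun j _ => mul_nonneg (hA i j) (hu0 j)
  have he : ∀ i, 0 < e i := by
    intro i
    rcases eq_or_ne i v₀ with rfl | hne
    · have := hAu_nonneg i; simp only [he_def]; nlinarith
    · have h1 : A i v₀ * u v₀ ≤ ∑ j, A i j * u j :=
        Finset.single_le_sum (fun j _ => mul_nonneg (hA i j) (hu0 j)) (Finset.mem_univ v₀)
      have h2 : 0 < A i v₀ * u v₀ := mul_pos (hoff i v₀ hne) huv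
      have h3 : 0 ≤ u i := hu0 i
      simp only [he_def]; nlinarith
  have hAz : ∀ i, (∑ j, A i j * z j) = c * z i - e i := by
    intro i
    have expand : ∀ j, A i j * z j = c * (A i j * w j) + (A i j * (∑ k, A j k * w k)) := by
      intro j; simp only [hz_def]; ring
    have expand2 : ∀ j, A i j * (∑ k, A j k * w k) = c * (A i j * w j) - A i j * u j := by
      intro j; simp only [hu_def]; ring
    calc (∑ j, A i j * z j) = ∑ j, (2 * c * (A i j * w j) - A i j * u j) := by
          apply Finset.sum_congr rfl; intro j _; rw [expand j, expand2 j]; ring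
      _ = 2 * c * (∑ j, A i j * w j) - ∑ j, A i j * u j := by
          rw [Finset.sum_sub_distrib, ← Finset.mul_sum]
      _ = c * z i - e i := by simp only [hz_def, he_def, hu_def]; ring
  obtain ⟨i₁, -, hi₁⟩ := Finset.exists_min_image Finset.univ (fun i => e i / z i)
    ⟨⟨0, hn⟩, Finset.mem_univ _⟩
  set δ : ℝ := e i₁ / z i₁ with hδ
  have hδpos : 0 < δ := div_pos (he i₁) (hz i₁)
  have hδlt : c - δ < c := by linarith
  have hbound : ∀ i, (∑ j, A i j * z j) ≤ (c - δ) * z i := by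
    intro i
    have h1 : δ ≤ e i / z i := hi₁ i (Finset.mem_univ i)
    have h2 : δ * z i ≤ e i := by
      rw [div_le_div_iff₀ (hz i₁) (hz i)] at h1
      · rw [hδ]; rw [div_mul_eq_mul_div, div_le_iff₀ (hz i₁)]; nlinarith [hz i, hz i₁, he i]
    rw [hAz i]; nlinarith
  exact lt_of_le_of_lt (specRad_le_of hn A hA z hz (c - δ) hbound) hδlt

set_option maxHeartbeats 3000000 in
theorem stmt11 {n : ℕ} (hn : 2 ≤ n) (G : SimpleGraph (Fin n))
    (hconn : G.Connected)
    (m : Fin n → ℝ) (σ : Equiv.Perm (Fin n))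
    (hm : ∀ i, m i =
      (∑ j, (G.dist (σ i) j : ℝ) * (∑ k, (G.dist j k : ℝ))) /
        (∑ j, (G.dist (σ i) j : ℝ)))
    (hmono : Antitone m) (Dmax Dmin : ℕ)
    (hDmax : ∀ v, (∑ j, G.dist v j) ≤ Dmax) (hDmax' : ∃ v, (∑ j, G.dist v j) = Dmax)
    (hDmin : ∀ v, Dmin ≤ (∑ j, G.dist v j)) (hDmin' : ∃ v, (∑ j, G.dist v j) = Dmin)
    (diam : ℕ) (hdiam : ∀ i j, G.dist i j ≤ diam) (hdiam' : ∃ i j, G.dist i j = diam)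
    (l : Fin n) :
    specRad (Matrix.of (fun i j => (G.dist i j : ℝ))) ≤
      (m l - (diam : ℝ) * ((Dmax : ℝ) / (Dmin : ℝ)) +
        Real.sqrt ((m l + (diam : ℝ) * ((Dmax : ℝ) / (Dmin : ℝ))) ^ 2 +
          4 * (diam : ℝ) * ((Dmax : ℝ) / (Dmin : ℝ)) *
            ∑ i ∈ Finset.univ.filter (fun i => i < l), (m i - m l))) / 2 ∧
    (specRad (Matrix.of (fun i j => (G.dist i j : ℝ))) =
      (m l - (diam : ℝ) * ((Dmax : ℝ) / (Dmin : ℝ)) +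
        Real.sqrt ((m l + (diam : ℝ) * ((Dmax : ℝ) / (Dmin : ℝ))) ^ 2 +
          4 * (diam : ℝ) * ((Dmax : ℝ) / (Dmin : ℝ)) *
            ∑ i ∈ Finset.univ.filter (fun i => i < l), (m i - m l))) / 2 ↔
      ∀ i j, m i = m j) := by
  have hn0 : 0 < n := by omega
  set A : Matrix (Fin n) (Fin n) ℝ := Matrix.of (fun i j => (G.dist i j : ℝ)) with hA_def
  set s : ℝ := (diam : ℝ) * ((Dmax : ℝ) / (Dmin : ℝ)) with hs_def
  set T : ℝ := ∑ i ∈ Finset.univ.filter (fun i => i < l), (m i - m l) with hT_def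
  set R : ℝ := Real.sqrt ((m l + s) ^ 2 +
      4 * (diam : ℝ) * ((Dmax : ℝ) / (Dmin : ℝ)) * T) with hR_def
  set lam : ℝ := (m l - s + R) / 2 with hlam_def
  set Sv : Fin n → ℝ := fun v => ∑ j, (G.dist v j : ℝ) with hSv_def
  set Nv : Fin n → ℝ := fun v => ∑ j, (G.dist v j : ℝ) * Sv j with hNv_def
  -- basic positivity facts
  have : Nontrivial (Fin n) := Fin.nontrivial_iff_two_le.mpr hn
  have hexists_ne : ∀ v : Fin n, ∃ u : Fin n, u ≠ v := fun v => exists_ne v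
  have hdnn : ∀ v j : Fin n, (0:ℝ) ≤ (G.dist v j : ℝ) := fun v j => Nat.cast_nonneg _
  have hSpos : ∀ v, 0 < Sv v := by
    intro v
    obtain ⟨u, hu⟩ := hexists_ne v
    have h1 : 0 < (G.dist v u : ℝ) := by
      exact_mod_cast hconn.pos_dist_of_ne (Ne.symm hu)
    have h2 : (G.dist v u : ℝ) ≤ Sv v := by
      rw [hSv_def]
      exact Finset.single_le_sum (fun j _ => hdnn v j) (Finset.mem_univ u)
    linarith
  have hNpos : ∀ v, 0 < Nv v := by
    intro v
    obtain ⟨u, hu⟩ := hexists_ne v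
    have h1 : 0 < (G.dist v u : ℝ) * Sv u := by
      have := hSpos u
      have : 0 < (G.dist v u : ℝ) := by
        exact_mod_cast hconn.pos_dist_of_ne (Ne.symm hu)
      positivity
    have h2 : (G.dist v u : ℝ) * Sv u ≤ Nv v := by
      rw [hNv_def]
      exact Finset.single_le_sum (fun j _ => mul_nonneg (hdnn v j) (hSpos j).le)
        (Finset.mem_univ u)
    linarith
  -- bridge to m
  have hmS : ∀ i, m i = Nv (σ i) / Sv (σ i) := by
    intro i
    rw [hm i]
  have hNS : ∀ v, Nv v = m (σ.symm v) * Sv v := by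
    intro v
    have h1 := hmS (σ.symm v)
    rw [Equiv.apply_symm_apply] at h1
    rw [h1, div_mul_cancel₀]
    exact (hSpos v).ne'
  -- cast facts
  have hSv_cast : ∀ v, Sv v = ((∑ j, G.dist v j : ℕ) : ℝ) := by
    intro v; rw [hSv_def]; push_cast; rfl
  have hSvDmax : ∀ v, Sv v ≤ (Dmax : ℝ) := by
    intro v; rw [hSv_cast v]; exact_mod_cast hDmax v
  have hDminSv : ∀ v, (Dmin : ℝ) ≤ Sv v := by
    intro v; rw [hSv_cast v]; exact_mod_cast hDmin v
  have hDminpos : (0:ℝ) < (Dmin : ℝ) := by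
    obtain ⟨v, hv⟩ := hDmin'
    have := hSpos v
    rw [hSv_cast v, hv] at this
    exact this
  have hDmaxpos : (0:ℝ) < (Dmax : ℝ) := lt_of_lt_of_le hDminpos ((Nat.cast_le).2 (by
    obtain ⟨v, hv⟩ := hDmax'
    calc Dmin ≤ ∑ j, G.dist v j := hDmin v
      _ = Dmax := hv))
  have hDminmax : (Dmin : ℝ) ≤ (Dmax : ℝ) := by
    obtain ⟨v, hv⟩ := hDmax'
    calc (Dmin:ℝ) ≤ Sv v := hDminSv v
      _ = ((∑ j, G.dist v j : ℕ) : ℝ) := hSv_cast v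
      _ = (Dmax : ℝ) := by rw [hv]
  have hdiampos : (0:ℝ) < (diam : ℝ) := by
    obtain ⟨u, hu⟩ := hexists_ne (⟨0, by omega⟩ : Fin n)
    have h1 : 0 < G.dist u ⟨0, by omega⟩ := hconn.pos_dist_of_ne hu
    have h2 := hdiam u ⟨0, by omega⟩
    exact_mod_cast lt_of_lt_of_le h1 h2
  have hdistdiam : ∀ v j : Fin n, (G.dist v j : ℝ) ≤ (diam : ℝ) := by
    intro v j; exact_mod_cast hdiam v j
  have hspos : 0 < s := by
    rw [hs_def]; positivity
  have hml_pos : 0 < m l := by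
    rw [hmS l]; exact div_pos (hNpos _) (hSpos _)
  have hT0 : 0 ≤ T := by
    rw [hT_def]
    apply Finset.sum_nonneg
    intro i hi
    rw [Finset.mem_filter] at hi
    have := hmono (le_of_lt hi.2)
    linarith
  have hX0 : 0 ≤ (m l + s) ^ 2 + 4 * (diam : ℝ) * ((Dmax : ℝ) / (Dmin : ℝ)) * T := by
    have h1 : 0 ≤ 4 * (diam : ℝ) * ((Dmax : ℝ) / (Dmin : ℝ)) * T := by
      apply mul_nonneg _ hT0
      positivity
    nlinarith [sq_nonneg (m l + s)]
  have hRsq : R ^ 2 = (m l + s) ^ 2 + 4 * (diam : ℝ) * ((Dmax : ℝ) / (Dmin : ℝ)) * T := by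
    rw [hR_def]; exact Real.sq_sqrt hX0
  have hR0 : 0 ≤ R := by rw [hR_def]; exact Real.sqrt_nonneg _
  have hRge : m l + s ≤ R := by
    have h1 : (m l + s) ^ 2 ≤ (m l + s) ^ 2 +
        4 * (diam : ℝ) * ((Dmax : ℝ) / (Dmin : ℝ)) * T := by
      nlinarith [mul_nonneg (mul_nonneg (by positivity : (0:ℝ) ≤ 4 * (diam:ℝ))
        (by positivity : (0:ℝ) ≤ (Dmax:ℝ)/(Dmin:ℝ))) hT0]
    have h2 := Real.sqrt_le_sqrt h1
    rw [Real.sqrt_sq (by linarith : (0:ℝ) ≤ m l + s)] at h2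
    rw [hR_def]; exact h2
  have hlam_ml : m l ≤ lam := by rw [hlam_def]; linarith
  have hlam_pos : 0 < lam := lt_of_lt_of_le hml_pos hlam_ml
  have ha : 0 < lam + s := by linarith
  have hsT : 4 * (diam : ℝ) * ((Dmax : ℝ) / (Dmin : ℝ)) * T = 4 * s * T := by
    rw [hs_def]; ring
  have hkey : (lam - m l) * (lam + s) = s * T := by
    rw [hsT] at hRsq
    rw [hlam_def]
    linear_combination (1/4) * hRsq
  -- test vector
  set g : Fin n → ℝ := fun v => max (m (σ.symm v) - m l) 0 with hg_def
  have hg0 : ∀ v, 0 ≤ g v := fun v => le_max_right _ 0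
  set w : Fin n → ℝ := fun v => Sv v * ((lam + s) + g v) with hw_def
  have hw_pos : ∀ v, 0 < w v := by
    intro v
    simp only [hw_def]
    have := hg0 v
    have := hSpos v
    nlinarith
  have hTg : ∑ v, g v = T := by
    have h1 : ∑ v, g v = ∑ i, g (σ i) := (Equiv.sum_comp σ g).symm
    have h2 : ∀ i, g (σ i) = max (m i - m l) 0 := by
      intro i; simp only [hg_def]; simp
    rw [h1]
    simp_rw [h2]
    rw [hT_def, ← Finset.sum_filter_add_sum_filter_not Finset.univ (fun i => i < l)
      (fun i => max (m i - m l) 0)]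
    have h3 : ∑ i ∈ Finset.univ.filter (fun i => ¬ i < l), max (m i - m l) 0 = 0 := by
      apply Finset.sum_eq_zero
      intro i hi
      rw [Finset.mem_filter] at hi
      have := hmono (le_of_not_gt hi.2)
      exact max_eq_right (by linarith)
    have h4 : ∑ i ∈ Finset.univ.filter (fun i => i < l), max (m i - m l) 0
        = ∑ i ∈ Finset.univ.filter (fun i => i < l), (m i - m l) := by
      apply Finset.sum_congr rfl
      intro i hi
      rw [Finset.mem_filter] at hi
      have := hmono (le_of_lt hi.2)
      exact max_eq_left (by linarith)
    rw [h3, h4, add_zero]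
  have hErase_g : ∀ v, ∑ j ∈ Finset.univ.erase v, g j = T - g v := by
    intro v
    have := Finset.add_sum_erase Finset.univ g (Finset.mem_univ v)
    rw [hTg] at this
    linarith
  have hAapp : ∀ i j, A i j = (G.dist i j : ℝ) := by
    intro i j; rw [hA_def]; rfl
  have hAnn : ∀ i j, 0 ≤ A i j := by intro i j; rw [hAapp]; exact hdnn i j
  have hsum_w : ∀ v, (∑ j, A v j * w j) =
      (lam + s) * Nv v + ∑ j ∈ Finset.univ.erase v, (G.dist v j : ℝ) * Sv j * g j := by
    intro v
    have h1 : ∀ j, A v j * w j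
        = (lam + s) * ((G.dist v j : ℝ) * Sv j) + (G.dist v j : ℝ) * Sv j * g j := by
      intro j; rw [hAapp]; simp only [hw_def]; ring
    rw [Finset.sum_congr rfl (fun j _ => h1 j), Finset.sum_add_distrib, ← Finset.mul_sum]
    have hNv' : (∑ j, (G.dist v j : ℝ) * Sv j) = Nv v := by simp only [hNv_def]
    have hzero : (G.dist v v : ℝ) * Sv v * g v = 0 := by
      rw [SimpleGraph.dist_self]; push_cast; ring
    rw [hNv', ← Finset.add_sum_erase Finset.univ (fun j => (G.dist v j : ℝ) * Sv j * g j)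
      (Finset.mem_univ v), hzero, zero_add]
  have hoffb : ∀ v j, (G.dist v j : ℝ) * Sv j ≤ s * Sv v := by
    intro v j
    have h1 : (G.dist v j : ℝ) * Sv j ≤ (diam : ℝ) * (Dmax : ℝ) :=
      mul_le_mul (hdistdiam v j) (hSvDmax j) (hSpos j).le hdiampos.le
    have h2 : s * (Dmin : ℝ) = (diam : ℝ) * (Dmax : ℝ) := by
      rw [hs_def]; field_simp
    have h3 : s * (Dmin : ℝ) ≤ s * Sv v :=
      mul_le_mul_of_nonneg_left (hDminSv v) hspos.le
    linarith
  -- scalar inequality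
  have hscalar : ∀ v, (lam + s) * m (σ.symm v) + s * (T - g v)
      ≤ lam * ((lam + s) + g v) := by
    intro v
    rcases le_or_gt (m (σ.symm v)) (m l) with hcase | hcase
    · have hgv : g v = 0 := by simp only [hg_def]; exact max_eq_right (by linarith)
      rw [hgv]
      have h1 : (lam + s) * m (σ.symm v) ≤ (lam + s) * m l :=
        mul_le_mul_of_nonneg_left hcase ha.le
      nlinarith [hkey]
    · have hgv : g v = m (σ.symm v) - m l := by
        simp only [hg_def]; exact max_eq_left (by linarith)
      rw [hgv]
      have : (lam + s) * m (σ.symm v) + s * (T - (m (σ.symm v) - m l))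
          = lam * ((lam + s) + (m (σ.symm v) - m l)) := by
        linear_combination hkey - (1/2) * hRsq
      linarith
  have hM : ∀ v, (∑ j, A v j * w j) ≤ lam * w v := by
    intro v
    rw [hsum_w v]
    have h1 : ∑ j ∈ Finset.univ.erase v, (G.dist v j : ℝ) * Sv j * g j
        ≤ ∑ j ∈ Finset.univ.erase v, s * Sv v * g j :=
      Finset.sum_le_sum (fun j _ => mul_le_mul_of_nonneg_right (hoffb v j) (hg0 j))
    have h2 : ∑ j ∈ Finset.univ.erase v, s * Sv v * g j = s * Sv v * (T - g v) := by
      rw [← Finset.mul_sum, hErase_g v]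
    rw [hNS v]
    simp only [hw_def]
    calc (lam + s) * (m ((Equiv.symm σ) v) * Sv v)
          + ∑ j ∈ Finset.univ.erase v, (G.dist v j : ℝ) * Sv j * g j
        ≤ (lam + s) * (m ((Equiv.symm σ) v) * Sv v) + s * Sv v * (T - g v) := by
          rw [h2] at h1; linarith
      _ = ((lam + s) * m ((Equiv.symm σ) v) + s * (T - g v)) * Sv v := by ring
      _ ≤ (lam * ((lam + s) + g v)) * Sv v :=
          mul_le_mul_of_nonneg_right (hscalar v) (hSpos v).le
      _ = lam * (Sv v * ((lam + s) + g v)) := by ring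
  have part1 : specRad A ≤ lam := specRad_le_of hn0 A hAnn w hw_pos lam hM
  refine ⟨part1, ?_, ?_⟩
  · -- equality implies m constant
    intro heq
    by_contra hne
    push_neg at hne
    obtain ⟨i₀, j₀', hij⟩ := hne
    by_cases hall : ∀ v, (∑ j, A v j * w j) = lam * w v
    · -- combinatorial contradiction from exact equality
      have hsd : s * (Dmin : ℝ) = (diam : ℝ) * (Dmax : ℝ) := by
        rw [hs_def]; field_simp
      have hscal_eq : ∀ v, lam * ((lam + s) + g v) - (lam + s) * m (σ.symm v)
          = (lam + s) * max (m l - m (σ.symm v)) 0 + s * (T - g v) := by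
        intro v
        rcases le_total (m (σ.symm v)) (m l) with hc2 | hc2
        · have hgv : g v = 0 := by
            simp only [hg_def]; exact max_eq_right (by linarith)
          have hmax : max (m l - m (σ.symm v)) 0 = m l - m (σ.symm v) :=
            max_eq_left (by linarith)
          rw [hgv, hmax]
          linear_combination hkey
        · have hgv : g v = m (σ.symm v) - m l := by
            simp only [hg_def]; exact max_eq_left (by linarith)
          have hmax : max (m l - m (σ.symm v)) 0 = 0 := max_eq_right (by linarith)
          rw [hgv, hmax]
          linear_combination hkey
      have hident : ∀ v, lam * w v - (∑ j, A v j * w j)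
          = (lam + s) * Sv v * max (m l - m (σ.symm v)) 0
            + ∑ j ∈ Finset.univ.erase v, (s * Sv v - (G.dist v j : ℝ) * Sv j) * g j := by
        intro v
        have hsplit : ∑ j ∈ Finset.univ.erase v,
            (s * Sv v - (G.dist v j : ℝ) * Sv j) * g j
            = s * Sv v * (T - g v)
              - ∑ j ∈ Finset.univ.erase v, (G.dist v j : ℝ) * Sv j * g j := by
          calc ∑ j ∈ Finset.univ.erase v, (s * Sv v - (G.dist v j : ℝ) * Sv j) * g j
              = ∑ j ∈ Finset.univ.erase v,
                  (s * Sv v * g j - (G.dist v j : ℝ) * Sv j * g j) :=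
                Finset.sum_congr rfl (fun j _ => by ring)
            _ = (∑ j ∈ Finset.univ.erase v, s * Sv v * g j)
                - ∑ j ∈ Finset.univ.erase v, (G.dist v j : ℝ) * Sv j * g j :=
                Finset.sum_sub_distrib _ _
            _ = s * Sv v * (T - g v)
                - ∑ j ∈ Finset.univ.erase v, (G.dist v j : ℝ) * Sv j * g j := by
                rw [← Finset.mul_sum, hErase_g v]
        rw [hsum_w v, hNS v, hsplit]
        simp only [hw_def]
        linear_combination (Sv v) * hscal_eq v
      have hterm0 : ∀ v, (lam + s) * Sv v * max (m l - m (σ.symm v)) 0 = 0 ∧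
          ∀ j ∈ Finset.univ.erase v, (s * Sv v - (G.dist v j : ℝ) * Sv j) * g j = 0 := by
        intro v
        have e1 : (lam + s) * Sv v * max (m l - m (σ.symm v)) 0
            + ∑ j ∈ Finset.univ.erase v, (s * Sv v - (G.dist v j : ℝ) * Sv j) * g j
            = 0 := by
          rw [← hident v, hall v]; ring
        have hP : 0 ≤ (lam + s) * Sv v * max (m l - m (σ.symm v)) 0 :=
          mul_nonneg (mul_nonneg ha.le (hSpos v).le) (le_max_right _ 0)
        have hQnn : ∀ j ∈ Finset.univ.erase v,
            0 ≤ (s * Sv v - (G.dist v j : ℝ) * Sv j) * g j := fun j _ =>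
          mul_nonneg (sub_nonneg.2 (hoffb v j)) (hg0 j)
        have hQ : 0 ≤ ∑ j ∈ Finset.univ.erase v,
            (s * Sv v - (G.dist v j : ℝ) * Sv j) * g j := Finset.sum_nonneg hQnn
        constructor
        · linarith
        · rw [← Finset.sum_eq_zero_iff_of_nonneg hQnn]
          linarith
      have t1 : ∀ v, m l ≤ m (σ.symm v) := by
        intro v
        have h0 := (hterm0 v).1
        rcases mul_eq_zero.1 h0 with h1 | h1
        · exact absurd h1 (mul_pos ha (hSpos v)).ne'
        · have := max_eq_right_iff.1 h1
          linarith
      have t2 : ∀ v j, j ≠ v → (s * Sv v - (G.dist v j : ℝ) * Sv j) * g j = 0 := by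
        intro v j hj
        exact (hterm0 v).2 j (Finset.mem_erase.2 ⟨hj, Finset.mem_univ j⟩)
      -- a vertex with strictly larger value
      have hi₁ : ∃ i₁, m i₁ ≠ m l := by
        rcases eq_or_ne (m i₀) (m l) with h | h
        · exact ⟨j₀', by rw [← h]; exact fun hh => hij (by rw [hh])⟩
        · exact ⟨i₀, h⟩
      obtain ⟨i₁, hi₁⟩ := hi₁
      set j₀ : Fin n := σ i₁ with hj₀_def
      have hmmj₀ : m (σ.symm j₀) = m i₁ := by rw [hj₀_def]; simp
      have hgt : m l < m (σ.symm j₀) := by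
        rcases lt_or_eq_of_le (t1 j₀) with h | h
        · exact h
        · exact absurd (by rw [← hmmj₀, ← h]) hi₁
      have hgj₀ : 0 < g j₀ := by
        have hval : g j₀ = m (σ.symm j₀) - m l := by
          simp only [hg_def]; exact max_eq_left (by linarith)
        rw [hval]; linarith
      have h3 : ∀ v, v ≠ j₀ → s * Sv v = (G.dist v j₀ : ℝ) * Sv j₀ := by
        intro v hv
        have := t2 v j₀ (fun h => hv h.symm)
        rcases mul_eq_zero.1 this with h1 | h1
        · linarith [sub_eq_zero.1 h1]
        · exact absurd h1 hgj₀.ne'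
      have hfacts : ∀ v, v ≠ j₀ →
          Sv v = (Dmin : ℝ) ∧ (G.dist v j₀ : ℝ) = (diam : ℝ) ∧ Sv j₀ = (Dmax : ℝ) := by
        intro v hv
        have hE := h3 v hv
        have hub : (G.dist v j₀ : ℝ) * Sv j₀ ≤ (diam : ℝ) * (Dmax : ℝ) :=
          mul_le_mul (hdistdiam v j₀) (hSvDmax j₀) (hSpos j₀).le hdiampos.le
        have hlb : (diam : ℝ) * (Dmax : ℝ) ≤ s * Sv v := by
          rw [← hsd]
          exact mul_le_mul_of_nonneg_left (hDminSv v) hspos.le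
        have heq1 : s * Sv v = (diam : ℝ) * (Dmax : ℝ) := le_antisymm (hE ▸ hub) hlb
        have hSvv : Sv v = (Dmin : ℝ) := by
          have : s * Sv v = s * (Dmin : ℝ) := by rw [heq1, hsd]
          exact mul_left_cancel₀ hspos.ne' this
        have heq2 : (G.dist v j₀ : ℝ) * Sv j₀ = (diam : ℝ) * (Dmax : ℝ) := by
          rw [← hE]; exact heq1
        have hSj : Sv j₀ = (Dmax : ℝ) := by
          have hge : (diam : ℝ) * (Dmax : ℝ) ≤ (diam : ℝ) * Sv j₀ := by
            calc (diam : ℝ) * (Dmax : ℝ) = (G.dist v j₀ : ℝ) * Sv j₀ := heq2.symm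
              _ ≤ (diam : ℝ) * Sv j₀ :=
                mul_le_mul_of_nonneg_right (hdistdiam v j₀) (hSpos j₀).le
          have h5 : (Dmax : ℝ) ≤ Sv j₀ := le_of_mul_le_mul_left hge hdiampos
          exact le_antisymm (hSvDmax j₀) h5
        have hd : (G.dist v j₀ : ℝ) = (diam : ℝ) := by
          have : (G.dist v j₀ : ℝ) * Sv j₀ = (diam : ℝ) * Sv j₀ := by
            rw [heq2, hSj]
          exact mul_right_cancel₀ (hSpos j₀).ne' this
        exact ⟨hSvv, hd, hSj⟩
      obtain ⟨vo, hvo⟩ := hexists_ne j₀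
      have hSj₀ : Sv j₀ = (Dmax : ℝ) := (hfacts vo hvo).2.2
      by_cases hg2 : ∃ u, u ≠ j₀ ∧ 0 < g u
      · -- forces Dmax = Dmin, all values equal: contradiction
        obtain ⟨u, huj, hgu⟩ := hg2
        have h4 : s * Sv j₀ = (G.dist j₀ u : ℝ) * Sv u := by
          have := t2 j₀ u huj
          rcases mul_eq_zero.1 this with h1 | h1
          · linarith [sub_eq_zero.1 h1]
          · exact absurd h1 hgu.ne'
        have hSu : Sv u = (Dmin : ℝ) := (hfacts u huj).1
        have hr1 : (G.dist j₀ u : ℝ) * Sv u ≤ (diam : ℝ) * (Dmin : ℝ) := by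
          rw [hSu]
          exact mul_le_mul_of_nonneg_right (hdistdiam j₀ u) hDminpos.le
        have hr2 : (diam : ℝ) * (Dmax : ℝ) ≤ s * Sv j₀ := by
          rw [hSj₀, ← hsd]
          exact mul_le_mul_of_nonneg_left hDminmax hspos.le
        have hDle : (Dmax : ℝ) ≤ (Dmin : ℝ) := by
          have : (diam : ℝ) * (Dmax : ℝ) ≤ (diam : ℝ) * (Dmin : ℝ) := by linarith
          exact le_of_mul_le_mul_left this hdiampos
        have hDeq : (Dmax : ℝ) = (Dmin : ℝ) := le_antisymm hDle hDminmax
        have hSall : ∀ x, Sv x = (Dmin : ℝ) := by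
          intro x
          rcases eq_or_ne x j₀ with rfl | hx
          · rw [hSj₀, hDeq]
          · exact (hfacts x hx).1
        have hmall : ∀ i, m i = (Dmin : ℝ) := by
          intro i
          have hNv' : Nv (σ i) = (Dmin : ℝ) * Sv (σ i) := by
            rw [hNv_def]
            calc (∑ j, (G.dist (σ i) j : ℝ) * Sv j)
                = ∑ j, (G.dist (σ i) j : ℝ) * (Dmin : ℝ) :=
                  Finset.sum_congr rfl (fun j _ => by rw [hSall j])
              _ = (∑ j, (G.dist (σ i) j : ℝ)) * (Dmin : ℝ) := by
                  rw [Finset.sum_mul]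
              _ = (Dmin : ℝ) * Sv (σ i) := by rw [hSv_def]; ring
          rw [hmS i, hNv', mul_div_assoc, div_self (hSpos (σ i)).ne', mul_one]
        exact hi₁ (by rw [hmall i₁, hmall l])
      · -- unique exceptional vertex: contradiction
        push_neg at hg2
        have hmv_eq : ∀ u, u ≠ j₀ → m (σ.symm u) = m l := by
          intro u hu
          have h5 : g u = 0 := le_antisymm (hg2 u hu) (hg0 u)
          have h6 : m (σ.symm u) - m l ≤ 0 := by
            by_contra h7
            push_neg at h7
            have : g u = m (σ.symm u) - m l := by
              simp only [hg_def]; exact max_eq_left (by linarith)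
            rw [h5] at this
            linarith
          have := t1 u
          linarith
        have hNvj₀ : Nv j₀ = (Dmin : ℝ) * Sv j₀ := by
          rw [hNv_def]
          calc (∑ k, (G.dist j₀ k : ℝ) * Sv k)
              = ∑ k, (G.dist j₀ k : ℝ) * (Dmin : ℝ) := by
                apply Finset.sum_congr rfl
                intro k _
                rcases eq_or_ne k j₀ with rfl | hk
                · rw [SimpleGraph.dist_self]; push_cast; ring
                · rw [(hfacts k hk).1]
            _ = (∑ k, (G.dist j₀ k : ℝ)) * (Dmin : ℝ) := by rw [Finset.sum_mul]
            _ = (Dmin : ℝ) * Sv j₀ := by rw [hSv_def]; ring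
        have hmmDmin : m (σ.symm j₀) = (Dmin : ℝ) := by
          have h8 := hmS (σ.symm j₀)
          rw [Equiv.apply_symm_apply] at h8
          rw [h8, hNvj₀, mul_div_assoc, div_self (hSpos j₀).ne', mul_one]
        have hmlt : m l < (Dmin : ℝ) := by rw [← hmmDmin]; exact hgt
        have hSvo : Sv vo = (Dmin : ℝ) := (hfacts vo hvo).1
        have hNvo : Nv vo = (diam : ℝ) * (Dmax : ℝ)
            + ((Dmin : ℝ) - (diam : ℝ)) * (Dmin : ℝ) := by
          have hsplitN : Nv vo = (G.dist vo j₀ : ℝ) * Sv j₀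
              + ∑ k ∈ Finset.univ.erase j₀, (G.dist vo k : ℝ) * Sv k := by
            simp only [hNv_def]
            rw [← Finset.add_sum_erase Finset.univ (fun k => (G.dist vo k : ℝ) * Sv k)
              (Finset.mem_univ j₀)]
          have hrest : ∑ k ∈ Finset.univ.erase j₀, (G.dist vo k : ℝ) * Sv k
              = ((Dmin : ℝ) - (diam : ℝ)) * (Dmin : ℝ) := by
            calc ∑ k ∈ Finset.univ.erase j₀, (G.dist vo k : ℝ) * Sv k
                = ∑ k ∈ Finset.univ.erase j₀, (G.dist vo k : ℝ) * (Dmin : ℝ) := by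
                  apply Finset.sum_congr rfl
                  intro k hk
                  rcases eq_or_ne k vo with rfl | hk2
                  · rw [hSvo]
                  · rw [((hfacts k (Finset.mem_erase.1 hk).1).1)]
              _ = (∑ k ∈ Finset.univ.erase j₀, (G.dist vo k : ℝ)) * (Dmin : ℝ) := by
                  rw [Finset.sum_mul]
              _ = (Sv vo - (G.dist vo j₀ : ℝ)) * (Dmin : ℝ) := by
                  congr 1
                  have := Finset.add_sum_erase Finset.univ (fun k => (G.dist vo k : ℝ))
                    (Finset.mem_univ j₀)
                  have hSvdef : Sv vo = ∑ k, (G.dist vo k : ℝ) := by rw [hSv_def]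
                  rw [hSvdef]
                  linarith [this]
              _ = ((Dmin : ℝ) - (diam : ℝ)) * (Dmin : ℝ) := by
                  rw [hSvo, (hfacts vo hvo).2.1]
          rw [hsplitN, hrest, (hfacts vo hvo).2.1, hSj₀]
        have hNvo2 : Nv vo = m l * (Dmin : ℝ) := by
          rw [hNS vo, hmv_eq vo hvo, hSvo]
        have hfin : m l * (Dmin : ℝ) = (diam : ℝ) * (Dmax : ℝ)
            + ((Dmin : ℝ) - (diam : ℝ)) * (Dmin : ℝ) := by rw [← hNvo2, hNvo]
        nlinarith [mul_lt_mul_of_pos_right hmlt hDminpos,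
          mul_le_mul_of_nonneg_left hDminmax hdiampos.le]
    · -- strictness: contradiction with equality
      push_neg at hall
      obtain ⟨v₀, hv₀⟩ := hall
      have hAoff : ∀ i j, i ≠ j → 0 < A i j := by
        intro i j hij2
        rw [hAapp]
        exact_mod_cast hconn.pos_dist_of_ne hij2
      have hstrict := lt_of_le_of_ne (hM v₀) hv₀
      have hlt := strict_improve hn0 A hAnn hAoff w hw_pos lam hlam_pos hM v₀ hstrict
      exact (ne_of_lt hlt) heq

  · -- m constant implies equality
    intro hc
    have hTzero : T = 0 := by
      rw [hT_def]
      apply Finset.sum_eq_zero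
      intro i _
      rw [hc i l]; ring
    have hRv : R = m l + s := by
      rw [hR_def, hTzero, mul_zero, add_zero]
      exact Real.sqrt_sq (by linarith)
    have hlam_eq : lam = m l := by rw [hlam_def, hRv]; ring
    rw [hlam_eq]
    apply le_antisymm (hlam_eq ▸ part1)
    -- lower bound: m l is an eigenvalue
    set vC : Fin n → ℂ := fun j => ((Sv j : ℝ) : ℂ) with hvC_def
    have hMv : ((algebraMap ℂ (Matrix (Fin n) (Fin n) ℂ)) ((m l : ℝ) : ℂ)
        - A.map Complex.ofReal).mulVec vC = 0 := by
      funext i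
      rw [Matrix.sub_mulVec]
      simp only [Pi.sub_apply, Pi.zero_apply, sub_eq_zero]
      have h1 : ((algebraMap ℂ (Matrix (Fin n) (Fin n) ℂ)) ((m l : ℝ) : ℂ)).mulVec vC i
          = ((m l : ℝ) : ℂ) * vC i := by
        simp [Matrix.algebraMap_eq_diagonal, Matrix.mulVec_diagonal]
      have h2 : ((A.map Complex.ofReal).mulVec vC) i = ((Nv i : ℝ) : ℂ) := by
        simp only [Matrix.mulVec, dotProduct, Matrix.map_apply, hvC_def]
        rw [hNv_def]
        push_cast
        apply Finset.sum_congr rfl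
        intro j _
        rw [hAapp]
        push_cast
        ring
      rw [h1, h2, hNS i, hc ((Equiv.symm σ) i) l]
      rw [hvC_def]
      push_cast
      ring
    have hspec : ((m l : ℝ) : ℂ) ∈ spectrum ℂ (A.map Complex.ofReal) := by
      rw [spectrum.mem_iff]
      intro hunit
      obtain ⟨U, hU⟩ := hunit
      have h1 : (↑U : Matrix (Fin n) (Fin n) ℂ).mulVec vC = 0 := by rw [hU]; exact hMv
      have h0 : vC = 0 := by
        calc vC = (1 : Matrix (Fin n) (Fin n) ℂ).mulVec vC := (Matrix.one_mulVec vC).symm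
          _ = ((↑U⁻¹ * ↑U : Matrix (Fin n) (Fin n) ℂ)).mulVec vC := by rw [Units.inv_mul]
          _ = (↑U⁻¹ : Matrix (Fin n) (Fin n) ℂ).mulVec
                ((↑U : Matrix (Fin n) (Fin n) ℂ).mulVec vC) := by
              rw [Matrix.mulVec_mulVec]
          _ = 0 := by rw [h1, Matrix.mulVec_zero]
      have h2 := congrFun h0 ⟨0, hn0⟩
      simp only [hvC_def, Pi.zero_apply, Complex.ofReal_eq_zero] at h2
      exact (hSpos ⟨0, hn0⟩).ne' h2
    have hbdd : BddAbove {x : ℝ | ∃ μ ∈ spectrum ℂ (A.map Complex.ofReal),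
        x = ‖μ‖} := by
      refine ⟨lam, ?_⟩
      rintro x ⟨μ, hμ, rfl⟩
      exact cw_abs hn0 A hAnn w hw_pos lam hM μ hμ
    have hmem : m l ∈ {x : ℝ | ∃ μ ∈ spectrum ℂ (A.map Complex.ofReal),
        x = ‖μ‖} :=
      ⟨((m l : ℝ) : ℂ), hspec, by rw [Complex.norm_real, Real.norm_eq_abs, abs_of_nonneg hml_pos.le]⟩
    exact le_csSup hbdd hmem
end

section
/- Let G be a graph on n ≥ 2 vertices without isolated vertices, with average 2-degrees m_1 ≥ ... ≥ m_n. Then for each 1 ≤ l ≤ n, ρ(A(G)) ≤ (m_l − d_max/d_min + √((m_l + d_max/d_min)² + 4(d_max/d_min)(l−1)(m_1 − m_l)))/2; if moreover G is connected, equality holds if and only if m_1 = ... = m_n. -/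
open Matrix BigOperators Finset

lemma spec_iff_eig {n : ℕ} (M : Matrix (Fin n) (Fin n) ℂ) (μ : ℂ) :
    μ ∈ spectrum ℂ M ↔ ∃ v, v ≠ 0 ∧ M.mulVec v = μ • v := by
  rw [← AlgEquiv.spectrum_eq (Matrix.toLinAlgEquiv <| Pi.basisFun ℂ (Fin n)),
    ← Module.End.hasEigenvalue_iff_mem_spectrum]
  have hA : ∀ vec : Fin n → ℂ,
      (Matrix.toLinAlgEquiv (Pi.basisFun ℂ (Fin n)) M) vec = M.mulVec vec := by
    intro vec
    rw [Matrix.toLinAlgEquiv_apply]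
    have hrepr : ⇑((Pi.basisFun ℂ (Fin n)).repr vec) = vec := by funext j; simp
    rw [hrepr]
    funext i
    simp [Pi.basisFun_apply, Finset.sum_apply, Pi.single_apply]
  constructor
  · intro h
    obtain ⟨v, hv⟩ := h.exists_hasEigenvector
    refine ⟨v, hv.2, ?_⟩
    have := hv.apply_eq_smul
    rwa [hA] at this
  · rintro ⟨v, hv0, hveq⟩
    exact Module.End.hasEigenvalue_of_hasEigenvector
      ⟨Module.End.mem_eigenspace_iff.mpr (by rwa [hA]), hv0⟩

lemma spec_nonempty {n : ℕ} (hn : 0 < n) (M : Matrix (Fin n) (Fin n) ℂ) :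
    (spectrum ℂ M).Nonempty := by
  have hne : Nonempty (Fin n) := ⟨⟨0, hn⟩⟩
  have : Nontrivial (Fin n → ℂ) := by infer_instance
  obtain ⟨μ, hμ⟩ := Module.End.exists_eigenvalue
    ((Matrix.toLinAlgEquiv (Pi.basisFun ℂ (Fin n))) M)
  rw [Module.End.hasEigenvalue_iff_mem_spectrum,
    AlgEquiv.spectrum_eq (Matrix.toLinAlgEquiv <| Pi.basisFun ℂ (Fin n))] at hμ
  exact ⟨μ, hμ⟩

lemma adj_map_ofReal {n : ℕ} (G : SimpleGraph (Fin n)) [DecidableRel G.Adj] :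
    (G.adjMatrix ℝ).map Complex.ofReal = G.adjMatrix ℂ := by
  ext i j
  simp [Matrix.map_apply, SimpleGraph.adjMatrix_apply, apply_ite Complex.ofReal]

lemma gersh_core {n : ℕ} (G : SimpleGraph (Fin n)) [DecidableRel G.Adj]
    (w : Fin n → ℝ) (hw : ∀ i, 0 < w i) (x : ℝ)
    (hR : ∀ v, ∑ j ∈ G.neighborFinset v, w j ≤ x * w v) :
    ∀ y ∈ {y : ℝ | ∃ μ ∈ spectrum ℂ ((G.adjMatrix ℝ).map Complex.ofReal),
      y = ‖μ‖}, y ≤ x := by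
  rintro y ⟨μ, hμ, rfl⟩
  rw [adj_map_ofReal, spec_iff_eig] at hμ
  obtain ⟨v, hv0, hveq⟩ := hμ
  obtain ⟨k, hk⟩ := Function.ne_iff.mp hv0
  obtain ⟨i, -, hi⟩ := Finset.exists_max_image (univ : Finset (Fin n))
    (fun j => ‖v j‖ / w j) ⟨k, mem_univ k⟩
  have hvk : 0 < ‖v k‖ / w k :=
    div_pos (by simpa using hk) (hw k)
  have hvi : 0 < ‖v i‖ := by
    have h2 : 0 < ‖v i‖ / w i := lt_of_lt_of_le hvk (hi k (mem_univ k))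
    by_contra h
    push_neg at h
    have : ‖v i‖ = 0 := le_antisymm h (norm_nonneg _)
    rw [this, zero_div] at h2
    exact lt_irrefl 0 h2
  have hbound : ∀ j, ‖v j‖ ≤ ‖v i‖ / w i * w j := by
    intro j
    have := hi j (mem_univ j)
    calc ‖v j‖ = ‖v j‖ / w j * w j :=
          (div_mul_cancel₀ _ (hw j).ne').symm
      _ ≤ ‖v i‖ / w i * w j :=
          mul_le_mul_of_nonneg_right this (hw j).le
  have hmv : ∑ j ∈ G.neighborFinset i, v j = μ * v i := by
    have := congrFun hveq i
    rwa [Pi.smul_apply, smul_eq_mul, SimpleGraph.adjMatrix_mulVec_apply] at this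
  have key : ‖μ‖ * ‖v i‖ ≤ x * ‖v i‖ := by
    calc ‖μ‖ * ‖v i‖ = ‖μ * v i‖ := (norm_mul _ _).symm
      _ = ‖∑ j ∈ G.neighborFinset i, v j‖ := by rw [hmv]
      _ ≤ ∑ j ∈ G.neighborFinset i, ‖v j‖ :=
          norm_sum_le _ _
      _ ≤ ∑ j ∈ G.neighborFinset i, ‖v i‖ / w i * w j :=
          Finset.sum_le_sum fun j _ => hbound j
      _ = ‖v i‖ / w i * ∑ j ∈ G.neighborFinset i, w j := by
          rw [Finset.mul_sum]
      _ ≤ ‖v i‖ / w i * (x * w i) :=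
          mul_le_mul_of_nonneg_left (hR i) (div_nonneg (norm_nonneg _) (hw i).le)
      _ = x * ‖v i‖ := by
          rw [mul_comm x (w i), ← mul_assoc, div_mul_cancel₀ _ (hw i).ne', mul_comm]
  exact le_of_mul_le_mul_right key hvi

lemma gersh_eq {n : ℕ} (G : SimpleGraph (Fin n)) [DecidableRel G.Adj] (hc : G.Connected)
    (w : Fin n → ℝ) (hw : ∀ i, 0 < w i) (x : ℝ)
    (hR : ∀ v, ∑ j ∈ G.neighborFinset v, w j ≤ x * w v)
    (μ : ℂ) (hμ : μ ∈ spectrum ℂ ((G.adjMatrix ℝ).map Complex.ofReal))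
    (habs : ‖μ‖ = x) :
    ∀ v, ∑ j ∈ G.neighborFinset v, w j = x * w v := by
  rw [adj_map_ofReal, spec_iff_eig] at hμ
  obtain ⟨v, hv0, hveq⟩ := hμ
  set c : Fin n → ℝ := fun j => ‖v j‖ / w j with hc_def
  obtain ⟨k, hk⟩ := Function.ne_iff.mp hv0
  obtain ⟨i0, -, hi0⟩ := Finset.exists_max_image (univ : Finset (Fin n)) c ⟨k, mem_univ k⟩
  have hcpos : 0 < c i0 :=
    lt_of_lt_of_le (div_pos (by simpa using hk) (hw k)) (hi0 k (mem_univ k))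
  have habsc : ∀ j, ‖v j‖ = c j * w j := fun j =>
    (div_mul_cancel₀ _ (hw j).ne').symm
  have key : ∀ i, c i = c i0 →
      (∀ j, G.Adj i j → c j = c i0) ∧ ∑ j ∈ G.neighborFinset i, w j = x * w i := by
    intro i hci
    have hmv : ∑ j ∈ G.neighborFinset i, v j = μ * v i := by
      have := congrFun hveq i
      rwa [Pi.smul_apply, smul_eq_mul, SimpleGraph.adjMatrix_mulVec_apply] at this
    have e0 : x * (c i0 * w i) = ‖∑ j ∈ G.neighborFinset i, v j‖ := by
      rw [hmv, norm_mul, habs, habsc i, hci]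
    have h1 : ‖∑ j ∈ G.neighborFinset i, v j‖
        ≤ ∑ j ∈ G.neighborFinset i, c j * w j := by
      refine le_trans (norm_sum_le _ _) ?_
      exact le_of_eq (Finset.sum_congr rfl fun j _ => habsc j)
    have h2 : ∀ j ∈ G.neighborFinset i, c j * w j ≤ c i0 * w j := fun j _ =>
      mul_le_mul_of_nonneg_right (hi0 j (mem_univ j)) (hw j).le
    have h3 : c i0 * ∑ j ∈ G.neighborFinset i, w j ≤ c i0 * (x * w i) :=
      mul_le_mul_of_nonneg_left (hR i) hcpos.le
    -- chain equalities
    have hchain : ∑ j ∈ G.neighborFinset i, c j * w j = ∑ j ∈ G.neighborFinset i, c i0 * w j ∧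
        c i0 * ∑ j ∈ G.neighborFinset i, w j = c i0 * (x * w i) := by
      have hA : x * (c i0 * w i) ≤ ∑ j ∈ G.neighborFinset i, c j * w j := e0 ▸ h1
      have hB : ∑ j ∈ G.neighborFinset i, c j * w j
          ≤ ∑ j ∈ G.neighborFinset i, c i0 * w j := Finset.sum_le_sum h2
      have hBC : ∑ j ∈ G.neighborFinset i, c i0 * w j
          = c i0 * ∑ j ∈ G.neighborFinset i, w j := by rw [Finset.mul_sum]
      have hC : c i0 * (x * w i) = x * (c i0 * w i) := by ring
      constructor
      · linarith [hBC ▸ h3]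
      · linarith [hBC ▸ hB]
    constructor
    · intro j hadj
      have := (Finset.sum_eq_sum_iff_of_le h2).mp hchain.1 j
        (by rwa [SimpleGraph.mem_neighborFinset])
      exact mul_right_cancel₀ (hw j).ne' this
    · exact mul_left_cancel₀ hcpos.ne' hchain.2
  have hall : ∀ i, c i = c i0 := by
    have step : ∀ a b : Fin n, G.Adj a b → c a = c i0 → c b = c i0 :=
      fun a b hab ha => (key a ha).1 b hab
    have hall0 : ∀ (a b : Fin n), G.Walk a b → c a = c i0 → c b = c i0 := by
      intro a b p
      induction p with
      | nil => exact id
      | cons h p ih => exact fun ha => ih (step _ _ h ha)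
    intro i
    obtain ⟨p⟩ := hc.preconnected i0 i
    exact hall0 _ _ p rfl
  exact fun i => (key i (hall i)).2

set_option maxHeartbeats 2000000 in
theorem stmt18 {n : ℕ} (hn : 2 ≤ n) (G : SimpleGraph (Fin n)) [DecidableRel G.Adj]
    (hiso : ∀ v, 0 < G.degree v)
    (m : Fin n → ℝ) (σ : Equiv.Perm (Fin n))
    (hm : ∀ i, m i =
      (∑ j ∈ G.neighborFinset (σ i), (G.degree j : ℝ)) / (G.degree (σ i) : ℝ))
    (hmono : Antitone m) (dmax dmin : ℕ)
    (hdmax : ∀ v, G.degree v ≤ dmax) (hdmax' : ∃ v, G.degree v = dmax)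
    (hdmin : ∀ v, dmin ≤ G.degree v) (hdmin' : ∃ v, G.degree v = dmin)
    (l : Fin n) :
    specRad (G.adjMatrix ℝ) ≤ (m l - (dmax : ℝ) / (dmin : ℝ) +
      Real.sqrt ((m l + (dmax : ℝ) / (dmin : ℝ)) ^ 2 +
        4 * ((dmax : ℝ) / (dmin : ℝ)) * (l : ℝ) *
          (m (⟨0, by omega⟩ : Fin n) - m l))) / 2 ∧
    (G.Connected →
      (specRad (G.adjMatrix ℝ) = (m l - (dmax : ℝ) / (dmin : ℝ) +
        Real.sqrt ((m l + (dmax : ℝ) / (dmin : ℝ)) ^ 2 +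
          4 * ((dmax : ℝ) / (dmin : ℝ)) * (l : ℝ) *
            (m (⟨0, by omega⟩ : Fin n) - m l))) / 2 ↔
        ∀ i j, m i = m j)) := by
  have hn0 : 0 < n := by omega
  -- degrees
  have hdeg : ∀ v, (0:ℝ) < (G.degree v : ℝ) := fun v => by exact_mod_cast hiso v
  obtain ⟨v1, hv1⟩ := hdmin'
  have hdmin1 : 1 ≤ dmin := hv1 ▸ hiso v1
  have hminmax : dmin ≤ dmax := hv1 ▸ hdmax v1
  have hdminR : (0:ℝ) < (dmin:ℝ) := by exact_mod_cast hdmin1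
  set b : ℝ := (dmax : ℝ) / (dmin : ℝ) with hbdef
  clear_value b
  have hb1 : 1 ≤ b := by
    rw [hbdef]
    exact (one_le_div hdminR).mpr (by exact_mod_cast hminmax)
  have hb0 : (0:ℝ) < b := lt_of_lt_of_le one_pos hb1
  set m0 : ℝ := m (⟨0, by omega⟩ : Fin n) with hm0def
  clear_value m0
  -- average 2-degrees per vertex
  set MM : Fin n → ℝ :=
    fun v => (∑ j ∈ G.neighborFinset v, (G.degree j : ℝ)) / (G.degree v : ℝ) with hMMdef
  clear_value MM
  have hmMM : ∀ i, m i = MM (σ i) := fun i => by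
    simp only [hMMdef]; exact hm i
  have hMMm : ∀ v, MM v = m (σ.symm v) := fun v => by
    rw [hmMM (σ.symm v), Equiv.apply_symm_apply]
  have hMM0 : ∀ v, 0 ≤ MM v := by
    intro v
    simp only [hMMdef]
    exact div_nonneg (Finset.sum_nonneg fun j _ => (hdeg j).le) (hdeg v).le
  have hml0 : 0 ≤ m l := by rw [hmMM l]; exact hMM0 _
  have hm0ml : m l ≤ m0 := by
    rw [hm0def]; exact hmono (Fin.le_def.mpr (Nat.zero_le _))
  set x : ℝ := (m l - b + Real.sqrt ((m l + b) ^ 2 + 4 * b * (l : ℝ) * (m0 - m l))) / 2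
    with hxdef
  clear_value x
  have hD0 : (0:ℝ) ≤ (m l + b) ^ 2 + 4 * b * (l : ℝ) * (m0 - m l) := by
    have hl0 : (0:ℝ) ≤ (l:ℝ) := by positivity
    have h4 : (0:ℝ) ≤ 4 * b * (l:ℝ) * (m0 - m l) :=
      mul_nonneg (mul_nonneg (by positivity) hl0) (by linarith)
    nlinarith [sq_nonneg (m l + b)]
  have hsqrt : Real.sqrt ((m l + b) ^ 2 + 4 * b * (l : ℝ) * (m0 - m l)) = 2*x - m l + b := by
    rw [hxdef]; ring
  have hs0 : m l + b ≤ 2*x - m l + b := by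
    rw [← hsqrt]
    have h1 : m l + b ≤ Real.sqrt ((m l + b)^2) := by
      rw [Real.sqrt_sq (by positivity)]
    refine le_trans h1 (Real.sqrt_le_sqrt ?_)
    have hl0 : (0:ℝ) ≤ (l:ℝ) := by positivity
    have h4 : (0:ℝ) ≤ 4 * b * (l:ℝ) * (m0 - m l) :=
      mul_nonneg (mul_nonneg (by positivity) hl0) (by linarith)
    linarith
  have hxml : m l ≤ x := by linarith
  have hx0 : 0 ≤ x := le_trans hml0 hxml
  have hcpos : (0:ℝ) < x + b := by linarith
  have hkey : (x - m l) * (x + b) = b * ((l:ℝ) * (m0 - m l)) := by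
    have h2 : (2*x - m l + b)^2 = (m l + b) ^ 2 + 4 * b * (l : ℝ) * (m0 - m l) := by
      rw [← hsqrt]; exact Real.sq_sqrt hD0
    nlinarith [h2]
  -- weights
  set u : Fin n → ℝ := fun v => 1 + max (MM v - m l) 0 / (x + b) with hudef
  clear_value u
  set w : Fin n → ℝ := fun v => u v * (G.degree v : ℝ) with hwdef
  clear_value w
  set Sg : ℝ := ∑ v, max (MM v - m l) 0 with hSgdef
  clear_value Sg
  have hu1 : ∀ v, 1 ≤ u v := fun v => by
    simp only [hudef]
    exact le_add_of_nonneg_right (div_nonneg (le_max_right _ _) hcpos.le)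
  have hw0 : ∀ v, 0 < w v := fun v => by
    simp only [hwdef]
    exact mul_pos (lt_of_lt_of_le one_pos (hu1 v)) (hdeg v)
  -- Sg ≤ l * (m0 - m l), with termwise control
  have hterm : ∀ i : Fin n, max (m i - m l) 0 ≤ (if (i:ℕ) < (l:ℕ) then m0 - m l else 0) := by
    intro i
    by_cases hil : (i:ℕ) < (l:ℕ)
    · simp only [hil, if_true]
      refine max_le ?_ (by linarith)
      have : m i ≤ m0 := by
        rw [hm0def]; exact hmono (Fin.le_def.mpr (Nat.zero_le _))
      linarith
    · simp only [hil, if_false]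
      have hli : l ≤ i := Fin.le_def.mpr (by omega)
      have : m i ≤ m l := hmono hli
      exact max_le (by linarith) le_rfl
  have hSgm : Sg = ∑ i : Fin n, max (m i - m l) 0 := by
    rw [hSgdef, ← Equiv.sum_comp σ (fun v => max (MM v - m l) 0)]
    exact Finset.sum_congr rfl fun i _ => by rw [← hmMM i]
  have hSgSh : Sg ≤ (l:ℝ) * (m0 - m l) := by
    rw [hSgm]
    calc ∑ i : Fin n, max (m i - m l) 0
        ≤ ∑ i : Fin n, (if (i:ℕ) < (l:ℕ) then m0 - m l else 0) :=
          Finset.sum_le_sum fun i _ => hterm i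
      _ = (l:ℝ) * (m0 - m l) := by
          rw [Finset.sum_ite, Finset.sum_const, Finset.sum_const_zero, add_zero]
          have hcard : (Finset.filter (fun i : Fin n => (i:ℕ) < (l:ℕ)) Finset.univ).card
              = (l:ℕ) := by
            have : Finset.filter (fun i : Fin n => (i:ℕ) < (l:ℕ)) Finset.univ
                = Finset.Iio l := by
              ext i
              simp only [Finset.mem_filter, Finset.mem_univ, true_and, Finset.mem_Iio,
                Fin.lt_def]
            rw [this, Fin.card_Iio]
          rw [hcard, nsmul_eq_mul]
      _ = (l:ℝ) * (m0 - m l) := rfl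
  have hbT : b * Sg ≤ (x - m l) * (x + b) := by
    rw [hkey]
    exact mul_le_mul_of_nonneg_left hSgSh hb0.le
  -- degree comparison
  have hdj : ∀ j v : Fin n, (G.degree j : ℝ) ≤ b * (G.degree v : ℝ) := by
    intro j v
    have h1 : (G.degree j : ℝ) ≤ (dmax : ℝ) := by exact_mod_cast hdmax j
    have h2 : (dmin : ℝ) ≤ (G.degree v : ℝ) := by exact_mod_cast hdmin v
    have h3 : b * (dmin:ℝ) = (dmax:ℝ) := by
      rw [hbdef]; exact div_mul_cancel₀ _ hdminR.ne'
    nlinarith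
  -- sum of u-1 over all vertices
  have husum : ∑ j : Fin n, (u j - 1) = Sg / (x + b) := by
    rw [hSgdef, Finset.sum_div]
    exact Finset.sum_congr rfl fun j _ => by simp only [hudef]; ring
  have huerase : ∀ v, ∑ j ∈ Finset.univ.erase v, (u j - 1) = Sg / (x + b) - (u v - 1) := by
    intro v
    rw [← husum]
    exact Finset.sum_erase_eq_sub (mem_univ v)
  -- decomposition of the weighted neighbor sum
  have hrowsum : ∀ v, ∑ j ∈ G.neighborFinset v, w j
      = MM v * (G.degree v : ℝ) + ∑ j ∈ G.neighborFinset v, (u j - 1) * (G.degree j : ℝ) := by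
    intro v
    have h1 : ∑ j ∈ G.neighborFinset v, (G.degree j : ℝ) = MM v * (G.degree v : ℝ) := by
      simp only [hMMdef]
      exact (div_mul_cancel₀ _ (hdeg v).ne').symm
    calc ∑ j ∈ G.neighborFinset v, w j
        = ∑ j ∈ G.neighborFinset v, ((G.degree j : ℝ) + (u j - 1) * (G.degree j : ℝ)) := by
          refine Finset.sum_congr rfl fun j _ => ?_
          simp only [hwdef]; ring
      _ = ∑ j ∈ G.neighborFinset v, (G.degree j : ℝ)
          + ∑ j ∈ G.neighborFinset v, (u j - 1) * (G.degree j : ℝ) := Finset.sum_add_distrib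
      _ = _ := by rw [h1]
  -- bound on the correction term
  have hL : ∀ v, ∑ j ∈ G.neighborFinset v, (u j - 1) * (G.degree j : ℝ)
      ≤ b * (G.degree v : ℝ) * (Sg / (x + b) - (u v - 1)) := by
    intro v
    have hsubset : G.neighborFinset v ⊆ Finset.univ.erase v := by
      intro j hj
      rw [SimpleGraph.mem_neighborFinset] at hj
      exact Finset.mem_erase.mpr ⟨(G.ne_of_adj hj).symm, mem_univ j⟩
    calc ∑ j ∈ G.neighborFinset v, (u j - 1) * (G.degree j : ℝ)
        ≤ ∑ j ∈ G.neighborFinset v, (u j - 1) * (b * (G.degree v : ℝ)) :=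
          Finset.sum_le_sum fun j _ =>
            mul_le_mul_of_nonneg_left (hdj j v) (by linarith [hu1 j])
      _ ≤ ∑ j ∈ Finset.univ.erase v, (u j - 1) * (b * (G.degree v : ℝ)) :=
          Finset.sum_le_sum_of_subset_of_nonneg hsubset fun j _ _ =>
            mul_nonneg (by linarith [hu1 j]) (by positivity)
      _ = b * (G.degree v : ℝ) * (Sg / (x + b) - (u v - 1)) := by
          rw [← Finset.sum_mul, huerase v]; ring
  -- the scalar inequality and row bound
  have hrow : ∀ v, ∑ j ∈ G.neighborFinset v, w j ≤ x * w v := by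
    intro v
    have hq : max (MM v - m l) 0 = (max (MM v - m l) 0 / (x + b)) * (x + b) :=
      (div_mul_cancel₀ _ hcpos.ne').symm
    have hbS : b * (Sg / (x + b)) ≤ x - m l := by
      have h : b * (Sg / (x+b)) = b * Sg / (x+b) := by ring
      rw [h, div_le_iff₀ hcpos]
      linarith [hbT]
    have hmx : MM v - m l ≤ max (MM v - m l) 0 := le_max_left _ _
    have hscalar : MM v + b * (Sg / (x + b)) - b * (max (MM v - m l) 0 / (x + b))
        ≤ x * u v := by
      simp only [hudef]
      have expand : x * (1 + max (MM v - m l) 0 / (x + b))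
          = x + x * (max (MM v - m l) 0 / (x + b)) := by ring
      rw [expand]
      have hq' : max (MM v - m l) 0
          = x * (max (MM v - m l) 0 / (x + b)) + b * (max (MM v - m l) 0 / (x + b)) := by
        calc max (MM v - m l) 0 = (max (MM v - m l) 0 / (x + b)) * (x + b) := hq
          _ = _ := by ring
      linarith
    have := mul_le_mul_of_nonneg_right hscalar (hdeg v).le
    calc ∑ j ∈ G.neighborFinset v, w j
        = MM v * (G.degree v : ℝ) + ∑ j ∈ G.neighborFinset v, (u j - 1) * (G.degree j : ℝ) :=
          hrowsum v
      _ ≤ MM v * (G.degree v : ℝ) + b * (G.degree v : ℝ) * (Sg / (x + b) - (u v - 1)) := by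
          linarith [hL v]
      _ = (MM v + b * (Sg / (x + b)) - b * (max (MM v - m l) 0 / (x + b))) * (G.degree v : ℝ) := by
          simp only [hudef]; ring
      _ ≤ x * u v * (G.degree v : ℝ) := this
      _ = x * w v := by simp only [hwdef]; ring
  -- part 1
  have hspecRad : specRad (G.adjMatrix ℝ) = sSup {y : ℝ |
      ∃ μ ∈ spectrum ℂ ((G.adjMatrix ℝ).map Complex.ofReal), y = ‖μ‖} := rfl
  have hcore := gersh_core G w hw0 x hrow
  have hpart1 : specRad (G.adjMatrix ℝ) ≤ x := by
    rw [hspecRad]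
    exact Real.sSup_le hcore hx0
  have hBdd : BddAbove {y : ℝ |
      ∃ μ ∈ spectrum ℂ ((G.adjMatrix ℝ).map Complex.ofReal), y = ‖μ‖} :=
    ⟨x, fun y hy => hcore y hy⟩
  refine ⟨hpart1, ?_⟩
  intro hconn
  constructor
  · -- equality implies all average 2-degrees equal
    intro heq
    -- the supremum is attained
    have hSeq : {y : ℝ | ∃ μ ∈ spectrum ℂ ((G.adjMatrix ℝ).map Complex.ofReal),
        y = ‖μ‖} = (‖·‖) '' (spectrum ℂ ((G.adjMatrix ℝ).map Complex.ofReal)) := by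
      ext y
      simp only [Set.mem_setOf_eq, Set.mem_image]
      constructor
      · rintro ⟨μ, hμ, rfl⟩; exact ⟨μ, hμ, rfl⟩
      · rintro ⟨μ, hμ, rfl⟩; exact ⟨μ, hμ, rfl⟩
    have hfin : {y : ℝ | ∃ μ ∈ spectrum ℂ ((G.adjMatrix ℝ).map Complex.ofReal),
        y = ‖μ‖}.Finite := by
      rw [hSeq]
      exact (Matrix.finite_spectrum _).image _
    have hne : {y : ℝ | ∃ μ ∈ spectrum ℂ ((G.adjMatrix ℝ).map Complex.ofReal),
        y = ‖μ‖}.Nonempty := by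
      obtain ⟨μ0, hμ0⟩ := spec_nonempty hn0 ((G.adjMatrix ℝ).map Complex.ofReal)
      exact ⟨‖μ0‖, μ0, hμ0, rfl⟩
    have hmem := Set.Nonempty.csSup_mem hne hfin
    rw [← hspecRad, heq] at hmem
    obtain ⟨μ, hμ, habs⟩ := hmem
    have hRoweq := gersh_eq G hconn w hw0 x hrow μ hμ habs.symm
    -- per-vertex scalar equalities
    have hstepA : ∀ v, (∑ j ∈ G.neighborFinset v, (u j - 1) * (G.degree j : ℝ)
          = b * (G.degree v : ℝ) * (Sg / (x + b) - (u v - 1)))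
        ∧ max (MM v - m l) 0 = MM v - m l
        ∧ b * (Sg / (x + b)) = x - m l := by
      intro v
      have h1 := hRoweq v
      rw [hrowsum v] at h1
      have h2 := hL v
      -- upper bound of the middle expression
      have hq : max (MM v - m l) 0 = (max (MM v - m l) 0 / (x + b)) * (x + b) :=
        (div_mul_cancel₀ _ hcpos.ne').symm
      have hbS : b * (Sg / (x + b)) ≤ x - m l := by
        have h : b * (Sg / (x+b)) = b * Sg / (x+b) := by ring
        rw [h, div_le_iff₀ hcpos]
        linarith [hbT]
      have hmx : MM v - m l ≤ max (MM v - m l) 0 := le_max_left _ _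
      have hmx0 : 0 ≤ max (MM v - m l) 0 := le_max_right _ _
      have hBle : MM v * (G.degree v : ℝ)
          + b * (G.degree v : ℝ) * (Sg / (x + b) - (u v - 1)) ≤ x * w v := by
        have hscalar : MM v + b * (Sg / (x + b)) - b * (max (MM v - m l) 0 / (x + b))
            ≤ x * u v := by
          simp only [hudef]
          have expand : x * (1 + max (MM v - m l) 0 / (x + b))
              = x + x * (max (MM v - m l) 0 / (x + b)) := by ring
          rw [expand]
          have hq' : max (MM v - m l) 0
              = x * (max (MM v - m l) 0 / (x + b)) + b * (max (MM v - m l) 0 / (x + b)) := by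
            calc max (MM v - m l) 0 = (max (MM v - m l) 0 / (x + b)) * (x + b) := hq
              _ = _ := by ring
          linarith only [hq', hbS, hmx]
        have h9 := mul_le_mul_of_nonneg_right hscalar (hdeg v).le
        calc MM v * (G.degree v : ℝ) + b * (G.degree v : ℝ) * (Sg / (x + b) - (u v - 1))
            = (MM v + b * (Sg / (x + b)) - b * (max (MM v - m l) 0 / (x + b)))
              * (G.degree v : ℝ) := by simp only [hudef]; ring
          _ ≤ x * u v * (G.degree v : ℝ) := h9
          _ = x * w v := by simp only [hwdef]; ring
      -- equality throughout
      have hLeq : ∑ j ∈ G.neighborFinset v, (u j - 1) * (G.degree j : ℝ)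
          = b * (G.degree v : ℝ) * (Sg / (x + b) - (u v - 1)) := by
        linarith only [h1, h2, hBle]
      have hBeq : MM v * (G.degree v : ℝ)
          + b * (G.degree v : ℝ) * (Sg / (x + b) - (u v - 1)) = x * w v := by
        linarith only [h1, h2, hBle]
      -- scalar consequence
      have hscalareq : MM v + b * (Sg / (x + b)) - b * (max (MM v - m l) 0 / (x + b))
          = x * u v := by
        have h10 : (MM v + b * (Sg / (x + b)) - b * (max (MM v - m l) 0 / (x + b)))
            * (G.degree v : ℝ) = x * u v * (G.degree v : ℝ) := by
          simp only [hwdef, hudef] at hBeq ⊢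
          linear_combination hBeq
        exact mul_right_cancel₀ (hdeg v).ne' h10
      have hstar : MM v + b * (Sg / (x + b)) = x + max (MM v - m l) 0 := by
        have hq' : max (MM v - m l) 0
            = x * (max (MM v - m l) 0 / (x + b)) + b * (max (MM v - m l) 0 / (x + b)) := by
          calc max (MM v - m l) 0 = (max (MM v - m l) 0 / (x + b)) * (x + b) := hq
            _ = _ := by ring
        have h11 : x * u v = x + x * (max (MM v - m l) 0 / (x + b)) := by
          simp only [hudef]; ring
        rw [h11] at hscalareq
        linarith only [hscalareq, hq']
      have hmxeq : max (MM v - m l) 0 = MM v - m l := by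
        linarith only [hstar, hbS, hmx]
      have hbSeq : b * (Sg / (x + b)) = x - m l := by
        linarith only [hstar, hmxeq]
      exact ⟨hLeq, hmxeq, hbSeq⟩
    -- all average 2-degrees are at least m l
    have hgeml : ∀ i : Fin n, m l ≤ m i := by
      intro i
      rw [hmMM i]
      have := (hstepA (σ i)).2.1
      have h0 : (0:ℝ) ≤ max (MM (σ i) - m l) 0 := le_max_right _ _
      linarith only [this, h0]
    -- Sg is maximal
    have hSgeq : Sg = (l:ℝ) * (m0 - m l) := by
      have h1 := (hstepA v1).2.2
      have h2 : b * Sg = b * ((l:ℝ) * (m0 - m l)) := by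
        rw [← hkey]
        calc b * Sg = b * (Sg / (x+b)) * (x+b) := by
              rw [mul_assoc, div_mul_cancel₀ _ hcpos.ne']
          _ = (x - m l) * (x + b) := by rw [h1]
      exact mul_left_cancel₀ hb0.ne' h2
    -- termwise equality: the top l values all equal m0
    have htop : ∀ i : Fin n, (i:ℕ) < (l:ℕ) → m i = m0 := by
      intro i hil
      have hsumeq : ∑ i : Fin n, max (m i - m l) 0
          = ∑ i : Fin n, (if (i:ℕ) < (l:ℕ) then m0 - m l else 0) := by
        rw [← hSgm, hSgeq]
        rw [Finset.sum_ite, Finset.sum_const, Finset.sum_const_zero, add_zero]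
        have hcard : (Finset.filter (fun i : Fin n => (i:ℕ) < (l:ℕ)) Finset.univ).card
            = (l:ℕ) := by
          have he : Finset.filter (fun i : Fin n => (i:ℕ) < (l:ℕ)) Finset.univ
              = Finset.Iio l := by
            ext i
            simp only [Finset.mem_filter, Finset.mem_univ, true_and, Finset.mem_Iio,
              Fin.lt_def]
          rw [he, Fin.card_Iio]
        rw [hcard, nsmul_eq_mul]
      have := (Finset.sum_eq_sum_iff_of_le (fun i (_ : i ∈ Finset.univ) => hterm i)).mp
        hsumeq i (mem_univ i)
      rw [if_pos hil] at this
      have h12 : max (m i - m l) 0 = m i - m l :=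
        max_eq_left (by linarith [hgeml i])
      rw [h12] at this
      linarith only [this]
    by_cases hcase : m0 = m l
    · have hallml : ∀ i : Fin n, m i = m l := by
        intro i
        by_cases hil : (i:ℕ) < (l:ℕ)
        · rw [htop i hil, hcase]
        · have hli : l ≤ i := Fin.le_def.mpr (by omega)
          exact le_antisymm (hmono hli) (hgeml i)
      exact fun i j => by rw [hallml i, hallml j]
    · exfalso
      have hm0gt : m l < m0 := lt_of_le_of_ne hm0ml (Ne.symm hcase)
      have hl0 : 0 < (l:ℕ) := by
        rcases Nat.eq_zero_or_pos (l:ℕ) with h|h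
        · exfalso
          have hle : (⟨0, by omega⟩ : Fin n) = l := by
            apply Fin.ext
            simp [h]
          rw [hm0def, hle] at hm0gt
          exact lt_irrefl _ hm0gt
        · exact h
      set W : Fin n := σ (⟨0, by omega⟩ : Fin n) with hWdef
      have hMMW : MM W = m0 := by rw [hm0def, hmMM]
      have huW : u W - 1 = (m0 - m l) / (x + b) := by
        simp only [hudef, hMMW]
        rw [max_eq_left (by linarith)]
        ring
      have huWpos : 0 < u W - 1 := by
        rw [huW]
        exact div_pos (by linarith) hcpos
      -- structural rigidity
      have hstruct : ∀ v : Fin n, v ≠ W →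
          G.Adj v W ∧ (G.degree W : ℝ) = b * (G.degree v : ℝ) := by
        intro v hvW
        have hLeq := (hstepA v).1
        have hvv : (if G.Adj v v then (u v - 1) * (G.degree v : ℝ) else 0) = 0 := by
          simp [G.irrefl]
        have hLv : ∑ j ∈ G.neighborFinset v, (u j - 1) * (G.degree j : ℝ)
            = ∑ j ∈ Finset.univ.erase v,
              (if G.Adj v j then (u j - 1) * (G.degree j : ℝ) else 0) := by
          rw [SimpleGraph.neighborFinset_eq_filter, Finset.sum_filter]
          exact (Finset.sum_erase (f := fun j =>
            if G.Adj v j then (u j - 1) * (G.degree j : ℝ) else 0) Finset.univ hvv).symm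
        have hBv : b * (G.degree v : ℝ) * (Sg / (x + b) - (u v - 1))
            = ∑ j ∈ Finset.univ.erase v, (u j - 1) * (b * (G.degree v : ℝ)) := by
          rw [← Finset.sum_mul, huerase v]; ring
        have hzero : ∀ j ∈ Finset.univ.erase v,
            ((u j - 1) * (b * (G.degree v : ℝ))
              - (if G.Adj v j then (u j - 1) * (G.degree j : ℝ) else 0)) = 0 := by
          apply (Finset.sum_eq_zero_iff_of_nonneg ?_).mp
          · rw [Finset.sum_sub_distrib, ← hBv, ← hLv, hLeq, sub_self]
          · intro j hj
            by_cases hadj : G.Adj v j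
            · rw [if_pos hadj]
              have h13 := mul_le_mul_of_nonneg_left (hdj j v)
                (by linarith [hu1 j] : (0:ℝ) ≤ u j - 1)
              linarith only [h13]
            · rw [if_neg hadj, sub_zero]
              exact mul_nonneg (by linarith [hu1 j]) (mul_pos hb0 (hdeg v)).le
        have hWzero := hzero W (Finset.mem_erase.mpr ⟨Ne.symm hvW, mem_univ W⟩)
        by_cases hadj : G.Adj v W
        · rw [if_pos hadj] at hWzero
          have hfac : (u W - 1) * (b * (G.degree v:ℝ) - (G.degree W:ℝ)) = 0 := by
            linear_combination hWzero
          rcases mul_eq_zero.mp hfac with h|h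
          · exact absurd h huWpos.ne'
          · exact ⟨hadj, by linarith only [h]⟩
        · rw [if_neg hadj, sub_zero] at hWzero
          exact absurd hWzero (mul_pos huWpos (mul_pos hb0 (hdeg v))).ne'
      -- W is adjacent to all other vertices
      have hNW : G.neighborFinset W = Finset.univ.erase W := by
        ext j
        simp only [SimpleGraph.mem_neighborFinset, Finset.mem_erase, Finset.mem_univ, and_true]
        constructor
        · intro h
          exact (G.ne_of_adj h).symm
        · intro h
          exact ((hstruct j h).1).symm
      have hdegW : G.degree W = n - 1 := by
        rw [← SimpleGraph.card_neighborFinset_eq_degree, hNW,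
          Finset.card_erase_of_mem (mem_univ W), Finset.card_univ, Fintype.card_fin]
      obtain ⟨z, hz⟩ := hdmax'
      have hdmaxR : (0:ℝ) < (dmax:ℝ) := by
        have : 1 ≤ dmax := le_trans hdmin1 hminmax
        exact_mod_cast this
      by_cases hzW : z = W
      · -- the peak vertex has maximal degree
        have hWmax : G.degree W = dmax := by rw [← hzW]; exact hz
        have hvdmin : ∀ v : Fin n, v ≠ W → G.degree v = dmin := by
          intro v hvW
          have h1 := (hstruct v hvW).2
          rw [hWmax, hbdef] at h1
          have hdmaxR' : (0:ℝ) < (dmax:ℝ) := by exact_mod_cast (le_trans hdmin1 hminmax)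
          rw [div_mul_eq_mul_div, eq_div_iff hdminR.ne'] at h1
          have h1' := mul_left_cancel₀ hdmaxR'.ne' h1
          exact_mod_cast h1'.symm
        have hn1R : (0:ℝ) < ((n-1 : ℕ):ℝ) := by
          have : 1 ≤ n - 1 := by omega
          exact_mod_cast this
        have hm0dmin : m0 = (dmin:ℝ) := by
          rw [← hMMW]
          simp only [hMMdef]
          rw [hNW]
          have hsum : ∑ j ∈ Finset.univ.erase W, (G.degree j : ℝ)
              = ((n-1 : ℕ):ℝ) * (dmin:ℝ) := by
            rw [Finset.sum_congr rfl
              (fun j hj => by rw [hvdmin j (Finset.mem_erase.mp hj).1])]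
            rw [Finset.sum_const, nsmul_eq_mul,
              Finset.card_erase_of_mem (mem_univ W), Finset.card_univ, Fintype.card_fin]
          rw [hsum, hdegW]
          exact mul_div_cancel_left₀ _ hn1R.ne'
        have hvs : σ l ≠ W := by
          rw [hWdef]
          intro h
          have h14 := σ.injective h
          have : (l:ℕ) = 0 := by
            rw [h14]
          omega
        have hWadj : G.Adj (σ l) W := (hstruct _ hvs).1
        have hWmem : W ∈ G.neighborFinset (σ l) := by
          rw [SimpleGraph.mem_neighborFinset]
          exact hWadj
        have hdegs : G.degree (σ l) = dmin := hvdmin _ hvs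
        have hsuml : ∑ j ∈ G.neighborFinset (σ l), (G.degree j : ℝ)
            = (dmax:ℝ) + ((dmin - 1:ℕ):ℝ) * (dmin:ℝ) := by
          rw [← Finset.add_sum_erase _ _ hWmem]
          congr 1
          · rw [hWmax]
          · have h15 : ∀ j ∈ (G.neighborFinset (σ l)).erase W, (G.degree j : ℝ) = (dmin:ℝ) :=
              fun j hj => by rw [hvdmin j (Finset.mem_erase.mp hj).1]
            rw [Finset.sum_congr rfl h15, Finset.sum_const, nsmul_eq_mul,
              Finset.card_erase_of_mem hWmem, SimpleGraph.card_neighborFinset_eq_degree, hdegs]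
        have hmlval : m l = ((dmax:ℝ) + ((dmin - 1:ℕ):ℝ) * (dmin:ℝ)) / (dmin:ℝ) := by
          rw [hmMM l]
          simp only [hMMdef]
          rw [hsuml, hdegs]
        have hcast : ((dmin - 1:ℕ):ℝ) = (dmin:ℝ) - 1 := by
          have : (1:ℕ) ≤ dmin := hdmin1
          push_cast [this]
          ring
        have hfin' : (dmin:ℝ) ≤ m l := by
          rw [hmlval, le_div_iff₀ hdminR, hcast]
          have hdd : (dmin:ℝ) ≤ (dmax:ℝ) := by exact_mod_cast hminmax
          nlinarith [hdminR]
        rw [hm0dmin] at hm0gt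
        linarith
      · -- some other vertex has maximal degree, so the graph is regular
        have h1 := (hstruct z hzW).2
        rw [hz] at h1
        have hWge : (dmax:ℝ) ≤ (G.degree W:ℝ) := by
          rw [h1]
          nlinarith [hb1, hdmaxR]
        have hWle : (G.degree W:ℝ) ≤ (dmax:ℝ) := by exact_mod_cast hdmax W
        have hWdmax : (G.degree W:ℝ) = (dmax:ℝ) := le_antisymm hWle hWge
        have hbone : b = 1 := by
          rw [hWdmax] at h1
          have h16 : 1 * (dmax:ℝ) = b * (dmax:ℝ) := by linarith
          exact (mul_right_cancel₀ hdmaxR.ne' h16).symm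
        have hmaxmin : (dmax:ℝ) = (dmin:ℝ) := by
          rw [hbdef] at hbone
          field_simp at hbone
          exact_mod_cast hbone
        have hdegall : ∀ v, (G.degree v:ℝ) = (dmin:ℝ) := by
          intro v
          have hle' : (G.degree v:ℝ) ≤ (dmin:ℝ) := by
            rw [← hmaxmin]
            exact_mod_cast hdmax v
          have hge' : (dmin:ℝ) ≤ (G.degree v:ℝ) := by exact_mod_cast hdmin v
          linarith
        have hMMall : ∀ v, MM v = (dmin:ℝ) := by
          intro v
          simp only [hMMdef]
          rw [Finset.sum_congr rfl (fun j _ => hdegall j), Finset.sum_const, nsmul_eq_mul,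
            SimpleGraph.card_neighborFinset_eq_degree]
          rw [mul_comm, mul_div_assoc, div_self (hdeg v).ne', mul_one]
        have h17 : m0 = m l := by
          rw [hm0def, hmMM, hMMall, ← hMMall (σ l), ← hmMM]
        linarith
  · -- all equal implies equality
    intro hall
    have hallml : ∀ i, m i = m l := fun i => hall i l
    have hm0l : m0 = m l := by rw [hm0def]; exact hall _ _
    have hxml' : x = m l := by
      have h5 : (m l + b)^2 + 4*b*(l:ℝ)*(m0 - m l) = (m l + b)^2 := by
        rw [hm0l]; ring
      rw [hxdef, h5, Real.sqrt_sq (by linarith)]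
      ring
    have hMMl : ∀ v, MM v = m l := fun v => by rw [hMMm v, hallml _]
    set dC : Fin n → ℂ := fun v => ((G.degree v : ℝ) : ℂ) with hdCdef
    have heig : ((G.adjMatrix ℝ).map Complex.ofReal).mulVec dC = ((m l : ℝ) : ℂ) • dC := by
      rw [adj_map_ofReal]
      funext v
      rw [SimpleGraph.adjMatrix_mulVec_apply]
      have hre : ∑ j ∈ G.neighborFinset v, (G.degree j : ℝ) = m l * (G.degree v : ℝ) := by
        have h6 := hMMl v
        simp only [hMMdef] at h6
        rw [div_eq_iff (hdeg v).ne'] at h6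
        exact h6
      have h7 : ∑ j ∈ G.neighborFinset v, dC j = ((m l:ℝ):ℂ) * dC v := by
        simp only [hdCdef]
        rw [← Complex.ofReal_sum, hre, Complex.ofReal_mul]
      rw [h7]
      simp
    have hdC0 : dC ≠ 0 := by
      intro h
      have h8 := congrFun h v1
      simp only [hdCdef, Pi.zero_apply, Complex.ofReal_eq_zero, Nat.cast_eq_zero] at h8
      have := hiso v1
      omega
    have hspec : ((m l : ℝ) : ℂ) ∈ spectrum ℂ ((G.adjMatrix ℝ).map Complex.ofReal) :=
      (spec_iff_eig _ _).mpr ⟨dC, hdC0, heig⟩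
    have hmemS : m l ∈ {y : ℝ | ∃ μ ∈ spectrum ℂ ((G.adjMatrix ℝ).map Complex.ofReal),
        y = ‖μ‖} :=
      ⟨_, hspec, by rw [Complex.norm_real, Real.norm_eq_abs, abs_of_nonneg hml0]⟩
    have hge : m l ≤ specRad (G.adjMatrix ℝ) := by
      rw [hspecRad]
      exact le_csSup hBdd hmemS
    rw [← hxml'] at hge
    linarith [hpart1, hge, hxml'.ge, hxml'.le]
end
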